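/- arXiv:2603.26315 — 14 statements merged into one kernel-verified Lean document; each statement's English description precedes it below -/
import Mathlib

section
/- Let p be a prime, r ≥ 1 an integer, and G a finite group whose order is not divisible by p. Suppose there are an integer k ≥ 1 and positive integers n_1, …, n_k and m_1, …, m_k together with a ring isomorphism between the group algebra F_pG and the product ∏_{i=1}^{k} M_{n_i}(GF(p^{m_i})), where GF(p^{m_i}) is the finite field with p^{m_i} elements. Then for every family h_1, …, h_k of polynomials with h_i ∈ (Z_{p^r})[X] a basic irreducible polynomial of degree m_i, there is a ring isomorphism between the group algebra Z_{p^r}G and the product ∏_{i=1}^{k} M_{n_i}((Z_{p^r})[X] / ⟨h_i⟩), where ⟨h_i⟩ denotes the ideal generated by h_i. -/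
section Lifting

variable {C D : Type*} [Ring C] [Ring D]

private lemma aux_one_add_pow (M : ℕ) (hM : 2 ≤ M) (hchar : (M : C) = 0) :
    ∀ k, ∀ x : C, x ^ k = 0 → ∃ N, (1 + x) ^ M ^ N = 1 := by
  intro k
  induction k using Nat.strong_induction_on with
  | _ k ih =>
    intro x hx
    match k, hx with
    | 0, hx =>
      have : Subsingleton C := subsingleton_of_zero_eq_one (by simpa using hx.symm)
      exact ⟨0, Subsingleton.elim _ _⟩
    | 1, hx => exact ⟨0, by rw [pow_one] at hx; simp [hx]⟩
    | (k+2), hx =>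
      set w : C := ∑ i ∈ Finset.range (M - 1), x ^ i * (M.choose (i + 2) : C) with hw
      have heach : ∀ i, x ^ (i + 1 + 1) * (M.choose (i + 1 + 1) : C)
          = x ^ 2 * (x ^ i * (M.choose (i + 2) : C)) := by
        intro i
        have h2 : i + 1 + 1 = i + 2 := rfl
        rw [h2, pow_add, pow_mul_comm, mul_assoc]
      have key : (1 + x) ^ M = 1 + x ^ 2 * w := by
        rw [add_comm (1 : C) x, Commute.add_pow (Commute.one_right x)]
        simp only [one_pow, mul_one]
        rw [show M + 1 = (M - 1) + 1 + 1 by omega]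
        rw [Finset.sum_range_succ' _ ((M - 1) + 1), Finset.sum_range_succ' _ (M - 1)]
        simp only [pow_zero, Nat.choose_zero_right, Nat.cast_one, one_mul, zero_add,
          Nat.choose_one_right, hchar, mul_zero, add_zero]
        rw [add_comm]
        congr 1
        rw [hw, Finset.mul_sum]
        exact Finset.sum_congr rfl fun i _ => heach i
      have hcw : Commute x w := by
        apply Commute.sum_right
        intro i _
        exact ((Commute.refl x).pow_right i).mul_right (Nat.cast_commute _ _).symm
      have hy : (x ^ 2 * w) ^ (k + 1) = 0 := by
        rw [(hcw.pow_left 2).mul_pow, ← pow_mul]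
        have : x ^ (2 * (k + 1)) = 0 := by
          have h2 : 2 * (k + 1) = (k + 2) + k := by omega
          rw [h2, pow_add, hx, zero_mul]
        rw [this, zero_mul]
      obtain ⟨N, hN⟩ := ih (k + 1) (by omega) _ hy
      refine ⟨1 + N, ?_⟩
      rw [pow_add, pow_one, pow_mul, key, hN]

private lemma aux_isUnit_of_map (π : C →+* D) (hsurj : Function.Surjective π)
    (hnil : ∀ x : C, π x = 0 → IsNilpotent x) {c : C} (hc : IsUnit (π c)) : IsUnit c := by
  obtain ⟨u, hu⟩ := hc
  obtain ⟨b, hb⟩ := hsurj ↑u⁻¹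
  have h1 : π (c * b - 1) = 0 := by
    rw [map_sub, map_mul, hb, map_one, ← hu, Units.mul_inv, sub_self]
  have h2 : IsUnit (c * b) := by
    have := (hnil _ h1).isUnit_add_one
    rwa [sub_add_cancel] at this
  have h1' : π (b * c - 1) = 0 := by
    rw [map_sub, map_mul, hb, map_one, ← hu, Units.inv_mul, sub_self]
  have h3 : IsUnit (b * c) := by
    have := (hnil _ h1').isUnit_add_one
    rwa [sub_add_cancel] at this
  obtain ⟨u2, hu2⟩ := h2
  obtain ⟨u3, hu3⟩ := h3
  have hx : c * (b * ↑u2⁻¹) = 1 := by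
    rw [← mul_assoc, ← hu2, Units.mul_inv]
  have hy : (↑u3⁻¹ * b) * c = 1 := by
    rw [mul_assoc, ← hu3, Units.inv_mul]
  have hxy : (↑u3⁻¹ * b : C) = b * ↑u2⁻¹ := by
    calc (↑u3⁻¹ * b : C) = (↑u3⁻¹ * b) * (c * (b * ↑u2⁻¹)) := by rw [hx, mul_one]
    _ = ((↑u3⁻¹ * b) * c) * (b * ↑u2⁻¹) := by rw [← mul_assoc, ← mul_assoc]
    _ = b * ↑u2⁻¹ := by rw [hy, one_mul]
  exact isUnit_iff_exists.mpr ⟨b * ↑u2⁻¹, hx, hxy ▸ hy⟩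

private lemma aux_lift_rep {C D : Type*} [Ring C] [Ring D] [Finite C] (π : C →+* D)
    (hsurj : Function.Surjective π) (p r : ℕ) (hp : p.Prime)
    (hchar : ((p ^ r : ℕ) : C) = 0)
    (hker : ∀ x : C, π x = 0 → ∃ y : C, x = (p : C) * y)
    {G : Type*} [Group G] [Finite G] (hG : ¬ p ∣ Nat.card G) (ρ : G →* Dˣ) :
    ∃ τ : G →* Cˣ, ∀ g, π (τ g) = ρ g := by
  rcases subsingleton_or_nontrivial C with hC | hC
  · haveI : Subsingleton D := Function.Surjective.subsingleton hsurj
    exact ⟨1, fun g => Subsingleton.elim _ _⟩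
  have hnil : ∀ x : C, π x = 0 → IsNilpotent x := by
    intro x hx
    obtain ⟨y, hy⟩ := hker x hx
    exact ⟨r, by rw [hy, (Nat.cast_commute p y).mul_pow, ← Nat.cast_pow, hchar, zero_mul]⟩
  have hM2 : 2 ≤ p ^ r := by
    rcases Nat.eq_zero_or_pos r with hr | hr
    · exfalso
      subst hr
      simp only [pow_zero, Nat.cast_one] at hchar
      exact one_ne_zero hchar
    · calc 2 ≤ p := hp.two_le
        _ ≤ p ^ r := Nat.le_self_pow (by omega) p
  have hordp : ∀ e : Cˣ, π ↑e = 1 → ∃ N, e ^ (p ^ r) ^ N = 1 := by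
    intro e he
    obtain ⟨nk, hnk⟩ := hnil ((e : C) - 1) (by rw [map_sub, he, map_one, sub_self])
    obtain ⟨N, hN⟩ := aux_one_add_pow (p ^ r) hM2 hchar nk _ hnk
    refine ⟨N, Units.ext ?_⟩
    rw [Units.val_pow_eq_pow_val, Units.val_one]
    simpa using hN
  have hulift : ∀ d : Dˣ, ∃ e : Cˣ, π ↑e = ↑d := by
    intro d
    obtain ⟨c, hc⟩ := hsurj ↑d
    have hu : IsUnit c := aux_isUnit_of_map π hsurj hnil (by rw [hc]; exact d.isUnit)
    exact ⟨hu.unit, by rw [hu.unit_spec, hc]⟩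
  let f1 : Cˣ × G →* Dˣ := (Units.map π.toMonoidHom).comp (MonoidHom.fst Cˣ G)
  let f2 : Cˣ × G →* Dˣ := ρ.comp (MonoidHom.snd Cˣ G)
  let E : Subgroup (Cˣ × G) := f1.eqLocus f2
  have hmemE : ∀ x : Cˣ × G, x ∈ E ↔ Units.map π.toMonoidHom x.1 = ρ x.2 := fun x => Iff.rfl
  let pr : E →* G := (MonoidHom.snd Cˣ G).comp E.subtype
  have hpr_surj : Function.Surjective pr := by
    intro g
    obtain ⟨e, he⟩ := hulift (ρ g)
    exact ⟨⟨(e, g), (hmemE (e, g)).mpr (Units.ext he)⟩, rfl⟩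
  have hcop : Nat.Coprime (Nat.card pr.ker) pr.ker.index := by
    by_contra hnc
    obtain ⟨q, hq, hq1, hq2⟩ := Nat.Prime.not_coprime_iff_dvd.mp hnc
    haveI := Fact.mk hq
    obtain ⟨z, hz⟩ := exists_prime_orderOf_dvd_card' (G := pr.ker) q hq1
    have hz1 : ((z : E) : Cˣ × G).2 = 1 := z.2
    have he : π ↑(((z : E) : Cˣ × G).1) = 1 := by
      have hmem := (hmemE _).mp (z : E).2
      rw [hz1, map_one] at hmem
      have := congrArg Units.val hmem
      simpa using this
    obtain ⟨N, hN⟩ := hordp _ he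
    have hpow : z ^ (p ^ r) ^ N = 1 := by
      apply Subtype.ext
      apply Subtype.ext
      show (((z : E) : Cˣ × G) ^ ((p ^ r) ^ N)) = 1
      apply Prod.ext
      · exact hN
      · show ((z : E) : Cˣ × G).2 ^ ((p ^ r) ^ N) = 1
        rw [hz1, one_pow]
    have hdvd : q ∣ (p ^ r) ^ N := hz ▸ orderOf_dvd_of_pow_eq_one hpow
    rw [← pow_mul] at hdvd
    have hqp : q = p := (Nat.prime_dvd_prime_iff_eq hq hp).mp (hq.dvd_of_dvd_pow hdvd)
    apply hG
    rw [← hqp]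
    rwa [Subgroup.index_ker, MonoidHom.range_eq_top.mpr hpr_surj, Subgroup.card_top] at hq2
  haveI : pr.ker.Normal := MonoidHom.normal_ker pr
  obtain ⟨Kc, hKc⟩ := Subgroup.exists_right_complement'_of_coprime hcop
  let j : Kc →* G := pr.comp Kc.subtype
  have hj_inj : Function.Injective j := by
    rw [injective_iff_map_eq_one]
    intro a ha
    have hk : (a : E) ∈ pr.ker := ha
    have := Subgroup.disjoint_def.mp hKc.disjoint hk a.2
    exact Subtype.ext this
  have hj_surj : Function.Surjective j := by
    intro g
    obtain ⟨x, hx⟩ := hpr_surj g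
    obtain ⟨⟨a, b⟩, hab, -⟩ := hKc.existsUnique x
    refine ⟨⟨b.1, b.2⟩, ?_⟩
    have h1 : pr (a.1 * b.1) = g := by rw [hab, hx]
    rw [map_mul] at h1
    have ha1 : pr a.1 = 1 := a.2
    rw [ha1, one_mul] at h1
    exact h1
  let eqv := MulEquiv.ofBijective j ⟨hj_inj, hj_surj⟩
  refine ⟨((MonoidHom.fst Cˣ G).comp (E.subtype.comp Kc.subtype)).comp eqv.symm.toMonoidHom, ?_⟩
  intro g
  have hb2 : (((eqv.symm g : Kc) : E) : Cˣ × G).2 = g := eqv.apply_symm_apply g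
  have hbmem := (hmemE _).mp ((eqv.symm g : Kc) : E).2
  rw [hb2] at hbmem
  have := congrArg Units.val hbmem
  simpa using this

end Lifting


private lemma aux_zmod_dvd {p r : ℕ} [NeZero p] [NeZero (p ^ r)] (hd : p ∣ p ^ r)
    (a : ZMod (p ^ r)) (ha : ZMod.castHom hd (ZMod p) a = 0) :
    ∃ t, a = (p : ZMod (p ^ r)) * t := by
  have h1 : ((a.val : ℕ) : ZMod p) = 0 := by
    rw [ZMod.natCast_val, ← ZMod.castHom_apply (h := hd), ha]
  obtain ⟨t, ht⟩ := (ZMod.natCast_eq_zero_iff a.val p).mp h1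
  refine ⟨(t : ZMod (p ^ r)), ?_⟩
  have h2 : ((a.val : ℕ) : ZMod (p ^ r)) = a := ZMod.natCast_rightInverse a
  rw [← h2, ht, Nat.cast_mul]

private lemma aux_card_adjoinRoot {A : Type*} [CommRing A] [Fintype A] {q : Polynomial A}
    (hq : q.Monic) : Nat.card (AdjoinRoot q) = Fintype.card A ^ q.natDegree := by
  letI := Module.fintypeOfFintype (AdjoinRoot.powerBasis' hq).basis
  rw [Nat.card_eq_fintype_card, Module.card_fintype (AdjoinRoot.powerBasis' hq).basis]
  simp

private lemma aux_adjoinRoot_char {p r : ℕ} (q : Polynomial (ZMod (p ^ r))) :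
    ((p ^ r : ℕ) : AdjoinRoot q) = 0 := by
  have h1 := map_natCast (algebraMap (ZMod (p ^ r)) (AdjoinRoot q)) (p ^ r)
  rw [← h1, ZMod.natCast_self, map_zero]

private lemma aux_adjoinRoot_reduce {p r : ℕ} [NeZero p] [NeZero (p ^ r)] (hd : p ∣ p ^ r)
    (q : Polynomial (ZMod (p ^ r))) :
    ∃ φ : AdjoinRoot q →+* AdjoinRoot (q.map (ZMod.castHom hd (ZMod p))),
      Function.Surjective φ ∧ (∀ x, φ x = 0 → ∃ y, x = (p : AdjoinRoot q) * y) := by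
  set c := ZMod.castHom hd (ZMod p) with hc
  have hcs : Function.Surjective c := by
    intro y
    refine ⟨((y.val : ℕ) : ZMod (p ^ r)), ?_⟩
    rw [map_natCast]
    exact ZMod.natCast_rightInverse y
  have hroot : q.eval₂ ((AdjoinRoot.of (q.map c)).comp c) (AdjoinRoot.root (q.map c)) = 0 := by
    rw [← Polynomial.eval₂_map]
    exact AdjoinRoot.eval₂_root _
  refine ⟨AdjoinRoot.lift _ _ hroot, ?_, ?_⟩
  case _ =>
    intro y
    obtain ⟨g, rfl⟩ := AdjoinRoot.mk_surjective y
    obtain ⟨f, rfl⟩ := Polynomial.map_surjective c hcs g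
    refine ⟨AdjoinRoot.mk q f, ?_⟩
    rw [AdjoinRoot.lift_mk, ← Polynomial.eval₂_map, ← AdjoinRoot.algebraMap_eq,
      ← Polynomial.aeval_def, AdjoinRoot.aeval_eq]
  case _ =>
    intro x hx
    obtain ⟨f, rfl⟩ := AdjoinRoot.mk_surjective x
    rw [AdjoinRoot.lift_mk, ← Polynomial.eval₂_map, ← AdjoinRoot.algebraMap_eq,
      ← Polynomial.aeval_def, AdjoinRoot.aeval_eq] at hx
    obtain ⟨gbar, hgbar⟩ := AdjoinRoot.mk_eq_zero.mp hx
    obtain ⟨g, rfl⟩ := Polynomial.map_surjective c hcs gbar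
    have hzero : (f - q * g).map c = 0 := by
      rw [Polynomial.map_sub, Polynomial.map_mul, hgbar, sub_self]
    have hdvd : Polynomial.C ((p : ℕ) : ZMod (p ^ r)) ∣ (f - q * g) := by
      rw [Polynomial.C_dvd_iff_dvd_coeff]
      intro i
      have hci : c ((f - q * g).coeff i) = 0 := by
        rw [← Polynomial.coeff_map, hzero, Polynomial.coeff_zero]
      obtain ⟨t, ht⟩ := aux_zmod_dvd hd _ hci
      exact ⟨t, ht⟩
    obtain ⟨w, hw⟩ := hdvd
    refine ⟨AdjoinRoot.mk q w, ?_⟩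
    have h3 : AdjoinRoot.mk q f = AdjoinRoot.mk q (f - q * g) := by
      rw [map_sub, map_mul, AdjoinRoot.mk_self, zero_mul, sub_zero]
    rw [h3, hw, map_mul,
      map_natCast (Polynomial.C : ZMod (p ^ r) →+* Polynomial (ZMod (p ^ r))) p, map_natCast]

private lemma aux_card_monoidAlgebra {A G : Type*} [Semiring A] [Fintype A] [Fintype G]
    [Monoid G] : Nat.card (MonoidAlgebra A G) = Fintype.card A ^ Fintype.card G := by
  have e : MonoidAlgebra A G ≃ (G → A) := MonoidAlgebra.coeffEquiv.trans Finsupp.equivFunOnFinite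
  rw [Nat.card_congr e, Nat.card_pi]
  simp [Nat.card_eq_fintype_card, Finset.prod_const, Finset.card_univ]

private lemma aux_card_matrix {A : Type*} (nn : ℕ) :
    Nat.card (Matrix (Fin nn) (Fin nn) A) = Nat.card A ^ (nn * nn) := by
  rw [Nat.card_congr (Matrix.of (m := Fin nn) (n := Fin nn) (α := A)).symm, Nat.card_pi]
  simp [Nat.card_pi, Finset.prod_const, Finset.card_univ, ← pow_mul]

/-- if `F_p G ≅ ∏ i, M_{n i}(GF(p^{m i}))`, then for any family of
basic irreducible polynomials `h i` of degree `m i` over `Z_{p^r}`,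
`Z_{p^r} G ≅ ∏ i, M_{n i}((Z_{p^r})[X]/⟨h i⟩)`. -/
theorem zmod_pow_groupRing_decomposition (p r : ℕ) [Fact p.Prime] (hr : 1 ≤ r)
    (G : Type*) [Group G] [Fintype G] (hG : ¬ p ∣ Fintype.card G)
    (k : ℕ) (hk : 1 ≤ k) (n m : Fin k → ℕ) (hn : ∀ i, 1 ≤ n i) (hm : ∀ i, 1 ≤ m i)
    (hdec : Nonempty (MonoidAlgebra (ZMod p) G ≃+*
      Π i : Fin k, Matrix (Fin (n i)) (Fin (n i)) (GaloisField p (m i))))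
    (h : Fin k → Polynomial (ZMod (p ^ r)))
    (hmonic : ∀ i, (h i).Monic)
    (hdeg : ∀ i, (h i).natDegree = m i)
    (hirr : ∀ i, Irreducible ((h i).map
      (ZMod.castHom (dvd_pow_self p (Nat.one_le_iff_ne_zero.mp hr)) (ZMod p)))) :
    Nonempty (MonoidAlgebra (ZMod (p ^ r)) G ≃+*
      Π i : Fin k, Matrix (Fin (n i)) (Fin (n i))
        (Polynomial (ZMod (p ^ r)) ⧸ Ideal.span {h i})) := by
  classical
  have hp : p.Prime := Fact.out
  haveI : NeZero p := ⟨hp.ne_zero⟩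
  haveI : NeZero (p ^ r) := ⟨pow_ne_zero r hp.ne_zero⟩
  set R := ZMod (p ^ r) with hR
  set K := ZMod p with hK
  set hd : p ∣ p ^ r := dvd_pow_self p (Nat.one_le_iff_ne_zero.mp hr) with hdd
  set c : R →+* K := ZMod.castHom hd K with hcc
  set S : Fin k → Type _ := fun i => AdjoinRoot (h i) with hS
  set Sb : Fin k → Type _ := fun i => AdjoinRoot ((h i).map c) with hSb
  haveI hfactirr : ∀ i, Fact (Irreducible ((h i).map c)) := fun i => ⟨hirr i⟩
  letI : ∀ i, Fintype (S i) := fun i =>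
    Module.fintypeOfFintype (AdjoinRoot.powerBasis' (hmonic i)).basis
  letI : ∀ i, Fintype (Sb i) := fun i =>
    Module.fintypeOfFintype (AdjoinRoot.powerBasis' ((hmonic i).map c)).basis
  letI : ∀ i, Fintype (GaloisField p (m i)) := fun i => Fintype.ofFinite _
  -- cardinalities of residue fields
  have hcardSb : ∀ i, Fintype.card (Sb i) = p ^ (m i) := by
    intro i
    have h1 := aux_card_adjoinRoot ((hmonic i).map c)
    rw [Nat.card_eq_fintype_card] at h1
    rw [h1, ZMod.card, (hmonic i).natDegree_map, hdeg]
  -- the isomorphisms of finite fields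
  have ε : ∀ i, GaloisField p (m i) ≃+* Sb i := by
    intro i
    refine FiniteField.ringEquivOfCardEq ?_
    rw [hcardSb i, ← Nat.card_eq_fintype_card, GaloisField.card p (m i) (by have := hm i; omega)]
  let D := Π i : Fin k, Matrix (Fin (n i)) (Fin (n i)) (Sb i)
  let C := Π i : Fin k, Matrix (Fin (n i)) (Fin (n i)) (S i)
  let Ψ : MonoidAlgebra K G ≃+* D :=
    (Classical.choice hdec).trans (RingEquiv.piCongrRight fun i => (ε i).mapMatrix)
  -- the componentwise reduction maps
  have hred := fun i => aux_adjoinRoot_reduce hd (h i)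
  choose φ hφs hφk using hred
  let π : C →+* D := Pi.ringHom fun i => ((φ i).mapMatrix).comp (Pi.evalRingHom _ i)
  have hπ_apply : ∀ (x : C) i a b, π x i a b = φ i (x i a b) := fun x i a b => rfl
  have hπs : Function.Surjective π := by
    intro d
    refine ⟨fun i => Matrix.of fun a b => Classical.choose (hφs i (d i a b)), ?_⟩
    funext i
    ext a b
    rw [hπ_apply]
    exact Classical.choose_spec (hφs i (d i a b))
  have hπk : ∀ x : C, π x = 0 → ∃ y : C, x = (p : C) * y := by
    intro x hx
    have hx' : ∀ i a b, φ i (x i a b) = 0 := by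
      intro i a b
      rw [← hπ_apply x i a b, hx]
      rfl
    choose y hy using fun i a b => hφk i _ (hx' i a b)
    refine ⟨fun i => Matrix.of fun a b => y i a b, ?_⟩
    have : (p : C) * (fun i => Matrix.of fun a b => y i a b) =
        p • (fun i => Matrix.of fun a b => y i a b : C) := (nsmul_eq_mul _ _).symm
    rw [this]
    funext i
    ext a b
    rw [Pi.smul_apply, Matrix.smul_apply, Matrix.of_apply]
    exact (hy i a b).trans (nsmul_eq_mul _ _).symm
  have hcharS : ∀ i, ((p ^ r : ℕ) : S i) = 0 := fun i => aux_adjoinRoot_char (h i)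
  have hcharC : ((p ^ r : ℕ) : C) = 0 := by
    funext i
    show ((p ^ r : ℕ) : Matrix (Fin (n i)) (Fin (n i)) (S i)) = 0
    rw [← map_natCast (Matrix.scalar (Fin (n i)) : S i →+* _) (p ^ r), hcharS i, map_zero]
  -- the representation over D
  let ρ : G →* Dˣ :=
    { toFun := fun g => ⟨Ψ (MonoidAlgebra.of K G g), Ψ (MonoidAlgebra.of K G g⁻¹),
        by rw [← map_mul, ← map_mul, mul_inv_cancel, map_one, map_one],
        by rw [← map_mul, ← map_mul, inv_mul_cancel, map_one, map_one]⟩,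
      map_one' := Units.ext (by show Ψ (MonoidAlgebra.of K G 1) = 1; rw [map_one, map_one]),
      map_mul' := fun a b => Units.ext
        (by show Ψ (MonoidAlgebra.of K G (a * b)) = _; rw [map_mul, map_mul]; rfl) }
  have hG' : ¬ p ∣ Nat.card G := by rwa [Nat.card_eq_fintype_card]
  obtain ⟨τ, hτ⟩ := aux_lift_rep π hπs p r hp (by rw [Nat.cast_pow]; exact_mod_cast hcharC) hπk hG' ρ
  let Φ : MonoidAlgebra R G →ₐ[R] C := (MonoidAlgebra.lift R C G) ((Units.coeHom C).comp τ)
  have key1 : ∀ g, π (Φ (MonoidAlgebra.of R G g)) = Ψ (MonoidAlgebra.of K G g) := by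
    intro g
    rw [MonoidAlgebra.lift_of]
    exact hτ g
  have key2 : ∀ y : MonoidAlgebra K G, ∃ a, π (Φ a) = Ψ y := by
    intro y
    induction y using MonoidAlgebra.induction with
    | zero => exact ⟨0, by rw [map_zero, map_zero, map_zero]⟩
    | single_add g b f hg hb ih =>
      obtain ⟨a, ha⟩ := ih
      refine ⟨((b.val : ℕ) : MonoidAlgebra R G) * MonoidAlgebra.of R G g + a, ?_⟩
      have hb' : (MonoidAlgebra.single g b : MonoidAlgebra K G)
          = ((b.val : ℕ) : MonoidAlgebra K G) * MonoidAlgebra.of K G g := by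
        rw [MonoidAlgebra.natCast_def, MonoidAlgebra.of_apply, MonoidAlgebra.single_mul_single,
          one_mul, mul_one]
        congr 1
        exact (ZMod.natCast_rightInverse b).symm
      rw [map_add, map_add, ha, map_add, hb', map_mul, map_mul, map_natCast, map_natCast,
        map_mul, map_natCast, key1]
  have surjΦ : Function.Surjective Φ := by
    have hstep : ∀ j : ℕ, ∀ x : C, ∃ a y, x = Φ a + ((p : C) ^ j) * y := by
      intro j
      induction j with
      | zero => intro x; exact ⟨0, x, by rw [map_zero, pow_zero, one_mul, zero_add]⟩
      | succ j ih =>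
        intro x
        obtain ⟨a, y, hxy⟩ := ih x
        obtain ⟨b, hb⟩ := key2 (Ψ.symm (π y))
        rw [RingEquiv.apply_symm_apply] at hb
        obtain ⟨w, hw⟩ := hπk (y - Φ b) (by rw [map_sub, hb, sub_self])
        refine ⟨a + ((p : MonoidAlgebra R G) ^ j) * b, w, ?_⟩
        have hy : y = Φ b + (p : C) * w := by
          rw [← hw]; abel
        rw [map_add, map_mul, map_pow, map_natCast, hxy, hy, mul_add, ← add_assoc,
          ← mul_assoc, ← pow_succ]
    intro x
    obtain ⟨a, y, hxy⟩ := hstep r x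
    have hzero : ((p : C) ^ r) = 0 := by
      rw [← Nat.cast_pow]; exact hcharC
    exact ⟨a, by rw [hxy, hzero, zero_mul, add_zero]⟩
  -- cardinalities
  haveI : Finite (MonoidAlgebra R G) :=
    Finite.of_equiv _ (MonoidAlgebra.coeffEquiv.trans (Finsupp.equivFunOnFinite : (G →₀ R) ≃ (G → R))).symm
  have hB := Nat.card_congr (Classical.choice hdec).toEquiv
  rw [aux_card_monoidAlgebra, ZMod.card, Nat.card_pi] at hB
  have hGFcard : ∀ i, Nat.card (Matrix (Fin (n i)) (Fin (n i)) (GaloisField p (m i)))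
      = (p ^ (m i)) ^ (n i * n i) := by
    intro i
    rw [aux_card_matrix, GaloisField.card p (m i) (by have := hm i; omega)]
  rw [Finset.prod_congr rfl (fun i _ => hGFcard i)] at hB
  have hE : Fintype.card G = ∑ i, m i * (n i * n i) := by
    have hpr : ∏ i, (p ^ m i) ^ (n i * n i) = p ^ (∑ i, m i * (n i * n i)) := by
      simp_rw [← pow_mul]
      rw [Finset.prod_pow_eq_pow_sum]
    rw [hpr] at hB
    exact Nat.pow_right_injective hp.two_le hB
  have hcardS : ∀ i, Nat.card (S i) = (p ^ r) ^ (m i) := by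
    intro i
    rw [aux_card_adjoinRoot (hmonic i), ZMod.card, hdeg]
  have cardC : Nat.card C = (p ^ r) ^ Fintype.card G := by
    rw [Nat.card_pi]
    have hmc : ∀ i, Nat.card (Matrix (Fin (n i)) (Fin (n i)) (S i))
        = ((p ^ r) ^ (m i)) ^ (n i * n i) := by
      intro i
      rw [aux_card_matrix, hcardS i]
    rw [Finset.prod_congr rfl (fun i _ => hmc i)]
    simp_rw [← pow_mul]
    rw [Finset.prod_pow_eq_pow_sum, hE]
    congr 1
    rw [Finset.mul_sum]
    exact Finset.sum_congr rfl fun i _ => mul_assoc r (m i) (n i * n i)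
  have cardMAR : Nat.card (MonoidAlgebra R G) = (p ^ r) ^ Fintype.card G := by
    rw [aux_card_monoidAlgebra, ZMod.card]
  have bij : Function.Bijective Φ :=
    (Nat.bijective_iff_surjective_and_card Φ).mpr ⟨surjΦ, by rw [cardMAR, cardC]⟩
  exact ⟨RingEquiv.ofBijective Φ bij⟩
end

section
/- Let p be an odd prime, r ≥ 1 an integer, and G a finite group. Let u ∈ Z_{p^r}G be such that its reduction modulo p is a unit of F_pG of (multiplicative) order l. Suppose k is a positive integer such that u^l − 1 lies in the ideal of Z_{p^r}G generated by p^k but u^l − 1 does not lie in the ideal generated by p^{k+1}. Then u is a unit of Z_{p^r}G and the order of u in the unit group of Z_{p^r}G is l · p^{r−k}. -/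
open Polynomial in
private lemma key_poly (p m : ℕ) (hp : p.Prime) (hp3 : 3 ≤ p) (hm : 1 ≤ m) :
    ∃ Z : Polynomial ℤ, (1 + (p : Polynomial ℤ) ^ m * X) ^ p
      = 1 + (p : Polynomial ℤ) ^ (m + 1) * (X + (p : Polynomial ℤ) * Z) := by
  suffices h : (p : Polynomial ℤ) ^ (m + 2) ∣
      (1 + (p : Polynomial ℤ) ^ m * X) ^ p - 1 - (p : Polynomial ℤ) ^ (m + 1) * X by
    obtain ⟨Z, hZ⟩ := h
    exact ⟨Z, by linear_combination hZ⟩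
  obtain ⟨s, hs⟩ : ∃ s, p = s + 2 := ⟨p - 2, by omega⟩
  set y : Polynomial ℤ := (p : Polynomial ℤ) ^ m * X with hy
  have expand : (1 + y) ^ p = ∑ i ∈ Finset.range (p + 1), y ^ i * (p.choose i : Polynomial ℤ) := by
    rw [add_comm, add_pow]
    simp
  have h1 : ∀ f : ℕ → Polynomial ℤ,
      ∑ i ∈ Finset.range (p + 1), f i = (∑ i ∈ Finset.range (s + 1), f (i + 2)) + f 1 + f 0 := by
    intro f
    rw [hs, Finset.sum_range_succ', Finset.sum_range_succ']
  have E : (1 + y) ^ p - 1 - (p : Polynomial ℤ) ^ (m + 1) * X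
      = ∑ i ∈ Finset.range (s + 1), y ^ (i + 2) * (p.choose (i + 2) : Polynomial ℤ) := by
    rw [expand, h1]
    simp only [pow_zero, one_mul, pow_one, Nat.choose_zero_right, Nat.choose_one_right,
      Nat.cast_one, mul_one, hy]
    ring
  rw [E]
  apply Finset.dvd_sum
  intro i hi
  have hi' : i + 2 ≤ p := by have := Finset.mem_range.mp hi; omega
  have hym : y ^ (i + 2) = (p : Polynomial ℤ) ^ (m * (i + 2)) * X ^ (i + 2) := by
    rw [hy, mul_pow, ← pow_mul]
  rw [hym]
  have hre : (p : Polynomial ℤ) ^ (m * (i + 2)) * X ^ (i + 2) * (p.choose (i + 2) : Polynomial ℤ)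
      = ((p : Polynomial ℤ) ^ (m * (i + 2)) * (p.choose (i + 2) : Polynomial ℤ)) * X ^ (i + 2) := by
    ring
  rw [hre]
  rcases eq_or_lt_of_le hi' with he | hlt
  · rw [he, Nat.choose_self, Nat.cast_one, mul_one]
    exact (pow_dvd_pow (p : Polynomial ℤ) (by nlinarith)).mul_right _
  · have hd : p ∣ p.choose (i + 2) := Nat.Prime.dvd_choose_self hp (by omega) hlt
    have h2 : (p : Polynomial ℤ) ^ (m + 2) ∣
        (p : Polynomial ℤ) ^ (m * (i + 2)) * (p.choose (i + 2) : Polynomial ℤ) := by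
      rw [pow_succ]
      exact mul_dvd_mul (pow_dvd_pow _ (by nlinarith)) (Nat.cast_dvd_cast hd)
    exact h2.mul_right _

private lemma key_ring {A : Type*} [Ring A] (p m : ℕ) (hp : p.Prime) (hp3 : 3 ≤ p) (hm : 1 ≤ m)
    (w : A) : ∃ z : A, (1 + (p : A) ^ m * w) ^ p = 1 + (p : A) ^ (m + 1) * (w + (p : A) * z) := by
  obtain ⟨Z, hZ⟩ := key_poly p m hp hp3 hm
  refine ⟨Polynomial.aeval w Z, ?_⟩
  have := congrArg (Polynomial.aeval w) hZ
  simpa using this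

private lemma zmod_div_helper (p r : ℕ) [Fact p.Prime] (hr : 1 ≤ r) (c : ZMod (p ^ r))
    (h : (p : ZMod (p ^ r)) ^ (r - 1) * c = 0) :
    (p : ZMod (p ^ r)) * ((c.val / p : ℕ) : ZMod (p ^ r)) = c := by
  haveI : NeZero (p ^ r) := ⟨pow_ne_zero r (Fact.out : p.Prime).pos.ne'⟩
  have h2 : ((p ^ (r - 1) * c.val : ℕ) : ZMod (p ^ r)) = 0 := by
    push_cast
    rw [ZMod.natCast_zmod_val]
    exact h
  rw [ZMod.natCast_eq_zero_iff] at h2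
  have h3 : p ∣ c.val := by
    have hr' : p ^ (r - 1) * p = p ^ r := by
      rw [← pow_succ]
      congr 1
      omega
    refine (Nat.mul_dvd_mul_iff_left (pow_pos (Fact.out : p.Prime).pos (r - 1))).mp ?_
    rw [hr']
    exact h2
  calc (p : ZMod (p ^ r)) * ((c.val / p : ℕ) : ZMod (p ^ r))
      = ((p * (c.val / p) : ℕ) : ZMod (p ^ r)) := by push_cast; ring
    _ = (c.val : ZMod (p ^ r)) := by rw [Nat.mul_div_cancel' h3]
    _ = c := ZMod.natCast_zmod_val c

private lemma exists_div (p r : ℕ) [Fact p.Prime] (hr : 1 ≤ r) {G : Type*} [Group G]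
    (a : MonoidAlgebra (ZMod (p ^ r)) G)
    (h : (p : MonoidAlgebra (ZMod (p ^ r)) G) ^ (r - 1) * a = 0) :
    ∃ b, a = (p : MonoidAlgebra (ZMod (p ^ r)) G) * b := by
  classical
  haveI : NeZero (p ^ r) := ⟨pow_ne_zero r (Fact.out : p.Prime).pos.ne'⟩
  have hsm : ∀ (n : ℕ) (x : MonoidAlgebra (ZMod (p ^ r)) G),
      (p : MonoidAlgebra (ZMod (p ^ r)) G) ^ n * x = ((p : ZMod (p ^ r)) ^ n) • x := by
    intro n x
    rw [← map_natCast (algebraMap (ZMod (p ^ r)) (MonoidAlgebra (ZMod (p ^ r)) G)) p, ← map_pow,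
      ← Algebra.smul_def]
  rw [hsm] at h
  set f : ZMod (p ^ r) → ZMod (p ^ r) := fun c => ((c.val / p : ℕ) : ZMod (p ^ r)) with hf
  have hf0 : f 0 = 0 := by simp [hf]
  let a' : G →₀ ZMod (p ^ r) := a.coeff
  have h' : ((p : ZMod (p ^ r)) ^ (r - 1)) • a' = 0 := congrArg MonoidAlgebra.coeff h
  let b' : G →₀ ZMod (p ^ r) := Finsupp.mapRange f hf0 a'
  have hba : (p : ZMod (p ^ r)) • b' = a' := by
    apply Finsupp.ext
    intro g
    have hg : (p : ZMod (p ^ r)) ^ (r - 1) * a' g = 0 := by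
      have := DFunLike.congr_fun h' g
      simpa using this
    have := zmod_div_helper p r hr (a' g) hg
    simpa [b', hf] using this
  let bb : MonoidAlgebra (ZMod (p ^ r)) G := MonoidAlgebra.ofCoeff b'
  refine ⟨bb, ?_⟩
  have hb : (p : MonoidAlgebra (ZMod (p ^ r)) G) * bb = (p : ZMod (p ^ r)) • bb := by
    simpa using hsm 1 bb
  rw [hb]
  exact congrArg MonoidAlgebra.ofCoeff hba.symm

/-- The reduction-modulo-`p` ring homomorphism
`ZMod (p ^ r) G → ZMod p G`, induced coefficientwise by the natural
surjection `ZMod (p ^ r) → ZMod p`. -/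
noncomputable def modpReduction (p r : ℕ) (hr : r ≠ 0) (G : Type*) [Group G] :
    MonoidAlgebra (ZMod (p ^ r)) G →+* MonoidAlgebra (ZMod p) G :=
  MonoidAlgebra.liftNCRingHom
    (MonoidAlgebra.singleOneRingHom.comp (ZMod.castHom (dvd_pow_self p hr) (ZMod p)))
    (MonoidAlgebra.of (ZMod p) G)
    (fun _ _ => MonoidAlgebra.single_one_comm _ _)

/-- Let `p` be an odd prime, `r ≥ 1`, `G` a finite group,
and `u ∈ Z_{p^r}G` whose reduction mod `p` is a unit of order `l` in `F_p G`.
If `k ≥ 1` is such that `u^l - 1` lies in the ideal generated by `p^k` but not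
in the one generated by `p^(k+1)`, then `u` is a unit of order `l * p^(r-k)`. -/
theorem orderOf_unit_ZModPowGroupRing (p r : ℕ) [Fact p.Prime] (hp : Odd p) (hr : 1 ≤ r)
    (G : Type*) [Group G] [Finite G]
    (u : MonoidAlgebra (ZMod (p ^ r)) G) (l k : ℕ) (hk : 1 ≤ k)
    (hured : IsUnit (modpReduction p r (Nat.one_le_iff_ne_zero.mp hr) G u))
    (hl : orderOf (modpReduction p r (Nat.one_le_iff_ne_zero.mp hr) G u) = l)
    (hmem : u ^ l - 1 ∈ Ideal.span {(p : MonoidAlgebra (ZMod (p ^ r)) G) ^ k})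
    (hnmem : u ^ l - 1 ∉ Ideal.span {(p : MonoidAlgebra (ZMod (p ^ r)) G) ^ (k + 1)}) :
    IsUnit u ∧ orderOf u = l * p ^ (r - k) := by
  classical
  have hp' : p.Prime := Fact.out
  set P : MonoidAlgebra (ZMod (p ^ r)) G := (p : MonoidAlgebra (ZMod (p ^ r)) G) with hP
  have hp3 : 3 ≤ p := by
    obtain ⟨t, ht⟩ := hp
    have := hp'.two_le
    omega
  have hPr : P ^ r = 0 := by
    have h1 : ((p ^ r : ℕ) : MonoidAlgebra (ZMod (p ^ r)) G)
        = algebraMap (ZMod (p ^ r)) (MonoidAlgebra (ZMod (p ^ r)) G) ((p ^ r : ℕ) : ZMod (p ^ r)) :=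
      (map_natCast _ _).symm
    rw [hP, ← Nat.cast_pow, h1, ZMod.natCast_self, map_zero]
  have hl0 : l ≠ 0 := by
    rintro rfl
    simp only [pow_zero, sub_self] at hnmem
    exact hnmem (Ideal.zero_mem _)
  have hkr : k < r := by
    by_contra hcon
    push_neg at hcon
    have hPk : P ^ k = 0 := by
      obtain ⟨d, hd⟩ := Nat.exists_eq_add_of_le hcon
      rw [hd, pow_add, hPr, zero_mul]
    obtain ⟨c, hc⟩ := Ideal.mem_span_singleton'.mp hmem
    rw [hPk, mul_zero] at hc
    apply hnmem
    rw [← hc]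
    exact Ideal.zero_mem _
  obtain ⟨a, ha⟩ := Ideal.mem_span_singleton'.mp hmem
  have ha' : u ^ l - 1 = P ^ k * a := by
    rw [← ha]
    exact (((Nat.cast_commute p a).pow_left k).eq).symm
  have key : ∀ j : ℕ, ∃ z : MonoidAlgebra (ZMod (p ^ r)) G,
      (u ^ l) ^ (p ^ j) - 1 = P ^ (k + j) * (a + P * z) := by
    intro j
    induction j with
    | zero =>
      refine ⟨0, ?_⟩
      simp [ha']
    | succ j ih =>
      obtain ⟨z, hz⟩ := ih
      set w : MonoidAlgebra (ZMod (p ^ r)) G := a + P * z with hw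
      have hV : (u ^ l) ^ (p ^ j) = 1 + P ^ (k + j) * w := by
        have := eq_add_of_sub_eq hz
        rw [this, add_comm]
      obtain ⟨y, hy⟩ := key_ring p (k + j) hp' hp3 (by omega) w
      refine ⟨z + y, ?_⟩
      have hpow : (u ^ l) ^ (p ^ (j + 1)) = ((u ^ l) ^ (p ^ j)) ^ p := by
        rw [pow_succ, pow_mul]
      rw [hpow, hV, hy]
      have hkj : k + (j + 1) = (k + j) + 1 := by omega
      rw [hkj, add_sub_cancel_left, hw]
      rw [mul_add P z y, ← add_assoc]
  obtain ⟨z1, hz1⟩ := key (r - k)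
  have hvN : (u ^ l) ^ (p ^ (r - k)) = 1 := by
    have hk' : k + (r - k) = r := by omega
    rw [hk', hPr, zero_mul] at hz1
    exact sub_eq_zero.mp hz1
  have hordN : u ^ (l * p ^ (r - k)) = 1 := by rw [pow_mul]; exact hvN
  have hlN : l * p ^ (r - k) ≠ 0 := mul_ne_zero hl0 (pow_ne_zero _ hp'.pos.ne')
  have hfin : IsOfFinOrder u :=
    isOfFinOrder_iff_pow_eq_one.mpr ⟨_, Nat.pos_of_ne_zero hlN, hordN⟩
  refine ⟨hfin.isUnit, ?_⟩
  obtain ⟨z2, hz2⟩ := key (r - k - 1)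
  have hne : (u ^ l) ^ (p ^ (r - k - 1)) ≠ 1 := by
    intro hcon
    have hk2 : k + (r - k - 1) = r - 1 := by omega
    rw [hcon, hk2, sub_self] at hz2
    have hr1 : P ^ (r - 1) * P = P ^ r := by
      rw [← pow_succ]
      congr 1
      omega
    have h0 : P ^ (r - 1) * a = 0 := by
      have := hz2.symm
      rw [mul_add, ← mul_assoc, hr1, hPr, zero_mul, add_zero] at this
      exact this
    obtain ⟨b, hb⟩ := exists_div p r hr a h0
    apply hnmem
    rw [ha', hb]
    rw [Ideal.mem_span_singleton']
    refine ⟨b, ?_⟩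
    have : P ^ k * (P * b) = P ^ (k + 1) * b := by rw [← mul_assoc, ← pow_succ]
    rw [this]
    exact ((Nat.cast_commute p b).pow_left (k + 1)).eq.symm
  have hvord : orderOf (u ^ l) = p ^ (r - k) := by
    have hdvd : orderOf (u ^ l) ∣ p ^ (r - k) := orderOf_dvd_of_pow_eq_one hvN
    obtain ⟨i, hile, hie⟩ := (Nat.dvd_prime_pow hp').mp hdvd
    rcases eq_or_lt_of_le hile with he | hlt
    · rw [hie, he]
    · exfalso
      apply hne
      apply orderOf_dvd_iff_pow_eq_one.mp
      rw [hie]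
      exact pow_dvd_pow p (by omega)
  have hldvd : l ∣ orderOf u := by
    rw [← hl]
    exact orderOf_map_dvd (modpReduction p r (Nat.one_le_iff_ne_zero.mp hr) G).toMonoidHom u
  have hord : orderOf (u ^ l) = orderOf u / Nat.gcd (orderOf u) l := orderOf_pow' u hl0
  have hg : Nat.gcd (orderOf u) l = l := by
    rw [Nat.gcd_comm]; exact Nat.gcd_eq_left hldvd
  rw [hg] at hord
  exact Nat.eq_mul_of_div_eq_right hldvd (by rw [← hord, hvord])
end

section
/- Let C_5 = ⟨g⟩ be a cyclic group of order 5. In the group algebra F_2C_5, the element 1 + g + g² is a unit of multiplicative order 15, and it generates the full unit group: every unit of F_2C_5 is a power of 1 + g + g² (so the unit group of F_2C_5 is cyclic of order 15). -/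
def R5 : Type := ZMod 5 → ZMod 2
instance : AddCommGroup R5 := inferInstanceAs (AddCommGroup (ZMod 5 → ZMod 2))
instance : DecidableEq R5 := inferInstanceAs (DecidableEq (ZMod 5 → ZMod 2))
instance : Fintype R5 := inferInstanceAs (Fintype (ZMod 5 → ZMod 2))

def cmul (a b : R5) : R5 := fun k => ∑ i : ZMod 5, a i * b (k - i)
def cone : R5 := fun k => if k = 0 then 1 else 0

instance : CommRing R5 where
  __ := (inferInstance : AddCommGroup R5)
  mul := cmul
  one := cone
  mul_assoc a b c := by
    funext k
    show ∑ i : ZMod 5, (∑ j : ZMod 5, a j * b (i - j)) * c (k - i)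
       = ∑ i : ZMod 5, a i * ∑ j : ZMod 5, b j * c (k - i - j)
    simp only [Finset.sum_mul, Finset.mul_sum]
    rw [Finset.sum_comm]
    refine Finset.sum_congr rfl fun j _ => ?_
    rw [← Equiv.sum_comp (Equiv.addRight j) (fun i => a j * b (i - j) * c (k - i))]
    have h : ∀ i : ZMod 5, k - (i + j) = k - j - i := fun i => by ring
    simp [h, mul_assoc]
  mul_comm a b := by
    funext k
    show ∑ i : ZMod 5, a i * b (k - i) = ∑ i : ZMod 5, b i * a (k - i)
    refine Fintype.sum_equiv (Equiv.subLeft k) _ _ fun i => ?_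
    simp [mul_comm]
  one_mul a := by
    funext k
    show ∑ i : ZMod 5, (if i = 0 then (1:ZMod 2) else 0) * a (k - i) = a k
    simp [Finset.sum_ite_eq]
  mul_one a := by
    funext k
    show ∑ i : ZMod 5, a i * (if k - i = 0 then (1:ZMod 2) else 0) = a k
    simp [sub_eq_zero, mul_ite, Finset.sum_ite_eq]
    exact Fintype.sum_ite_eq k a
  left_distrib a b c := by
    funext k
    show ∑ i : ZMod 5, a i * (b (k-i) + c (k-i)) = (∑ i : ZMod 5, a i * b (k-i)) + ∑ i : ZMod 5, a i * c (k-i)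
    rw [← Finset.sum_add_distrib]; simp [mul_add]
  right_distrib a b c := by
    funext k
    show ∑ i : ZMod 5, (a i + b i) * c (k-i) = (∑ i : ZMod 5, a i * c (k-i)) + ∑ i : ZMod 5, b i * c (k-i)
    rw [← Finset.sum_add_distrib]; simp [add_mul]
  zero_mul a := by
    funext k
    show ∑ i : ZMod 5, (0:ZMod 2) * a (k - i) = 0
    simp
  mul_zero a := by
    funext k
    show ∑ i : ZMod 5, a i * (0:ZMod 2) = 0
    simp

def vf : R5 := ![1,1,1,0,0]
def wf : R5 := ![0,1,1,0,1]
def df : R5 := ![0,1,0,0,0]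

lemma df_eq : ∀ k : ZMod 5, df k = if k = 1 then (1:ZMod 2) else 0 := by
  intro k; fin_cases k <;> rfl

def vu : R5ˣ := ⟨vf, wf, by decide, by decide⟩

lemma vu15 : vu ^ 15 = 1 := by decide
lemma vu_key : 1 + df + df ^ 2 = vf := by decide
set_option maxHeartbeats 2000000 in
lemma vu_gen : ∀ u : R5ˣ, ∃ n : Fin 15, u = vu ^ (n : ℕ) := by decide

lemma orderOf_vu : orderOf vu = 15 := by
  have hd : orderOf vu ∣ 15 := orderOf_dvd_of_pow_eq_one vu15
  have hmem : orderOf vu ∈ Nat.divisors 15 := Nat.mem_divisors.2 ⟨hd, by norm_num⟩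
  rw [show Nat.divisors 15 = {1,3,5,15} from by decide] at hmem
  simp only [Finset.mem_insert, Finset.mem_singleton] at hmem
  rcases hmem with h|h|h|h
  · exact absurd (orderOf_eq_one_iff.mp h) (by decide)
  · have hp := pow_orderOf_eq_one vu; rw [h] at hp; exact absurd hp (by decide)
  · have hp := pow_orderOf_eq_one vu; rw [h] at hp; exact absurd hp (by decide)
  · exact h

-- the ring equivalence
noncomputable def ψ : MonoidAlgebra (ZMod 2) (Multiplicative (ZMod 5)) ≃+* R5 where
  toFun f := fun k => f.coeff (Multiplicative.ofAdd k)
  invFun a := MonoidAlgebra.ofCoeff (Finsupp.equivFunOnFinite.symm (fun x => a x.toAdd))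
  left_inv f := by ext x; simp
  right_inv a := by funext k; simp
  map_add' f g := rfl
  map_mul' f g := by
    funext k
    show (f * g).coeff (Multiplicative.ofAdd k)
        = ∑ i : ZMod 5, f.coeff (Multiplicative.ofAdd i) * g.coeff (Multiplicative.ofAdd (k - i))
    rw [MonoidAlgebra.coeff_mul_apply_left, Finsupp.sum_fintype _ _ (by simp)]
    refine Fintype.sum_equiv (Multiplicative.ofAdd : ZMod 5 ≃ Multiplicative (ZMod 5)) _ _ fun i => ?_
    congr 1
    show g.coeff (Multiplicative.ofAdd (-i + k)) = g.coeff (Multiplicative.ofAdd (k - i))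
    rw [neg_add_eq_sub]

def toGHom (G : Type*) [Group G] (g : G) (hg : orderOf g = 5) : Multiplicative (ZMod 5) →* G :=
  MonoidHom.mk' (fun x => g ^ (x.toAdd).val) (by
    intro a b
    rw [← pow_add, pow_eq_pow_iff_modEq, hg]
    show (Multiplicative.toAdd a + Multiplicative.toAdd b).val
        ≡ (Multiplicative.toAdd a).val + (Multiplicative.toAdd b).val [MOD 5]
    rw [ZMod.val_add]
    exact Nat.mod_modEq _ 5)

lemma toGHom_bij (G : Type*) [Group G] [Fintype G] (g : G) (hg : orderOf g = 5)
    (hcard : Fintype.card G = 5) : Function.Bijective (toGHom G g hg) := by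
  rw [Fintype.bijective_iff_injective_and_card]
  constructor
  · intro a b hab
    have h : (Multiplicative.toAdd a).val ≡ (Multiplicative.toAdd b).val [MOD 5] := by
      have h0 : g ^ (Multiplicative.toAdd a).val = g ^ (Multiplicative.toAdd b).val := hab
      have h1 := pow_eq_pow_iff_modEq.mp h0
      rwa [hg] at h1
    have := h.eq_of_lt_of_lt (ZMod.val_lt _) (ZMod.val_lt _)
    exact ZMod.val_injective 5 this
  · simp [hcard]

noncomputable def eG (G : Type*) [Group G] [Fintype G] (g : G) (hg : orderOf g = 5)
    (hcard : Fintype.card G = 5) : Multiplicative (ZMod 5) ≃* G :=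
  MulEquiv.ofBijective _ (toGHom_bij G g hg hcard)

noncomputable def Φ (G : Type*) [Group G] [Fintype G] (g : G) (hg : orderOf g = 5)
    (hcard : Fintype.card G = 5) : MonoidAlgebra (ZMod 2) G ≃+* R5 :=
  ((MonoidAlgebra.domCongr (ZMod 2) (ZMod 2) (eG G g hg hcard).symm).toRingEquiv).trans ψ

lemma Φ_of (G : Type*) [Group G] [Fintype G] (g : G) (hg : orderOf g = 5)
    (hcard : Fintype.card G = 5) : Φ G g hg hcard (MonoidAlgebra.of (ZMod 2) G g) = df := by
  classical
  funext k
  show (MonoidAlgebra.domCongr (ZMod 2) (ZMod 2) (eG G g hg hcard).symm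
      (MonoidAlgebra.of (ZMod 2) G g)).coeff (Multiplicative.ofAdd k) = df k
  rw [MonoidAlgebra.coeff_domCongr]
  simp only [MonoidAlgebra.of_apply, MulEquiv.symm_symm, MonoidAlgebra.coeff_single]
  rw [Finsupp.single_apply]
  have he : eG G g hg hcard (Multiplicative.ofAdd k) = g ^ k.val := rfl
  have : (g = eG G g hg hcard (Multiplicative.ofAdd k)) ↔ (k = 1) := by
    rw [he]
    constructor
    · intro h
      have h2 : g ^ (1:ℕ) = g ^ k.val := by simpa using h
      rw [pow_eq_pow_iff_modEq, hg] at h2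
      have := h2.eq_of_lt_of_lt (by norm_num) (ZMod.val_lt _)
      have h3 : k.val = (1 : ZMod 5).val := by rw [← this]; decide
      exact ZMod.val_injective 5 h3
    · rintro rfl; exact (pow_one g).symm
  rw [df_eq]
  exact if_congr this rfl rfl

/-- in `F_2 C_5` (with `C_5 = ⟨g⟩` cyclic of order 5), the element
`1 + g + g²` is a unit of order `15` which generates the whole unit group. -/
theorem unitGroup_F2C5 (G : Type*) [Group G] [Fintype G]
    (g : G) (hg : orderOf g = 5) (hcard : Fintype.card G = 5) :
    ∃ v : (MonoidAlgebra (ZMod 2) G)ˣ,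
      (v : MonoidAlgebra (ZMod 2) G)
          = 1 + MonoidAlgebra.of (ZMod 2) G g + MonoidAlgebra.of (ZMod 2) G g ^ 2 ∧
      orderOf v = 15 ∧
      ∀ w : (MonoidAlgebra (ZMod 2) G)ˣ, ∃ n : ℕ, w = v ^ n := by
  classical
  set Φ' := Φ G g hg hcard with hΦ'
  let Ψ : (MonoidAlgebra (ZMod 2) G)ˣ ≃* R5ˣ := Units.mapEquiv Φ'.toMulEquiv
  refine ⟨Ψ.symm vu, ?_, ?_, ?_⟩
  · have hval : Φ' ((Ψ.symm vu : (MonoidAlgebra (ZMod 2) G)ˣ) : MonoidAlgebra (ZMod 2) G) = vf := by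
      have : Ψ (Ψ.symm vu) = vu := Ψ.apply_symm_apply vu
      have h2 : ((Ψ (Ψ.symm vu) : R5ˣ) : R5) = vf := by rw [this]; rfl
      exact h2
    have htarget : Φ' (1 + MonoidAlgebra.of (ZMod 2) G g + MonoidAlgebra.of (ZMod 2) G g ^ 2) = vf := by
      rw [map_add, map_add, map_one, map_pow, Φ_of]
      exact vu_key
    exact Φ'.injective (hval.trans htarget.symm)
  · rw [← orderOf_vu]
    exact orderOf_injective Ψ.symm.toMonoidHom Ψ.symm.injective vu
  · intro w
    obtain ⟨n, hn⟩ := vu_gen (Ψ w)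
    exact ⟨n, by rw [← Ψ.symm_apply_apply w, hn, map_pow]⟩
end

section
/- Let r ≥ 1 be an integer and let C_5 = ⟨g⟩ be a cyclic group of order 5. The element 1 + g + g² is a unit of the group algebra Z_{2^r}C_5, and its order in the unit group of Z_{2^r}C_5 is 15 · 2^{r−1}. -/
/-- The reduced polynomial `A` with `(1+t+t²)^15 = 1 + 2·A(t)` when `t^5 = 1`. -/
noncomputable def Apoly {S : Type*} [CommRing S] (t : S) : S :=
  1435163 + 1434975*t + 1434670*t^2 + 1434670*t^3 + 1434975*t^4

lemma id15' {S : Type*} [CommRing S] (t : S) (ht : t^5 = 1) :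
    (1+t+t^2)^15 = 1 + 2 * Apoly t := by
  unfold Apoly
  linear_combination (2870326 + 2869935*t + 2869220*t^2 + 2868675*t^3 + 2867115*t^4 + 2860498*t^5 + 2841270*t^6 + 2797265*t^7 + 2710725*t^8 + 2560380*t^9 + 2328967*t^10 + 2014080*t^11 + 1635650*t^12 + 1233690*t^13 + 855870*t^14 + 541360*t^15 + 309570*t^16 + 158615*t^17 + 72075*t^18 + 28680*t^19 + 9829*t^20 + 2835*t^21 + 665*t^22 + 120*t^23 + 15*t^24 + t^25) * ht

lemma id3' {S : Type*} [CommRing S] (t : S) (ht : t^5 = 1) :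
    (1+t+t^2)^3 = t^3 + 2*(2+2*t+3*t^2+3*t^3+3*t^4) := by
  linear_combination (3+t) * ht

lemma id5' {S : Type*} [CommRing S] (t : S) (ht : t^5 = 1) :
    (1+t+t^2)^5 = 1+t^2+t^3 + 2*(26+25*t+22*t^2+22*t^3+25*t^4) := by
  linear_combination (52+45*t+30*t^2+15*t^3+5*t^4+t^5) * ht

lemma idA' {S : Type*} [CommRing S] (t : S) :
    Apoly t = 1 + t + t^4 + 2*(717581 + 717487*t + 717335*t^2 + 717335*t^3 + 717487*t^4) := by
  unfold Apoly; ring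

lemma idAA' {S : Type*} [CommRing S] (t : S) (ht : t^5 = 1) :
    Apoly t + (Apoly t)^2 = t + t^2 + t^3 + t^4
      + 2*(5147278395391 + 5147278331112*t + 5147278227107*t^2 + 5147278227107*t^3 + 5147278331112*t^4) := by
  unfold Apoly
  linear_combination (8234862519050 + 6175709175400*t + 4117431166500*t^2 + 2059153250625*t^3) * ht

lemma two_pow_lemma {S : Type*} [CommRing S] (a : S) :
    ∀ k : ℕ, ∃ b : S, (1+2*a)^(2^k) = 1 + 2^(k+1)*b ∧
      ((k = 0 ∧ b = a) ∨ (1 ≤ k ∧ ∃ c, b = a + a^2 + 2*c)) := by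
  intro k
  induction k with
  | zero => exact ⟨a, by ring, Or.inl ⟨rfl, rfl⟩⟩
  | succ k ih =>
    obtain ⟨b, hb, hcase⟩ := ih
    refine ⟨b + 2^k * b^2, ?_, ?_⟩
    · rw [pow_succ, pow_mul, hb]; ring
    · rcases hcase with ⟨hk0, rfl⟩ | ⟨hk1, c, rfl⟩
      · subst hk0
        exact Or.inr ⟨le_refl 1, 0, by ring⟩
      · refine Or.inr ⟨by omega, c + 2^(k-1) * (a + a^2 + 2*c)^2, ?_⟩
        have : (2:S)^k = 2 * 2^(k-1) := by
          rw [← pow_succ']; congr 1; omega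
        rw [this]; ring

lemma single_sum2_ne_zero {k : Type*} [Semiring k] {G : Type*} [Group G]
    (x y p : G) (c : k) (hc : c ≠ 0) (hx : x = p) (hy : y ≠ p) :
    (Finsupp.single x c + Finsupp.single y c : G →₀ k) ≠ 0 := by
  intro h
  have h2 := Finsupp.ext_iff.mp h p
  rw [Finsupp.add_apply, hx, Finsupp.single_eq_same,
    Finsupp.single_eq_of_ne' hy, Finsupp.zero_apply, add_zero] at h2
  exact hc h2

lemma single_sum3_ne_zero {k : Type*} [Semiring k] {G : Type*} [Group G]
    (x y z p : G) (c : k) (hc : c ≠ 0) (hx : x = p) (hy : y ≠ p) (hz : z ≠ p) :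
    (Finsupp.single x c + Finsupp.single y c + Finsupp.single z c : G →₀ k) ≠ 0 := by
  intro h
  have h2 := Finsupp.ext_iff.mp h p
  rw [Finsupp.add_apply, Finsupp.add_apply, hx, Finsupp.single_eq_same,
    Finsupp.single_eq_of_ne' hy, Finsupp.single_eq_of_ne' hz, Finsupp.zero_apply,
    add_zero, add_zero] at h2
  exact hc h2

lemma single_sum4_ne_zero {k : Type*} [Semiring k] {G : Type*} [Group G]
    (x y z w p : G) (c : k) (hc : c ≠ 0) (hx : x = p) (hy : y ≠ p) (hz : z ≠ p) (hw : w ≠ p) :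
    (Finsupp.single x c + Finsupp.single y c + Finsupp.single z c + Finsupp.single w c : G →₀ k) ≠ 0 := by
  intro h
  have h2 := Finsupp.ext_iff.mp h p
  rw [Finsupp.add_apply, Finsupp.add_apply, Finsupp.add_apply, hx, Finsupp.single_eq_same,
    Finsupp.single_eq_of_ne' hy, Finsupp.single_eq_of_ne' hz, Finsupp.single_eq_of_ne' hw,
    Finsupp.zero_apply, add_zero, add_zero, add_zero] at h2
  exact hc h2

/-- in `Z_{2^r} C_5`, `r ≥ 1`, the element `1 + g + g²` is a unit
of order `15 · 2^(r-1)` in the unit group. -/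
theorem orderOf_one_add_g_add_gsq (r : ℕ) (hr : 1 ≤ r) (G : Type*) [Group G] [Fintype G]
    (g : G) (hg : orderOf g = 5) (hcard : Fintype.card G = 5) :
    ∃ v : (MonoidAlgebra (ZMod (2 ^ r)) G)ˣ,
      (v : MonoidAlgebra (ZMod (2 ^ r)) G)
          = 1 + MonoidAlgebra.of (ZMod (2 ^ r)) G g + MonoidAlgebra.of (ZMod (2 ^ r)) G g ^ 2 ∧
      orderOf v = 15 * 2 ^ (r - 1) := by
  haveI : Fact (Nat.Prime 5) := ⟨by norm_num⟩
  haveI : IsCyclic G := isCyclic_of_prime_card (p := 5)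
    (by rw [Nat.card_eq_fintype_card]; exact hcard)
  letI : CommGroup G := IsCyclic.commGroup
  set R := ZMod (2^r) with hR
  letI : CommRing (MonoidAlgebra R G) := MonoidAlgebra.commRing
  letI : CommRing (MonoidAlgebra (ZMod 2) G) := MonoidAlgebra.commRing
  set t : MonoidAlgebra R G := MonoidAlgebra.of R G g with htdef
  set u : MonoidAlgebra R G := 1 + t + t^2 with hudef
  -- basic facts about g
  have hdist : ∀ i j : ℕ, i < 5 → j < 5 → i ≠ j → g^i ≠ g^j := by
    intro i j hi hj hij h
    rw [pow_eq_pow_iff_modEq, hg] at h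
    unfold Nat.ModEq at h
    omega
  have hgne : ∀ i : ℕ, 1 ≤ i → i < 5 → g^i ≠ 1 := by
    intro i h1 h5
    simpa using hdist i 0 h5 (by omega) (by omega)
  have ht5 : t^5 = 1 := by
    rw [htdef, ← map_pow, ← hg, pow_orderOf_eq_one, map_one]
  have h2A : (2 : MonoidAlgebra R G) = algebraMap R (MonoidAlgebra R G) 2 :=
    (map_ofNat _ 2).symm
  have h2r : (2 : MonoidAlgebra R G)^r = 0 := by
    rw [h2A, ← map_pow]
    have : (2:R)^r = 0 := by
      have h := ZMod.natCast_self (2^r)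
      push_cast at h
      exact_mod_cast h
    rw [this, map_zero]
  have h15 : u^15 = 1 + 2 * Apoly t := id15' t ht5
  -- u^(15·2^(r-1)) = 1
  have hupow : u^(15 * 2^(r-1)) = 1 := by
    obtain ⟨b, hb, -⟩ := two_pow_lemma (Apoly t) (r-1)
    rw [pow_mul, h15, hb, show r-1+1 = r by omega, h2r, zero_mul, add_zero]
  have hNpos : 15 * 2^(r-1) ≠ 0 := by positivity
  have hunit : IsUnit u := IsUnit.of_pow_eq_one hupow hNpos
  -- single-form lemmas
  have halg : ∀ c : R, algebraMap R (MonoidAlgebra R G) c = MonoidAlgebra.single 1 c := by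
    intro c
    rw [MonoidAlgebra.coe_algebraMap]
    simp
  have ht1 : t = MonoidAlgebra.single g 1 := by rw [htdef, MonoidAlgebra.of_apply]
  have htk : ∀ k : ℕ, t^k = MonoidAlgebra.single (g^k) 1 := by
    intro k; rw [ht1, MonoidAlgebra.single_pow, one_pow]
  have hcne : ((2:R)^(r-1)) ≠ 0 := by
    intro h
    have h2 : ((2^(r-1) : ℕ) : R) = 0 := by push_cast; exact h
    have h3 := (ZMod.natCast_eq_zero_iff (2^(r-1)) (2^r)).mp h2
    have := Nat.le_of_dvd (by positivity) h3
    have := Nat.pow_le_pow_iff_right (a := 2) (by omega) |>.mp this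
    omega
  -- orderOf (u^15) = 2^(r-1)
  have hord15 : orderOf (u^15) = 2^(r-1) := by
    have hpow : (u^15)^(2^(r-1)) = 1 := by
      rw [← pow_mul]; exact hupow
    have hmdvd := orderOf_dvd_of_pow_eq_one hpow
    rcases (Nat.dvd_prime_pow Nat.prime_two).mp hmdvd with ⟨j, hj, hm⟩
    by_contra hne
    have hjle : j ≤ r - 2 := by
      rcases Nat.lt_or_ge j (r-1) with h | h
      · omega
      · exfalso; apply hne; rw [hm]; congr 1; omega
    have hr2 : 2 ≤ r := by
      by_contra hcon
      have hr1 : r = 1 := by omega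
      apply hne
      rw [hm]
      have : j = 0 := by omega
      rw [this, hr1]
    have hone : (u^15)^(2^(r-2)) = 1 := by
      apply orderOf_dvd_iff_pow_eq_one.mp
      rw [hm]
      exact pow_dvd_pow 2 hjle
    obtain ⟨b2, hb2, hcase2⟩ := two_pow_lemma (Apoly t) (r-2)
    rw [h15, hb2, show r-2+1 = r-1 by omega] at hone
    have hz : (2 : MonoidAlgebra R G)^(r-1) * b2 = 0 := by
      have := hone
      rwa [add_eq_left] at this
    have h2pow : (2 : MonoidAlgebra R G)^(r-1) * 2 = (2 : MonoidAlgebra R G)^r := by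
      rw [← pow_succ]; congr 1; omega
    rcases hcase2 with ⟨-, rfl⟩ | ⟨-, c, rfl⟩
    · -- b2 = Apoly t, contradiction: 2^(r-1)·(1+t+t⁴) ≠ 0
      have hz' : (2 : MonoidAlgebra R G)^(r-1) * (1 + t + t^4) = 0 := by
        have e : (2 : MonoidAlgebra R G)^(r-1) * Apoly t
            = (2 : MonoidAlgebra R G)^(r-1) * (1 + t + t^4)
              + ((2 : MonoidAlgebra R G)^(r-1) * 2)
                * (717581 + 717487*t + 717335*t^2 + 717335*t^3 + 717487*t^4) := by
          rw [idA' t]; ring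
        rw [h2pow, h2r, zero_mul, add_zero] at e
        rw [← e]; exact hz
      have hform : (2 : MonoidAlgebra R G)^(r-1) * (1 + t + t^4)
          = MonoidAlgebra.ofCoeff (Finsupp.single (1:G) ((2:R)^(r-1)) + Finsupp.single g ((2:R)^(r-1))
            + Finsupp.single (g^4) ((2:R)^(r-1))) := by
        rw [h2A, ← map_pow, halg, htk 4, ht1, MonoidAlgebra.one_def, mul_add, mul_add,
          MonoidAlgebra.single_mul_single, MonoidAlgebra.single_mul_single,
          MonoidAlgebra.single_mul_single]
        simp only [one_mul, mul_one]
        try rfl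
      rw [hform] at hz'
      have hg1 : g ≠ 1 := by simpa using hgne 1 (by omega) (by omega)
      exact single_sum3_ne_zero 1 g (g^4) 1 _ hcne rfl hg1
        (hgne 4 (by omega) (by omega)) (congrArg MonoidAlgebra.coeff hz')
    · -- b2 = Apoly t + (Apoly t)² + 2c
      have hz' : (2 : MonoidAlgebra R G)^(r-1) * (t + t^2 + t^3 + t^4) = 0 := by
        have e : (2 : MonoidAlgebra R G)^(r-1) * (Apoly t + (Apoly t)^2 + 2*c)
            = (2 : MonoidAlgebra R G)^(r-1) * (t + t^2 + t^3 + t^4)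
              + ((2 : MonoidAlgebra R G)^(r-1) * 2)
                * (5147278395391 + 5147278331112*t + 5147278227107*t^2 + 5147278227107*t^3
                  + 5147278331112*t^4 + c) := by
          rw [show Apoly t + (Apoly t)^2 = t + t^2 + t^3 + t^4
            + 2*(5147278395391 + 5147278331112*t + 5147278227107*t^2 + 5147278227107*t^3
              + 5147278331112*t^4) from idAA' t ht5]
          ring
        rw [h2pow, h2r, zero_mul, add_zero] at e
        rw [← e]; exact hz
      have hform : (2 : MonoidAlgebra R G)^(r-1) * (t + t^2 + t^3 + t^4)
          = MonoidAlgebra.ofCoeff (Finsupp.single g ((2:R)^(r-1)) + Finsupp.single (g^2) ((2:R)^(r-1))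
            + Finsupp.single (g^3) ((2:R)^(r-1)) + Finsupp.single (g^4) ((2:R)^(r-1))) := by
        rw [h2A, ← map_pow, halg, htk 4, htk 3, htk 2, ht1, mul_add, mul_add, mul_add,
          MonoidAlgebra.single_mul_single, MonoidAlgebra.single_mul_single,
          MonoidAlgebra.single_mul_single, MonoidAlgebra.single_mul_single]
        simp only [one_mul, mul_one]
        try rfl
      rw [hform] at hz'
      have hne21 : g^2 ≠ g^1 := hdist 2 1 (by omega) (by omega) (by omega)
      have hne31 : g^3 ≠ g^1 := hdist 3 1 (by omega) (by omega) (by omega)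
      have hne41 : g^4 ≠ g^1 := hdist 4 1 (by omega) (by omega) (by omega)
      rw [show g^1 = g from pow_one g] at hne21 hne31 hne41
      exact single_sum4_ne_zero g (g^2) (g^3) (g^4) g _ hcne rfl hne21 hne31 hne41 (congrArg MonoidAlgebra.coeff hz')
  -- the mod-2 reduction and 15 ∣ orderOf u
  have hdvd2 : (2:ℕ) ∣ 2^r := dvd_pow_self 2 (by omega)
  set φ : MonoidAlgebra R G →+* MonoidAlgebra (ZMod 2) G := MonoidAlgebra.liftNCRingHom
    ((MonoidAlgebra.singleOneRingHom).comp (ZMod.castHom hdvd2 (ZMod 2)))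
    (MonoidAlgebra.of (ZMod 2) G) (fun x y => Commute.all _ _) with hφ
  set s : MonoidAlgebra (ZMod 2) G := MonoidAlgebra.of (ZMod 2) G g with hsdef
  have hφt : φ t = s := by
    rw [hφ, hsdef, htdef]
    simp [MonoidAlgebra.liftNCRingHom, MonoidAlgebra.of_apply, MonoidAlgebra.liftNC_single,
      ← MonoidAlgebra.one_def, one_mul]
    try rfl
  have hs1 : s = MonoidAlgebra.single g 1 := by rw [hsdef, MonoidAlgebra.of_apply]
  have hsk : ∀ k : ℕ, s^k = MonoidAlgebra.single (g^k) 1 := by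
    intro k; rw [hs1, MonoidAlgebra.single_pow, one_pow]
  have hs5 : s^5 = 1 := by
    rw [hsdef, ← map_pow, ← hg, pow_orderOf_eq_one, map_one]
  have h2B : (2 : MonoidAlgebra (ZMod 2) G) = 0 := by
    rw [← map_ofNat (algebraMap (ZMod 2) (MonoidAlgebra (ZMod 2) G)) 2,
      show (2 : ZMod 2) = 0 from by decide, map_zero]
  have hub15 : (1+s+s^2 : MonoidAlgebra (ZMod 2) G)^15 = 1 := by
    rw [id15' s hs5, h2B, zero_mul, add_zero]
  have hub3 : (1+s+s^2 : MonoidAlgebra (ZMod 2) G)^3 ≠ 1 := by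
    rw [id3' s hs5, h2B, zero_mul, add_zero]
    intro h
    rw [hsk 3, MonoidAlgebra.one_def] at h
    have h' : (Finsupp.single (g^3) (1 : ZMod 2) : G →₀ ZMod 2) = Finsupp.single 1 1 := congrArg MonoidAlgebra.coeff h
    rcases (Finsupp.single_eq_single_iff _ _ _ _).mp h' with ⟨he, -⟩ | ⟨h0, -⟩
    · exact hgne 3 (by omega) (by omega) he
    · simp at h0
  have hub5 : (1+s+s^2 : MonoidAlgebra (ZMod 2) G)^5 ≠ 1 := by
    rw [id5' s hs5, h2B, zero_mul, add_zero]
    intro h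
    have h0 : (s^2 + s^3 : MonoidAlgebra (ZMod 2) G) = 0 := by
      rwa [add_assoc, add_eq_left] at h
    rw [hsk 2, hsk 3] at h0
    have hne32 : g^3 ≠ g^2 := hdist 3 2 (by omega) (by omega) (by omega)
    exact single_sum2_ne_zero (g^2) (g^3) (g^2) (1 : ZMod 2) (by decide) rfl hne32 (congrArg MonoidAlgebra.coeff h0)
  have hordub : orderOf (1+s+s^2 : MonoidAlgebra (ZMod 2) G) = 15 := by
    have hdv : orderOf (1+s+s^2 : MonoidAlgebra (ZMod 2) G) ∣ 15 :=
      orderOf_dvd_of_pow_eq_one hub15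
    have h3 : ¬ (orderOf (1+s+s^2 : MonoidAlgebra (ZMod 2) G) ∣ 3) := fun hd =>
      hub3 (orderOf_dvd_iff_pow_eq_one.mp hd)
    have h5 : ¬ (orderOf (1+s+s^2 : MonoidAlgebra (ZMod 2) G) ∣ 5) := fun hd =>
      hub5 (orderOf_dvd_iff_pow_eq_one.mp hd)
    have hle : orderOf (1+s+s^2 : MonoidAlgebra (ZMod 2) G) ≤ 15 :=
      Nat.le_of_dvd (by norm_num) hdv
    set m := orderOf (1+s+s^2 : MonoidAlgebra (ZMod 2) G) with hm
    interval_cases m <;> revert hdv h3 h5 <;> decide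
  have h15dvd : 15 ∣ orderOf u := by
    have hmap := orderOf_map_dvd φ.toMonoidHom u
    have hφu : φ.toMonoidHom u = 1 + s + s^2 := by
      show φ u = 1 + s + s^2
      rw [hudef, map_add, map_add, map_one, map_pow, hφt]
    rw [hφu, hordub] at hmap
    exact hmap
  -- combine
  have hfinal : orderOf u = 15 * 2^(r-1) := by
    have h := orderOf_pow' u (n := 15) (by norm_num)
    rw [hord15] at h
    have hgcd : Nat.gcd (orderOf u) 15 = 15 := Nat.gcd_eq_right h15dvd
    rw [hgcd] at h
    exact Nat.eq_mul_of_div_eq_right h15dvd h.symm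
  refine ⟨hunit.unit, ?_, ?_⟩
  · rw [IsUnit.unit_spec]
  · rw [← orderOf_units, IsUnit.unit_spec]
    exact hfinal
end

section
/- Let r ≥ 1 be an integer and let C_5 = ⟨g⟩ be a cyclic group of order 5. The element 1 + 2g is a unit of the group algebra Z_{2^r}C_5, and its order in the unit group of Z_{2^r}C_5 is 2^{r−1}. -/
private lemma key_pow {A : Type*} [CommRing A] (t : A) :
    ∀ m : ℕ, ∃ b : A, (1 + 2*t) ^ 2 ^ (m+1)
      = 1 + 2^(m+2) * (t + t^2) + 2^(m+3) * b := by
  intro m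
  induction m with
  | zero => exact ⟨0, by ring⟩
  | succ m ih =>
    obtain ⟨b, hb⟩ := ih
    refine ⟨b + 2^m * ((t + t^2) + 2*b)^2, ?_⟩
    have h : (1 + 2*t) ^ 2 ^ (m+2) = ((1 + 2*t) ^ 2 ^ (m+1))^2 := by
      rw [← pow_mul, pow_succ]
    rw [h, hb]
    ring

private lemma aux_ne {r : ℕ} {G : Type*} [Group G] (g : G)
    (y : MonoidAlgebra (ZMod (2^r)) G)
    (hy : y.coeff g = 1) (k : ℕ) (hk : k < r) :
    (2 : MonoidAlgebra (ZMod (2^r)) G)^k * y ≠ 0 := by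
  intro h
  have h1 : ((2^k : ℕ) : MonoidAlgebra (ZMod (2^r)) G) * y = 0 := by push_cast; exact h
  rw [MonoidAlgebra.natCast_def] at h1
  have h2 := congrArg (fun f => f.coeff g) h1
  simp only [MonoidAlgebra.single_one_mul_apply, hy, mul_one, MonoidAlgebra.coeff_zero, Finsupp.coe_zero,
    Pi.zero_apply] at h2
  rw [ZMod.natCast_eq_zero_iff] at h2
  have h3 := Nat.le_of_dvd (by positivity) h2
  have h4 : (2:ℕ)^k < 2^r := Nat.pow_lt_pow_right (by norm_num) hk
  omega

/-- in `Z_{2^r} C_5`, `r ≥ 1`, the element `1 + 2g` is a unit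
of order `2^(r-1)` in the unit group. -/
theorem orderOf_one_add_two_g (r : ℕ) (hr : 1 ≤ r) (G : Type*) [Group G] [Fintype G]
    (g : G) (hg : orderOf g = 5) (hcard : Fintype.card G = 5) :
    ∃ v : (MonoidAlgebra (ZMod (2 ^ r)) G)ˣ,
      (v : MonoidAlgebra (ZMod (2 ^ r)) G)
          = 1 + 2 * MonoidAlgebra.of (ZMod (2 ^ r)) G g ∧
      orderOf v = 2 ^ (r - 1) := by
  classical
  haveI : Fact (Nat.Prime 5) := ⟨by norm_num⟩
  haveI : IsCyclic G := isCyclic_of_prime_card (p := 5) (by rw [Nat.card_eq_fintype_card, hcard])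
  letI : CommGroup G := IsCyclic.commGroup
  have hg1 : g ≠ 1 := by
    intro h; rw [h, orderOf_one] at hg; norm_num at hg
  -- 2^r = 0 in the algebra
  have h2pow : (2 : MonoidAlgebra (ZMod (2^r)) G)^r = 0 := by
    have h0 : ((2^r : ℕ) : MonoidAlgebra (ZMod (2^r)) G) = 0 := by
      rw [← map_natCast (algebraMap (ZMod (2^r)) (MonoidAlgebra (ZMod (2^r)) G)),
        ZMod.natCast_self, map_zero]
    exact_mod_cast h0
  obtain ⟨s, rfl⟩ : ∃ s, r = s + 1 := ⟨r - 1, (Nat.succ_pred_eq_of_pos hr).symm⟩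
  rcases s with _ | n
  ·
    refine ⟨1, ?_, by simp⟩
    have : (2 : MonoidAlgebra (ZMod (2^1)) G) = 0 := by simpa using h2pow
    rw [Units.val_one, this, zero_mul, add_zero]
  · set t : MonoidAlgebra (ZMod (2^(n+2))) G := MonoidAlgebra.of _ G g with ht
    set x : MonoidAlgebra (ZMod (2^(n+2))) G := 1 + 2 * t with hx
    have hgg : g * g ≠ g := fun h => hg1 (mul_right_cancel (h.trans (one_mul g).symm))
    have htg : t.coeff g = 1 := by
      rw [ht, MonoidAlgebra.of_apply, MonoidAlgebra.single_apply]
      simp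
    have hyg : (t + t^2).coeff g = 1 := by
      have ht2 : (t^2).coeff g = 0 := by
        rw [ht, sq, MonoidAlgebra.of_apply, MonoidAlgebra.single_mul_single,
          MonoidAlgebra.single_apply]
        simp [hgg]
      rw [MonoidAlgebra.coeff_add, Finsupp.add_apply, htg, ht2, add_zero]
    -- x ^ 2^(n+1) = 1
    obtain ⟨b, hb⟩ := key_pow t n
    have hx1 : x ^ 2 ^ (n+1) = 1 := by
      rw [hx, hb, pow_succ (2 : MonoidAlgebra (ZMod (2^(n+2))) G) (n+2), h2pow]
      ring
    -- x ^ 2^n ≠ 1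
    have hxne : x ^ 2 ^ n ≠ 1 := by
      rcases n with _ | m
      ·
        intro h
        rw [pow_zero, pow_one, hx, add_eq_left] at h
        have := aux_ne g t htg 1 (by norm_num)
        rw [pow_one] at this
        exact this h
      · obtain ⟨b', hb'⟩ := key_pow t m
        have hz : (2 : MonoidAlgebra (ZMod (2^(m+3))) G)^(m+3) = 0 := h2pow
        intro h
        rw [hx, hb', hz, zero_mul, add_zero, add_eq_left] at h
        exact aux_ne g (t + t^2) hyg (m+2) (by omega) h
    haveI : Fact (Nat.Prime 2) := ⟨Nat.prime_two⟩
    have hord : orderOf x = 2 ^ (n+1) := orderOf_eq_prime_pow hxne hx1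
    obtain ⟨v, hv⟩ := IsUnit.of_pow_eq_one hx1 (by positivity)
    refine ⟨v, hv, ?_⟩
    rw [← orderOf_units, hv, hord]
    rfl
end

section
/- Let r ≥ 1 be an integer and let C_5 = ⟨g⟩ be a cyclic group of order 5. The element 1 + 2g² is a unit of the group algebra Z_{2^r}C_5, and its order in the unit group of Z_{2^r}C_5 is 2^{r−1}. -/
/-- in `Z_{2^r} C_5`, `r ≥ 1`, the element `1 + 2g²` is a unit
of order `2^(r-1)` in the unit group. -/
theorem orderOf_one_add_two_gsq (r : ℕ) (hr : 1 ≤ r) (G : Type*) [Group G] [Fintype G]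
    (g : G) (hg : orderOf g = 5) (hcard : Fintype.card G = 5) :
    ∃ v : (MonoidAlgebra (ZMod (2 ^ r)) G)ˣ,
      (v : MonoidAlgebra (ZMod (2 ^ r)) G)
          = 1 + 2 * MonoidAlgebra.of (ZMod (2 ^ r)) G g ^ 2 ∧
      orderOf v = 2 ^ (r - 1) := by
  haveI : Fact (Nat.Prime 5) := ⟨by norm_num⟩
  haveI : IsCyclic G := isCyclic_of_prime_card (Nat.card_eq_fintype_card.trans hcard)
  letI : CommGroup G := IsCyclic.commGroup
  letI : CommRing (MonoidAlgebra (ZMod (2 ^ r)) G) := inferInstance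
  set x : MonoidAlgebra (ZMod (2 ^ r)) G := MonoidAlgebra.of (ZMod (2 ^ r)) G g ^ 2 with hx
  -- 2^r = 0 in the algebra
  have h2 : (2 : MonoidAlgebra (ZMod (2 ^ r)) G) ^ r = 0 := by
    have : ((2 ^ r : ℕ) : MonoidAlgebra (ZMod (2 ^ r)) G) = 0 := by
      rw [← map_natCast (algebraMap (ZMod (2 ^ r)) (MonoidAlgebra (ZMod (2 ^ r)) G))]
      simp [ZMod.natCast_self]
    push_cast at this
    exact_mod_cast this
  have hnil : IsNilpotent (2 * x) := ⟨r, by rw [mul_pow, h2, zero_mul]⟩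
  have hu : IsUnit (1 + 2 * x) := hnil.isUnit_one_add
  refine ⟨hu.unit, hu.unit_spec, ?_⟩
  -- upper bound: u^(2^(r-1)) = 1
  have L1 : ∀ k : ℕ, ∃ y, (1 + 2 * x) ^ 2 ^ k = 1 + 2 ^ (k + 1) * y := by
    intro k
    induction k with
    | zero => exact ⟨x, by ring⟩
    | succ k ih =>
      obtain ⟨y, hy⟩ := ih
      exact ⟨y + 2 ^ k * y ^ 2, by rw [pow_succ, pow_mul, hy]; ring⟩
  have hpow1 : (1 + 2 * x) ^ 2 ^ (r - 1) = 1 := by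
    obtain ⟨y, hy⟩ := L1 (r - 1)
    rw [hy, Nat.sub_add_cancel hr, h2]; ring
  have hvpow : hu.unit ^ 2 ^ (r - 1) = 1 := by
    ext
    rw [Units.val_pow_eq_pow_val, hu.unit_spec, hpow1, Units.val_one]
  have hdvd : orderOf hu.unit ∣ 2 ^ (r - 1) := orderOf_dvd_of_pow_eq_one hvpow
  -- group element facts
  have hg2 : g ^ 2 ≠ 1 := by
    intro h
    have := orderOf_dvd_of_pow_eq_one h
    rw [hg] at this
    norm_num at this
  have hg42 : g ^ 4 ≠ g ^ 2 := by
    intro h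
    apply hg2
    have h2' : g ^ 2 * g ^ 2 = g ^ 2 * 1 := by
      rw [mul_one, ← pow_add]; exact h
    exact mul_left_cancel h2'
  -- singles
  have hxs : x = MonoidAlgebra.single (g ^ 2) (1 : ZMod (2 ^ r)) := by
    rw [hx, MonoidAlgebra.of_apply, MonoidAlgebra.single_pow, one_pow]
  have hx2s : x ^ 2 = MonoidAlgebra.single (g ^ 4) (1 : ZMod (2 ^ r)) := by
    rw [hxs, MonoidAlgebra.single_pow, one_pow, ← pow_mul]
  have hsingle : ∀ c : ZMod (2 ^ r),
      (algebraMap (ZMod (2 ^ r)) (MonoidAlgebra (ZMod (2 ^ r)) G) c) * x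
        = MonoidAlgebra.single (g ^ 2) c := by
    intro c
    rw [← Algebra.smul_def, hxs, MonoidAlgebra.smul_single', mul_one]
  have hsingle2 : ∀ c : ZMod (2 ^ r),
      (algebraMap (ZMod (2 ^ r)) (MonoidAlgebra (ZMod (2 ^ r)) G) c) * x ^ 2
        = MonoidAlgebra.single (g ^ 4) c := by
    intro c
    rw [← Algebra.smul_def, hx2s, MonoidAlgebra.smul_single', mul_one]
  have h2alg : (2 : MonoidAlgebra (ZMod (2 ^ r)) G)
      = algebraMap (ZMod (2 ^ r)) (MonoidAlgebra (ZMod (2 ^ r)) G) (2 : ZMod (2 ^ r)) :=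
    (map_ofNat _ 2).symm
  -- 2^(r-1) ≠ 0 in ZMod (2^r)
  have hc : ((2 : ZMod (2 ^ r)) ^ (r - 1)) ≠ 0 := by
    have h1 : ¬ ((2 ^ (r - 1) : ℕ) : ZMod (2 ^ r)) = 0 := by
      rw [ZMod.natCast_eq_zero_iff]
      intro h
      have := (Nat.pow_dvd_pow_iff_le_right (by norm_num : (1 : ℕ) < 2)).mp h
      omega
    push_cast at h1
    exact h1
  -- lower bound: u^(2^(r-2)) ≠ 1 when r ≥ 2
  have hne : 2 ≤ r → (1 + 2 * x) ^ 2 ^ (r - 2) ≠ 1 := by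
    intro hr2 heq
    have key : ∃ c : ZMod (2 ^ r), (1 + 2 * x) ^ 2 ^ (r - 2)
        = 1 + MonoidAlgebra.single (g ^ 2) ((2 : ZMod (2 ^ r)) ^ (r - 1))
            + MonoidAlgebra.single (g ^ 4) c := by
      rcases Nat.lt_or_ge r 3 with h3 | h3
      · -- r = 2
        have hr2' : r = 2 := by omega
        refine ⟨0, ?_⟩
        have e0 : r - 2 = 0 := by omega
        have e1 : r - 1 = 1 := by omega
        rw [MonoidAlgebra.single_zero, add_zero, ← hsingle, map_pow, ← h2alg, e0, e1]
        ring
      · -- r ≥ 3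
        have L2 : ∀ m : ℕ, ∃ z, (1 + 2 * x) ^ 2 ^ (m + 1)
            = 1 + 2 ^ (m + 2) * (x + x ^ 2) + 2 ^ (m + 3) * z := by
          intro m
          induction m with
          | zero => exact ⟨0, by ring⟩
          | succ m ih =>
            obtain ⟨z, hz⟩ := ih
            refine ⟨z + 2 ^ m * ((x + x ^ 2) + 2 * z) ^ 2, ?_⟩
            rw [pow_succ (2 : ℕ) (m + 1), pow_mul, hz]
            ring
        obtain ⟨z, hz⟩ := L2 (r - 3)
        have e1 : r - 3 + 1 = r - 2 := by omega
        have e2 : r - 3 + 2 = r - 1 := by omega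
        have e3 : r - 3 + 3 = r := by omega
        rw [e1, e2, e3, h2] at hz
        refine ⟨(2 : ZMod (2 ^ r)) ^ (r - 1), ?_⟩
        rw [← hsingle, ← hsingle2, map_pow, ← h2alg, hz]
        ring
    obtain ⟨c, hkey⟩ := key
    rw [heq] at hkey
    have hS : MonoidAlgebra.single (g ^ 2) ((2 : ZMod (2 ^ r)) ^ (r - 1))
        + MonoidAlgebra.single (g ^ 4) c = 0 := by
      linear_combination -hkey
    have hS' : (Finsupp.single (g ^ 2) ((2 : ZMod (2 ^ r)) ^ (r - 1))
        + Finsupp.single (g ^ 4) c : G →₀ ZMod (2 ^ r)) = 0 := congrArg MonoidAlgebra.coeff hS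
    have hev := DFunLike.congr_fun hS' (g ^ 2)
    classical
    rw [Finsupp.add_apply, Finsupp.single_apply, Finsupp.single_apply,
      if_pos rfl, if_neg hg42] at hev
    simp at hev
    exact hc hev
  -- conclude
  rcases eq_or_lt_of_le hr with h1 | h1
  · have h0 : r - 1 = 0 := by omega
    rw [h0, pow_zero] at hdvd ⊢
    exact Nat.dvd_one.mp hdvd
  · have hne' : ¬ orderOf hu.unit ∣ 2 ^ (r - 2) := by
      intro hd
      apply hne (by omega)
      have hv : hu.unit ^ 2 ^ (r - 2) = 1 := orderOf_dvd_iff_pow_eq_one.mp hd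
      have := congrArg Units.val hv
      rwa [Units.val_pow_eq_pow_val, hu.unit_spec, Units.val_one] at this
    obtain ⟨i, hi, hio⟩ := (Nat.dvd_prime_pow Nat.prime_two).mp hdvd
    have hieq : i = r - 1 := by
      by_contra hne2
      exact hne' (hio ▸ pow_dvd_pow 2 (by omega : i ≤ r - 2))
    rw [hio, hieq]
end

section
/- Let r ≥ 2 be an integer and let C_5 = ⟨g⟩ be a cyclic group of order 5. The element 1 + 4g is a unit of the group algebra Z_{2^r}C_5, and its order in the unit group of Z_{2^r}C_5 is 2^{r−2}. -/
/-- Key formula: in any ring, `(1 + 4a)^(2^m) = 1 + 2^(m+2) * (a + 2c)` for some `c`. -/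
lemma key_aux_one_add_four {A : Type*} [Ring A] (a : A) (m : ℕ) :
    ∃ c : A, (1 + 4 * a) ^ (2 ^ m) = 1 + 2 ^ (m + 2) * (a + 2 * c) := by
  induction m with
  | zero => exact ⟨0, by norm_num⟩
  | succ m ih =>
    obtain ⟨c, hc⟩ := ih
    set t : A := a + 2 * c with ht
    refine ⟨c + 2 ^ m * t ^ 2, ?_⟩
    have h1 : (1 + 4 * a) ^ 2 ^ (m + 1) = ((1 + 4 * a) ^ 2 ^ m) ^ 2 := by
      rw [← pow_mul, pow_succ]
    rw [h1, hc]
    have hcomm : Commute ((2 : A) ^ (m + 2)) t := (Commute.ofNat_left 2 t).pow_left _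
    have e1 : (2 : A) ^ (m + 3) = 2 * 2 ^ (m + 2) := (pow_succ' 2 (m + 2))
    have e2 : ((2 : A) ^ (m + 2)) ^ 2 = 2 ^ (m + 3) * 2 ^ (m + 1) := by
      rw [← pow_mul, ← pow_add]; ring_nf
    have e3 : t + 2 ^ (m + 1) * t ^ 2 = a + 2 * (c + 2 ^ m * t ^ 2) := by
      rw [mul_add, ht, pow_succ' (2 : A) m, mul_assoc, add_assoc]
    calc (1 + 2 ^ (m + 2) * t) ^ 2
        = 1 + 2 * (2 ^ (m + 2) * t) + (2 ^ (m + 2) * t) ^ 2 := by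
          rw [sq, sq, mul_add, add_mul, add_mul, one_mul, mul_one, two_mul]
          rw [← sq, add_assoc, add_assoc, add_assoc, one_mul]
      _ = 1 + 2 ^ (m + 3) * t + 2 ^ (m + 3) * (2 ^ (m + 1) * t ^ 2) := by
          rw [hcomm.mul_pow, e2, e1, mul_assoc, mul_assoc, mul_assoc]
      _ = 1 + 2 ^ (m + 1 + 2) * (a + 2 * (c + 2 ^ m * t ^ 2)) := by
          rw [add_assoc, ← mul_add, e3]

/-- in `Z_{2^r} C_5`, `r ≥ 2`, the element `1 + 4g` is a unit
of order `2^(r-2)` in the unit group. -/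
theorem orderOf_one_add_four_g (r : ℕ) (hr : 2 ≤ r) (G : Type*) [Group G] [Fintype G]
    (g : G) (hg : orderOf g = 5) (hcard : Fintype.card G = 5) :
    ∃ v : (MonoidAlgebra (ZMod (2 ^ r)) G)ˣ,
      (v : MonoidAlgebra (ZMod (2 ^ r)) G)
          = 1 + 4 * MonoidAlgebra.of (ZMod (2 ^ r)) G g ∧
      orderOf v = 2 ^ (r - 2) := by
  set A := MonoidAlgebra (ZMod (2 ^ r)) G with hA
  set a : A := MonoidAlgebra.of (ZMod (2 ^ r)) G g with ha
  set u : A := 1 + 4 * a with hu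
  have key : ∀ m : ℕ, ∃ c : A, u ^ (2 ^ m) = 1 + 2 ^ (m + 2) * (a + 2 * c) :=
    key_aux_one_add_four a
  have h2r : (2 : A) ^ r = 0 := by
    have h : ((2 ^ r : ℕ) : A) = 0 := by
      rw [← map_natCast (algebraMap (ZMod (2 ^ r)) A), ZMod.natCast_self, map_zero]
    push_cast at h
    exact h
  have hone : u ^ (2 ^ (r - 2)) = 1 := by
    obtain ⟨c, hc⟩ := key (r - 2)
    have h2 : r - 2 + 2 = r := by omega
    rw [hc, h2, h2r, zero_mul, add_zero]
  have hu_unit : IsUnit u := IsUnit.of_pow_eq_one hone (by positivity)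
  refine ⟨hu_unit.unit, hu_unit.unit_spec, ?_⟩
  rw [← orderOf_units, hu_unit.unit_spec]
  rcases eq_or_lt_of_le hr with h2 | h3
  · -- r = 2 : then u = 1 and the order is 2^0 = 1
    have hr2 : r = 2 := h2.symm
    subst hr2
    have hu1 : u = 1 := by simpa using hone
    simp [hu1]
  · have hr3 : 3 ≤ r := h3
    have hnot : ¬ u ^ (2 ^ (r - 3)) = 1 := by
      obtain ⟨c, hc⟩ := key (r - 3)
      have hr1 : r - 3 + 2 = r - 1 := by omega
      rw [hc, hr1]
      have hzero : (2 : A) ^ (r - 1) * (2 * c) = 0 := by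
        have h : (2 : A) ^ (r - 1) * 2 = (2 : A) ^ r := by
          rw [← pow_succ]
          congr 1
          omega
        rw [← mul_assoc, h, h2r, zero_mul]
      have hform : (1 : A) + 2 ^ (r - 1) * (a + 2 * c)
          = 1 + 2 ^ (r - 1) * a := by
        rw [mul_add, hzero, add_zero]
      rw [hform]
      intro hcon
      have h0 : (2 : A) ^ (r - 1) * a = 0 := by
        rwa [add_eq_left] at hcon
      have hsingle : (2 : A) ^ (r - 1) * a
          = MonoidAlgebra.single g ((2 ^ (r - 1) : ℕ) : ZMod (2 ^ r)) := by
        have hcast : (2 : A) ^ (r - 1) = ((2 ^ (r - 1) : ℕ) : A) := by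
          push_cast
          ring
        rw [hcast, ← map_natCast (algebraMap (ZMod (2 ^ r)) A), ← Algebra.smul_def, ha]
        show ((2 ^ (r - 1) : ℕ) : ZMod (2 ^ r)) • MonoidAlgebra.single g (1 : ZMod (2 ^ r))
            = MonoidAlgebra.single g ((2 ^ (r - 1) : ℕ) : ZMod (2 ^ r))
        rw [MonoidAlgebra.smul_single', mul_one]
      rw [hsingle] at h0
      have hc0 : ((2 ^ (r - 1) : ℕ) : ZMod (2 ^ r)) ≠ 0 := by
        rw [Ne, ZMod.natCast_eq_zero_iff]
        intro hdvd'
        have := (Nat.pow_dvd_pow_iff_le_right (by norm_num : 1 < 2)).mp hdvd'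
        omega
      exact hc0 (MonoidAlgebra.single_eq_zero.mp h0)
    haveI : Fact (Nat.Prime 2) := ⟨Nat.prime_two⟩
    have hfin : u ^ 2 ^ (r - 3 + 1) = 1 := by
      have h : r - 3 + 1 = r - 2 := by omega
      rw [h]; exact hone
    have horder := orderOf_eq_prime_pow hnot hfin
    rw [horder]
    congr 1
    omega
end

section
/- Let r ≥ 2 be an integer and let C_5 = ⟨g⟩ be a cyclic group of order 5. In Z_{2^r}C_5 let a := 3 · 5⁻¹ (5 is a unit of Z_{2^r}). Then the element x := (1 − a)(1 + g + g² + g³ + g⁴) − 1 satisfies x² = 1 and x ≠ 1; in particular x is a unit of order 2 in the unit group of Z_{2^r}C_5. -/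
/-- in `Z_{2^r} C_5`, `r ≥ 2`, with `a := 3 · 5⁻¹`, the element
`x := (1 - a)(1 + g + g² + g³ + g⁴) - 1` satisfies `x² = 1`, `x ≠ 1`, and so
is a unit of order `2` in the unit group. -/
theorem order_two_unit_Z2rC5 (r : ℕ) (hr : 2 ≤ r) (G : Type*) [Group G] [Fintype G]
    (g : G) (hg : orderOf g = 5) (hcard : Fintype.card G = 5) :
    IsUnit (5 : ZMod (2 ^ r)) ∧
    ∀ x : MonoidAlgebra (ZMod (2 ^ r)) G,
      x = (1 - algebraMap (ZMod (2 ^ r)) (MonoidAlgebra (ZMod (2 ^ r)) G)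
              (3 * (5 : ZMod (2 ^ r))⁻¹))
            * (1 + MonoidAlgebra.of (ZMod (2 ^ r)) G g
                + MonoidAlgebra.of (ZMod (2 ^ r)) G g ^ 2
                + MonoidAlgebra.of (ZMod (2 ^ r)) G g ^ 3
                + MonoidAlgebra.of (ZMod (2 ^ r)) G g ^ 4) - 1 →
      x ^ 2 = 1 ∧ x ≠ 1 ∧ ∃ v : (MonoidAlgebra (ZMod (2 ^ r)) G)ˣ,
        (v : MonoidAlgebra (ZMod (2 ^ r)) G) = x ∧ orderOf v = 2 := by
  have hn : NeZero (2 ^ r) := ⟨by positivity⟩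
  have h2ne : (2 : ZMod (2 ^ r)) ≠ 0 := by
    intro h
    have h' : ((2 : ℕ) : ZMod (2 ^ r)) = 0 := by exact_mod_cast h
    rw [ZMod.natCast_eq_zero_iff] at h'
    have h1 := Nat.le_of_dvd (by norm_num) h'
    have h2 : 4 ≤ 2 ^ r := by
      calc (4 : ℕ) = 2 ^ 2 := by norm_num
      _ ≤ 2 ^ r := Nat.pow_le_pow_right (by norm_num) hr
    omega
  have h5u : IsUnit (5 : ZMod (2 ^ r)) := by
    have : IsUnit ((5 : ℕ) : ZMod (2 ^ r)) :=
      (ZMod.isUnit_iff_coprime 5 (2 ^ r)).mpr (Nat.Coprime.pow_right r (by norm_num))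
    exact_mod_cast this
  have h5inv : (5 : ZMod (2 ^ r)) * (5 : ZMod (2 ^ r))⁻¹ = 1 :=
    ZMod.mul_inv_of_unit _ h5u
  refine ⟨h5u, ?_⟩
  letI : Fact (Nat.Prime 5) := ⟨by norm_num⟩
  haveI : IsCyclic G := isCyclic_of_prime_card (p := 5)
    (by rw [Nat.card_eq_fintype_card, hcard])
  intro x hx
  subst hx
  set C : ZMod (2 ^ r) →+* MonoidAlgebra (ZMod (2 ^ r)) G := algebraMap (ZMod (2 ^ r)) (MonoidAlgebra (ZMod (2 ^ r)) G) with hCdef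
  set y : MonoidAlgebra (ZMod (2 ^ r)) G := MonoidAlgebra.of (ZMod (2 ^ r)) G g with hy
  set c : ZMod (2 ^ r) := 3 * (5 : ZMod (2 ^ r))⁻¹ with hc
  set σ : MonoidAlgebra (ZMod (2 ^ r)) G := 1 + y + y ^ 2 + y ^ 3 + y ^ 4 with hσdef
  set x : MonoidAlgebra (ZMod (2 ^ r)) G := (1 - C c) * σ - 1 with hxdef
  have h5 : y ^ 5 = 1 := by
    rw [hy, ← map_pow, ← hg, pow_orderOf_eq_one, map_one]
  have hσ : σ ^ 2 = 5 * σ := by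
    letI : CommGroup G := IsCyclic.commGroup
    rw [hσdef]
    linear_combination (y ^ 3 + 2 * y ^ 2 + 3 * y + 4) * h5
  have hcsq : (5 : ZMod (2 ^ r)) * (1 - c) ^ 2 = 2 * (1 - c) := by
    rw [hc]
    linear_combination (9 * (5 : ZMod (2 ^ r))⁻¹ - 3) * h5inv
  have hCsq : (5 : MonoidAlgebra (ZMod (2 ^ r)) G) * (1 - C c) ^ 2 = 2 * (1 - C c) := by
    have h := congrArg C hcsq
    simpa [map_mul, map_pow, map_sub, map_one, map_ofNat] using h
  have hx2 : x ^ 2 = 1 := by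
    letI : CommGroup G := IsCyclic.commGroup
    rw [hxdef]
    linear_combination (1 - C c) ^ 2 * hσ + σ * hCsq
  have hne : ∀ k : ℕ, 0 < k → k < 5 → g ^ k ≠ 1 := by
    intro k hk1 hk2 h
    have hd := orderOf_dvd_of_pow_eq_one h
    rw [hg] at hd
    have := Nat.le_of_dvd hk1 hd
    omega
  have key : ∀ k : ℕ, g ^ (k + 1) = g → g ^ k = 1 := by
    intro k h
    have h' : g * g ^ k = g * 1 := by rw [← pow_succ', h, mul_one]
    exact mul_left_cancel h'
  have e0 : (1 : G) ≠ g := fun h => hne 1 one_pos (by norm_num) (by rw [pow_one, ← h])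
  have e2 : g ^ 2 ≠ g := fun h => hne 1 one_pos (by norm_num) (key 1 h)
  have e3 : g ^ 3 ≠ g := fun h => hne 2 two_pos (by norm_num) (key 2 h)
  have e4 : g ^ 4 ≠ g := fun h => hne 3 three_pos (by norm_num) (key 3 h)
  have hxne : x ≠ 1 := by
    intro h
    rw [hxdef] at h
    have heq : (1 - C c) * σ = 1 + 1 := by
      letI : CommGroup G := IsCyclic.commGroup
      linear_combination h
    have hCc : C c = MonoidAlgebra.single 1 c := by
      rw [hCdef, MonoidAlgebra.single_eq_algebraMap_mul_of, map_one, mul_one]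
    rw [hCc, hσdef, hy, MonoidAlgebra.one_def] at heq
    rw [show MonoidAlgebra.single (1:G) (1 : ZMod (2 ^ r)) - MonoidAlgebra.single 1 c
        = MonoidAlgebra.single 1 (1 - c) from (MonoidAlgebra.single_sub 1 1 c).symm] at heq
    simp only [MonoidAlgebra.of_apply, MonoidAlgebra.single_pow, one_pow, mul_add,
      MonoidAlgebra.single_mul_single, one_mul, mul_one] at heq
    have heq' : (Finsupp.single 1 (1 - c) + Finsupp.single g (1 - c)
        + Finsupp.single (g ^ 2) (1 - c) + Finsupp.single (g ^ 3) (1 - c)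
        + Finsupp.single (g ^ 4) (1 - c) : G →₀ ZMod (2 ^ r))
        = Finsupp.single 1 1 + Finsupp.single 1 1 := congrArg MonoidAlgebra.coeff heq
    have hcoef := Finsupp.ext_iff.mp heq' g
    classical
    simp only [Finsupp.add_apply, Finsupp.single_apply, if_neg e0, if_pos rfl,
      if_neg e2, if_neg e3, if_neg e4] at hcoef
    have h0 : (1 : ZMod (2 ^ r)) - c = 0 := by simpa using hcoef
    apply h2ne
    rw [hc] at h0
    linear_combination 5 * h0 + 3 * h5inv
  refine ⟨hx2, hxne, ?_⟩
  refine ⟨⟨x, x, by rw [← pow_two, hx2], by rw [← pow_two, hx2]⟩, rfl, ?_⟩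
  haveI : Fact (Nat.Prime 2) := ⟨by norm_num⟩
  apply orderOf_eq_prime
  · apply Units.ext
    rw [Units.val_pow_eq_pow_val, Units.val_one]
    exact hx2
  · intro h
    exact hxne (congrArg Units.val h)
end

section
/- Let p be a prime, r ≥ 1 an integer, and G a group. Let e ∈ Z_{p^r}G be a central element whose reduction modulo p is an idempotent of F_pG, and let n ≥ 1 be an integer such that (e² − e)^n = 0 (such n exists, e.g. n = r). Then the element ω := (Σ_{k=1}^{n} (−1)^{k−1} · C(n,k) · e^k)^n, where C(n,k) is the binomial coefficient, is a central idempotent of Z_{p^r}G (that is, ω² = ω and ω is central), and the reduction of ω modulo p equals the reduction of e modulo p. -/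
open Finset

lemma icc_sum_eq' {M : Type*} [AddCommMonoid M] (n : ℕ) (f : ℕ → M) :
    ∑ k ∈ Icc 1 n, f k = ∑ i ∈ range n, f (i + 1) := by
  rw [← Finset.Ico_add_one_right_eq_Icc, Finset.sum_Ico_eq_sum_range]
  simp [Nat.add_comm]

lemma binom_sum_int (n : ℕ) (hn : 1 ≤ n) :
    (∑ k ∈ Icc 1 n, (-1 : ℤ) ^ (k - 1) * n.choose k) = 1 := by
  have h0 : ∑ i ∈ range (n + 1), (-1 : ℤ) ^ i * n.choose i = 0 :=
    Int.alternating_sum_range_choose_of_ne (by omega)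
  rw [Finset.sum_range_succ'] at h0
  simp only [Nat.choose_zero_right, pow_zero, Nat.cast_one, mul_one] at h0
  rw [icc_sum_eq']
  simp only [Nat.add_sub_cancel]
  have : ∑ i ∈ range n, (-1 : ℤ) ^ i * n.choose (i + 1)
      = -∑ i ∈ range n, (-1 : ℤ) ^ (i + 1) * n.choose (i + 1) := by
    rw [← Finset.sum_neg_distrib]
    refine Finset.sum_congr rfl fun i _ => ?_
    ring
  omega

lemma binom_sum_ring {R : Type*} [Ring R] (n : ℕ) (hn : 1 ≤ n) :
    (∑ k ∈ Icc 1 n, (-1 : R) ^ (k - 1) * (n.choose k : R)) = 1 := by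
  have h : ((∑ k ∈ Icc 1 n, (-1 : ℤ) ^ (k - 1) * n.choose k : ℤ) : R) = 1 := by
    rw [binom_sum_int n hn]; simp
  push_cast at h
  exact h

lemma comm_idem {R : Type*} [CommRing R] (x : R) (n : ℕ)
    (h : (x ^ 2 - x) ^ n = 0) :
    IsIdempotentElem
      ((∑ k ∈ Icc 1 n, (-1 : R) ^ (k - 1) * (n.choose k : R) * x ^ k) ^ n) := by
  set a := ∑ k ∈ Icc 1 n, (-1 : R) ^ (k - 1) * (n.choose k : R) * x ^ k with ha
  obtain ⟨q, hq⟩ : ∃ q, a = x * q := by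
    refine ⟨∑ k ∈ Icc 1 n, (-1 : R) ^ (k - 1) * (n.choose k : R) * x ^ (k - 1), ?_⟩
    rw [ha, Finset.mul_sum]
    refine Finset.sum_congr rfl fun k hk => ?_
    obtain ⟨hk1, -⟩ := Finset.mem_Icc.mp hk
    have : k - 1 + 1 = k := by omega
    calc (-1 : R) ^ (k - 1) * (n.choose k : R) * x ^ k
        = (-1 : R) ^ (k - 1) * (n.choose k : R) * x ^ (k - 1 + 1) := by rw [this]
      _ = x * ((-1 : R) ^ (k - 1) * (n.choose k : R) * x ^ (k - 1)) := by ring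
  have h1 : 1 - a = (1 - x) ^ n := by
    have hb : (1 - x) ^ n = ∑ k ∈ range (n + 1), (-1 : R) ^ k * (n.choose k : R) * x ^ k := by
      have := add_pow (-x) 1 n
      rw [show -x + 1 = 1 - x by ring] at this
      rw [this]
      refine Finset.sum_congr rfl fun k _ => ?_
      rw [neg_pow]
      ring
    rw [hb, Finset.sum_range_succ']
    simp only [pow_zero, Nat.choose_zero_right, Nat.cast_one, mul_one, one_mul]
    rw [ha, icc_sum_eq']
    simp only [Nat.add_sub_cancel]
    have hneg : ∑ k ∈ range n, (-1:R) ^ (k+1) * (n.choose (k+1) : R) * x ^ (k+1)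
        = -∑ k ∈ range n, (-1:R) ^ k * (n.choose (k+1) : R) * x ^ (k+1) := by
      rw [← Finset.sum_neg_distrib]
      exact Finset.sum_congr rfl fun k _ => by ring
    rw [hneg]; ring
  have h2 : 1 - a ^ n = (1 - x) ^ n * ∑ i ∈ range n, a ^ i := by
    have := geom_sum_mul a n
    rw [← h1]
    linear_combination this
  have hx : x ^ n * (1 - x) ^ n = 0 := by
    rw [← mul_pow, show x * (1 - x) = -(x ^ 2 - x) by ring, neg_pow, h, mul_zero]
  have key : a ^ n * (1 - a ^ n) = 0 := by
    calc a ^ n * (1 - a ^ n)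
        = (x ^ n * (1 - x) ^ n) * (q ^ n * ∑ i ∈ range n, a ^ i) := by
          rw [h2, hq, mul_pow]; ring
      _ = 0 := by rw [hx, zero_mul]
  unfold IsIdempotentElem
  linear_combination -key

lemma central_lift_aux {R S : Type*} [Ring R] [Ring S] (φ : R →+* S) (e : R)
    (hcentral : ∀ y : R, e * y = y * e)
    (hidem : IsIdempotentElem (φ e))
    (n : ℕ) (hn : 1 ≤ n) (hnil : (e ^ 2 - e) ^ n = 0) :
    IsIdempotentElem
        ((∑ k ∈ Icc 1 n, (-1 : R) ^ (k - 1) * (n.choose k : R) * e ^ k) ^ n) ∧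
      (∀ y : R,
        (∑ k ∈ Icc 1 n, (-1 : R) ^ (k - 1) * (n.choose k : R) * e ^ k) ^ n * y
          = y * (∑ k ∈ Icc 1 n, (-1 : R) ^ (k - 1) * (n.choose k : R) * e ^ k) ^ n) ∧
      φ ((∑ k ∈ Icc 1 n, (-1 : R) ^ (k - 1) * (n.choose k : R) * e ^ k) ^ n) = φ e := by
  have heZ : e ∈ Subring.center R := Subring.mem_center_iff.mpr fun g => (hcentral g).symm
  set e' : Subring.center R := ⟨e, heZ⟩ with he'
  set Sa : R := ∑ k ∈ Finset.Icc 1 n,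
      (-1 : R) ^ (k - 1) * (n.choose k : R) * e ^ k with hSa
  set S' : Subring.center R := ∑ k ∈ Finset.Icc 1 n,
      (-1 : Subring.center R) ^ (k - 1) * (n.choose k : Subring.center R) * e' ^ k with hS'
  have hcoe : ((S' ^ n : Subring.center R) : R) = Sa ^ n := by
    push_cast [hS', hSa]
    rfl
  have hnil' : (e' ^ 2 - e') ^ n = 0 := by
    apply Subtype.coe_injective
    push_cast
    exact hnil
  have hidem' : IsIdempotentElem (S' ^ n) := comm_idem e' n hnil'
  refine ⟨?_, ?_, ?_⟩
  · show Sa ^ n * Sa ^ n = Sa ^ n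
    rw [← hcoe, ← Subring.coe_mul, hidem'.eq]
  · intro y
    have hmem : ((S' ^ n : Subring.center R) : R) ∈ Subring.center R := (S' ^ n).2
    show Sa ^ n * y = y * Sa ^ n
    rw [← hcoe]
    exact (Subring.mem_center_iff.mp hmem y).symm
  · have hfk : ∀ k ∈ Finset.Icc 1 n, (φ e) ^ k = φ e := by
      intro k hk
      obtain ⟨hk1, -⟩ := Finset.mem_Icc.mp hk
      have hk2 : k = (k - 1) + 1 := by omega
      rw [hk2]
      exact hidem.pow_succ_eq (k - 1)
    have hφS : φ Sa = φ e := by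
      rw [hSa, map_sum]
      have : ∀ k ∈ Finset.Icc 1 n,
          φ ((-1 : R) ^ (k - 1) * (n.choose k : R) * e ^ k)
            = ((-1 : S) ^ (k - 1) * (n.choose k : S)) * φ e := by
        intro k hk
        rw [map_mul, map_mul, map_pow, map_pow, map_neg, map_one, map_natCast, hfk k hk]
      rw [Finset.sum_congr rfl this, ← Finset.sum_mul, binom_sum_ring n hn, one_mul]
    show φ (Sa ^ n) = φ e
    rw [map_pow, hφS]
    have hn2 : n = (n - 1) + 1 := by omega
    rw [hn2]
    exact hidem.pow_succ_eq (n - 1)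

/-- lifting a central idempotent modulo `p`.  If `e` is central in
`Z_{p^r}G`, its reduction mod `p` is idempotent, and `(e^2 - e)^n = 0` for some
`n ≥ 1`, then `ω = (∑_{k=1}^n (-1)^(k-1) C(n,k) e^k)^n` is a central idempotent of
`Z_{p^r}G` whose reduction mod `p` equals that of `e`. -/
theorem central_idempotent_lift (p r : ℕ) [Fact p.Prime] (hr : 1 ≤ r)
    (G : Type*) [Group G] (e : MonoidAlgebra (ZMod (p ^ r)) G)
    (hcentral : ∀ y : MonoidAlgebra (ZMod (p ^ r)) G, e * y = y * e)
    (hidem : IsIdempotentElem (modpReduction p r (Nat.one_le_iff_ne_zero.mp hr) G e))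
    (n : ℕ) (hn : 1 ≤ n) (hnil : (e ^ 2 - e) ^ n = 0) :
    IsIdempotentElem
        ((∑ k ∈ Finset.Icc 1 n,
            (-1 : MonoidAlgebra (ZMod (p ^ r)) G) ^ (k - 1) * (n.choose k : MonoidAlgebra (ZMod (p ^ r)) G) * e ^ k) ^ n) ∧
      (∀ y : MonoidAlgebra (ZMod (p ^ r)) G,
        (∑ k ∈ Finset.Icc 1 n,
            (-1 : MonoidAlgebra (ZMod (p ^ r)) G) ^ (k - 1) * (n.choose k : MonoidAlgebra (ZMod (p ^ r)) G) * e ^ k) ^ n * y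
          = y * (∑ k ∈ Finset.Icc 1 n,
            (-1 : MonoidAlgebra (ZMod (p ^ r)) G) ^ (k - 1) * (n.choose k : MonoidAlgebra (ZMod (p ^ r)) G) * e ^ k) ^ n) ∧
      modpReduction p r (Nat.one_le_iff_ne_zero.mp hr) G
          ((∑ k ∈ Finset.Icc 1 n,
            (-1 : MonoidAlgebra (ZMod (p ^ r)) G) ^ (k - 1) * (n.choose k : MonoidAlgebra (ZMod (p ^ r)) G) * e ^ k) ^ n)
        = modpReduction p r (Nat.one_le_iff_ne_zero.mp hr) G e := by
  exact central_lift_aux (modpReduction p r (Nat.one_le_iff_ne_zero.mp hr) G) e hcentral hidem n hn hnil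
end

section
/- Let p be a prime, r ≥ 1 an integer, and G a finite group whose order is not divisible by p. Then the Jacobson radical of the group algebra Z_{p^r}G equals the ideal generated by p, and every element of this ideal is nilpotent (so the ideal generated by p is a nil ideal). -/
-- auxiliary: semisimple ring has trivial Jacobson radical
theorem aux_jacobson_bot (R : Type*) [Ring R] [IsSemisimpleRing R] :
    Ideal.jacobson (⊥ : Ideal R) = ⊥ := by
  obtain ⟨C, hC⟩ := exists_isCompl (Ideal.jacobson (⊥ : Ideal R))
  by_cases hCt : C = ⊤
  · have := hC.inf_eq_bot
    rw [hCt, inf_top_eq] at this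
    exact this
  · obtain ⟨M, hM, hCM⟩ := (eq_top_or_exists_le_coatom C).resolve_left hCt
    have hJM : Ideal.jacobson (⊥ : Ideal R) ≤ M :=
      sInf_le ⟨bot_le, Ideal.isMaximal_def.mpr hM⟩
    have : (⊤ : Ideal R) ≤ M := by
      rw [← hC.sup_eq_top]; exact sup_le hJM hCM
    exact absurd (top_le_iff.mp this) hM.1

open MonoidAlgebra

noncomputable def auxMapRange {k R G : Type*} [CommSemiring k] [CommSemiring R] [Monoid G]
    (f : k →+* R) : MonoidAlgebra k G →+* MonoidAlgebra R G :=
  MonoidAlgebra.liftNCRingHom (MonoidAlgebra.singleOneRingHom.comp f) (MonoidAlgebra.of R G)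
    (fun x y => by
      show MonoidAlgebra.single 1 (f x) * MonoidAlgebra.single y 1
          = MonoidAlgebra.single y 1 * MonoidAlgebra.single 1 (f x)
      simp [MonoidAlgebra.single_mul_single])

theorem auxMapRange_single {k R G : Type*} [CommSemiring k] [CommSemiring R] [Monoid G]
    (f : k →+* R) (g : G) (a : k) :
    auxMapRange f (MonoidAlgebra.single g a) = MonoidAlgebra.single g (f a) := by
  simp [auxMapRange, MonoidAlgebra.liftNCRingHom, MonoidAlgebra.liftNC_single,
    singleOneRingHom_apply, MonoidAlgebra.single_mul_single]

theorem auxMapRange_apply {k R G : Type*} [CommSemiring k] [CommSemiring R] [Monoid G]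
    (f : k →+* R) (x : MonoidAlgebra k G) (g : G) :
    (auxMapRange f x).coeff g = f (x.coeff g) := by
  induction x using MonoidAlgebra.induction_linear with
  | zero => simp
  | add a b ha hb => rw [map_add, MonoidAlgebra.coeff_add, Finsupp.add_apply, ha, hb, MonoidAlgebra.coeff_add, Finsupp.add_apply, map_add]
  | single g' a =>
      rw [auxMapRange_single]
      classical
      by_cases h : g' = g <;> simp [MonoidAlgebra.coeff_single, Finsupp.single_apply, h]

theorem auxMapRange_surjective {k R G : Type*} [CommSemiring k] [CommSemiring R] [Monoid G]
    (f : k →+* R) (hf : Function.Surjective f) :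
    Function.Surjective (auxMapRange (G := G) f) := by
  intro y
  induction y using MonoidAlgebra.induction_linear with
  | zero => exact ⟨0, map_zero _⟩
  | add a b ha hb =>
      obtain ⟨a', rfl⟩ := ha; obtain ⟨b', rfl⟩ := hb
      exact ⟨a' + b', map_add _ _ _⟩
  | single g b =>
      obtain ⟨a, rfl⟩ := hf b
      exact ⟨MonoidAlgebra.single g a, auxMapRange_single f g a⟩

noncomputable def auxEquiv (k G : Type*) [CommSemiring k] [Monoid G] :
    MonoidAlgebra (ULift k) G ≃+* MonoidAlgebra k G :=
  RingEquiv.ofRingHom (auxMapRange (G := G) (ULift.ringEquiv (R := k)).toRingHom)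
    (auxMapRange (G := G) (ULift.ringEquiv (R := k)).symm.toRingHom)
    (by
      apply MonoidAlgebra.ringHom_ext <;> intros <;>
        simp [auxMapRange_single])
    (by
      apply MonoidAlgebra.ringHom_ext <;> intros <;>
        simp [auxMapRange_single])

/-- for a prime `p`, `r ≥ 1` and a finite group `G` with
`p ∤ |G|`, the Jacobson radical of `Z_{p^r}G` is the ideal generated by `p`,
and this ideal is nil. -/
theorem jacobson_radical_groupRing_ZModPow (p r : ℕ) [Fact p.Prime] (hr : 1 ≤ r)
    (G : Type*) [Group G] [Fintype G] (hG : ¬ p ∣ Fintype.card G) :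
    Ideal.jacobson (⊥ : Ideal (MonoidAlgebra (ZMod (p ^ r)) G))
        = Ideal.span {(p : MonoidAlgebra (ZMod (p ^ r)) G)} ∧
      ∀ x ∈ Ideal.span {(p : MonoidAlgebra (ZMod (p ^ r)) G)}, IsNilpotent x := by
  have hr0 : r ≠ 0 := by omega
  have hp0 : p ≠ 0 := (Fact.out (p := p.Prime)).ne_zero
  haveI : NeZero p := ⟨hp0⟩
  haveI : NeZero (p ^ r) := ⟨pow_ne_zero r hp0⟩
  set R := MonoidAlgebra (ZMod (p ^ r)) G with hR
  -- p^r = 0 in R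
  have hp_pow : (p : R) ^ r = 0 := by
    have h1 : ((p ^ r : ℕ) : ZMod (p ^ r)) = 0 := ZMod.natCast_self _
    calc (p : R) ^ r = ((p ^ r : ℕ) : R) := by push_cast; ring
      _ = algebraMap (ZMod (p ^ r)) R ((p ^ r : ℕ) : ZMod (p ^ r)) :=
          (map_natCast (algebraMap (ZMod (p ^ r)) R) _).symm
      _ = 0 := by rw [h1, map_zero]
  -- nil part
  have hnil : ∀ x ∈ Ideal.span {(p : R)}, IsNilpotent x := by
    intro x hx
    obtain ⟨a, rfl⟩ := Submodule.mem_span_singleton.mp hx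
    refine ⟨r, ?_⟩
    rw [smul_eq_mul, (Nat.cast_commute p a).symm.mul_pow, hp_pow, mul_zero]
  refine ⟨le_antisymm ?_ ?_, hnil⟩
  · -- jacobson ⊥ ≤ span {p}
    set f : ZMod (p ^ r) →+* ZMod p := ZMod.castHom (dvd_pow_self p hr0) (ZMod p) with hf
    have hfs : Function.Surjective f := by
      intro b
      exact ⟨((b.val : ℕ) : ZMod (p ^ r)), by
        rw [map_natCast, ZMod.natCast_val, ZMod.cast_id]⟩
    set φ : R →+* MonoidAlgebra (ZMod p) G := auxMapRange f with hφ
    have hφs : Function.Surjective φ := auxMapRange_surjective f hfs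
    -- semisimplicity of (ZMod p) G
    haveI : NeZero ((Nat.card G : ℕ) : ZMod p) := by
      constructor
      intro h
      apply hG
      rw [Nat.card_eq_fintype_card] at h
      exact (ZMod.natCast_eq_zero_iff _ _).mp h
    haveI : IsSemisimpleRing (MonoidAlgebra (ZMod p) G) :=
      inferInstance
    have hJ : Ideal.jacobson (⊥ : Ideal (MonoidAlgebra (ZMod p) G)) = ⊥ :=
      aux_jacobson_bot _
    intro x hx
    have hφx : φ x = 0 := by
      have hmem : φ x ∈ Ideal.jacobson (⊥ : Ideal (MonoidAlgebra (ZMod p) G)) := by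
        refine Ideal.mem_sInf.mpr ?_
        rintro M ⟨-, hM⟩
        haveI := hM
        have hc : Ideal.comap φ M ∈ {J : Ideal R | ⊥ ≤ J ∧ J.IsMaximal} :=
          ⟨bot_le, Ideal.comap_isMaximal_of_surjective φ hφs⟩
        exact Ideal.mem_sInf.mp hx hc
      rwa [hJ, Ideal.mem_bot] at hmem
    -- coefficients of x are divisible by p
    have hcoeff : ∀ g : G, ∃ d : ZMod (p ^ r), x.coeff g = (p : ZMod (p ^ r)) * d := by
      intro g
      have h0 : f (x.coeff g) = 0 := by
        rw [← auxMapRange_apply f x g, ← hφ, hφx]; rfl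
      have hv : (((x.coeff g).val : ℕ) : ZMod p) = 0 := by
        rw [ZMod.natCast_val, ← ZMod.castHom_apply (R := ZMod p) (h := dvd_pow_self p hr0)]
        exact h0
      obtain ⟨t, ht⟩ := (ZMod.natCast_eq_zero_iff _ _).mp hv
      refine ⟨((t : ℕ) : ZMod (p ^ r)), ?_⟩
      have hx' : x.coeff g = (((x.coeff g).val : ℕ) : ZMod (p ^ r)) := by
        rw [ZMod.natCast_val, ZMod.cast_id]
      rw [hx', ht]; push_cast; ring
    -- assemble
    have hps : (p : R) = MonoidAlgebra.single 1 ((p : ℕ) : ZMod (p ^ r)) := by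
      have h1 : ((p : ℕ) : R) = MonoidAlgebra.singleOneRingHom ((p : ℕ) : ZMod (p ^ r)) :=
        (map_natCast MonoidAlgebra.singleOneRingHom p).symm
      exact h1
    rw [← MonoidAlgebra.sum_coeff_single x]
    refine Ideal.sum_mem _ fun g hg => ?_
    obtain ⟨d, hd⟩ := hcoeff g
    refine Submodule.mem_span_singleton.mpr ⟨MonoidAlgebra.single g d, ?_⟩
    rw [smul_eq_mul, hps, MonoidAlgebra.single_mul_single, mul_one, hd, mul_comm]
  · -- span {p} ≤ jacobson ⊥
    refine le_sInf ?_
    rintro M ⟨-, hM⟩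
    by_contra h
    have hlt : M < M ⊔ Ideal.span {(p : R)} :=
      lt_of_le_of_ne le_sup_left (fun e => h (e ▸ le_sup_right))
    have htop : M ⊔ Ideal.span {(p : R)} = ⊤ := hM.1.2 _ hlt
    have h1 : (1 : R) ∈ M ⊔ Ideal.span {(p : R)} := htop ▸ Submodule.mem_top
    obtain ⟨m, hm, c, hc, hmc⟩ := Submodule.mem_sup.mp h1
    have hcu : IsUnit m := by
      have : m = 1 - c := eq_sub_of_add_eq hmc
      rw [this]
      exact (hnil c hc).isUnit_one_sub
    exact hM.1.1 (Ideal.eq_top_of_isUnit_mem M hm hcu)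
end

section
/- Let R be a commutative ring, G a group, and e an idempotent of the group algebra RG. Let C := {g ∈ G : g⁻¹ e g = e}, the stabilizer of e under conjugation by group elements, which is a subgroup of G. Suppose that (g⁻¹ e g) · e = 0 for every g ∈ G not in C. Then e·(RG)·e = (RC)·e, that is: for every x ∈ RG there is an element y in the image of the natural embedding of the group algebra RC into RG such that e·x·e = y·e, and conversely y·e = e·(y·e)·e for every such y (so every element of (RC)·e lies in e·(RG)·e). -/
/-- let `e` be an idempotent of `RG` and `C` its conjugation
stabilizer in `G`.  If `(g⁻¹ e g) · e = 0` for every `g ∉ C`, then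
`e·(RG)·e = (RC)·e`. -/
theorem corner_eq_stabilizer_groupRing (R : Type*) [CommRing R]
    (G : Type*) [Group G] (e : MonoidAlgebra R G) (he : e * e = e)
    (C : Subgroup G)
    (hC : ∀ g : G, g ∈ C ↔
      MonoidAlgebra.of R G g⁻¹ * e * MonoidAlgebra.of R G g = e)
    (horth : ∀ g : G, g ∉ C →
      (MonoidAlgebra.of R G g⁻¹ * e * MonoidAlgebra.of R G g) * e = 0) :
    (∀ x : MonoidAlgebra R G, ∃ y : MonoidAlgebra R C,
      e * x * e = MonoidAlgebra.mapDomainRingHom R C.subtype y * e) ∧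
    (∀ y : MonoidAlgebra R C,
      MonoidAlgebra.mapDomainRingHom R C.subtype y * e
        = e * (MonoidAlgebra.mapDomainRingHom R C.subtype y * e) * e) := by
  have h1 : ∀ g : G, MonoidAlgebra.of R G g * MonoidAlgebra.of R G g⁻¹ = 1 := by
    intro g
    rw [← map_mul, mul_inv_cancel, map_one]
  have key : ∀ g : G, e * MonoidAlgebra.of R G g
      = MonoidAlgebra.of R G g * (MonoidAlgebra.of R G g⁻¹ * e * MonoidAlgebra.of R G g) := by
    intro g
    rw [← mul_assoc, ← mul_assoc, h1 g, one_mul]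
  have hcomm : ∀ g ∈ C, e * MonoidAlgebra.of R G g = MonoidAlgebra.of R G g * e := by
    intro g hg
    rw [key g, (hC g).mp hg]
  have hzero : ∀ g ∉ C, e * MonoidAlgebra.of R G g * e = 0 := by
    intro g hg
    rw [key g, mul_assoc, horth g hg, mul_zero]
  have hsingle : ∀ (g : G) (r : R),
      MonoidAlgebra.single g r = r • MonoidAlgebra.of R G g := by
    intro g r
    rw [MonoidAlgebra.of_apply, MonoidAlgebra.smul_single', mul_one]
  have hmap : ∀ (c : C) (r : R),
      MonoidAlgebra.mapDomainRingHom R C.subtype (MonoidAlgebra.single c r)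
        = MonoidAlgebra.single (c : G) r := by
    intro c r
    simp [MonoidAlgebra.mapDomainRingHom_apply]
  constructor
  · intro x
    induction x using MonoidAlgebra.induction with
    | zero => exact ⟨0, by simp⟩
    | single_add g r x _ _ ih =>
      obtain ⟨y, hy⟩ := ih
      by_cases hg : g ∈ C
      · refine ⟨MonoidAlgebra.single (⟨g, hg⟩ : C) r + y, ?_⟩
        rw [map_add, add_mul, ← hy, mul_add, add_mul]
        congr 1
        rw [show (MonoidAlgebra.single (⟨g, hg⟩ : C) r : MonoidAlgebra R C) = MonoidAlgebra.single (⟨g, hg⟩ : C) r from rfl, hmap ⟨g, hg⟩ r]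
        rw [hsingle, mul_smul_comm, smul_mul_assoc, hcomm g hg, smul_mul_assoc,
          mul_assoc, he]
      · refine ⟨y, ?_⟩
        rw [mul_add, add_mul, ← hy, hsingle, mul_smul_comm, smul_mul_assoc,
          hzero g hg, smul_zero, zero_add]
  · have hycomm : ∀ y : MonoidAlgebra R C,
        e * MonoidAlgebra.mapDomainRingHom R C.subtype y
          = MonoidAlgebra.mapDomainRingHom R C.subtype y * e := by
      intro y
      induction y using MonoidAlgebra.induction with
      | zero => simp
      | single_add c r y _ _ ih =>
        rw [map_add, mul_add, add_mul, ih, hmap c r]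
        congr 1
        rw [hsingle, mul_smul_comm, smul_mul_assoc, hcomm _ c.2]
    intro y
    rw [← mul_assoc, ← hycomm y, mul_assoc, he, hycomm y, mul_assoc, he]
end

section
/- Let R be a commutative ring, G a finite group, and e an idempotent of the group algebra RG. Let C := {g ∈ G : g⁻¹ e g = e}, the stabilizer of e under conjugation by group elements, which is a subgroup of G, and suppose that (g⁻¹ e g) · e = 0 for every g ∈ G not in C. Let T be a right transversal of C in G with 1 ∈ T and k := [G : C]. Then f := Σ_{t ∈ T} t⁻¹ e t is a central idempotent of RG, and there is a ring isomorphism between the ring (RG)·f = {x·f : x ∈ RG} (a ring with multiplicative identity f, under the multiplication of RG) and the ring M_k((RC)·e) of k × k matrices over the ring (RC)·e = {y·e : y ∈ RC} (a ring with multiplicative identity e, under the multiplication of RG). -/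
open scoped Classical

namespace MRD
variable {R : Type*} [CommRing R] {G : Type*} [Group G]

theorem hcan1 (X : MonoidAlgebra R G) (g : G) :
    MonoidAlgebra.of R G g * (MonoidAlgebra.of R G g⁻¹ * X) = X := by
  rw [← mul_assoc, ← map_mul, mul_inv_cancel, map_one, one_mul]

theorem hcan2 (X : MonoidAlgebra R G) (g : G) :
    MonoidAlgebra.of R G g⁻¹ * (MonoidAlgebra.of R G g * X) = X := by
  rw [← mul_assoc, ← map_mul, inv_mul_cancel, map_one, one_mul]

variable (e : MonoidAlgebra R G) (he : e * e = e) (C : Subgroup G)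
    (hC : ∀ g : G, g ∈ C ↔ MonoidAlgebra.of R G g⁻¹ * e * MonoidAlgebra.of R G g = e)
    (horth : ∀ g : G, g ∉ C →
      (MonoidAlgebra.of R G g⁻¹ * e * MonoidAlgebra.of R G g) * e = 0)

include he hC horth in
theorem ege (g : G) :
    e * MonoidAlgebra.of R G g * e
      = if g ∈ C then MonoidAlgebra.of R G g * e else 0 := by
  have h0 : e * MonoidAlgebra.of R G g * e
      = MonoidAlgebra.of R G g * ((MonoidAlgebra.of R G g⁻¹ * e * MonoidAlgebra.of R G g) * e) := by
    simp only [mul_assoc, hcan1]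
  by_cases hg : g ∈ C
  · rw [if_pos hg, h0, (hC g).1 hg, he]
  · rw [if_neg hg, h0, horth g hg, mul_zero]

include he hC horth in
theorem single_e (g : G) (r : R) :
    e * MonoidAlgebra.single g r * e
      = if g ∈ C then MonoidAlgebra.single g r * e else 0 := by
  have hs : (MonoidAlgebra.single g r : MonoidAlgebra R G) = r • MonoidAlgebra.of R G g := by
    rw [MonoidAlgebra.of_apply, MonoidAlgebra.smul_single', mul_one]
  rw [hs, mul_smul_comm, smul_mul_assoc, ege e he C hC horth g, smul_mul_assoc]
  split_ifs <;> simp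

include he hC horth in
theorem supp_in (x : MonoidAlgebra R G) (hx : ∀ g ∈ x.coeff.support, g ∈ C) :
    e * x * e = x * e := by
  have hrep : e * x * e = ∑ g ∈ x.coeff.support, e * MonoidAlgebra.single g (x.coeff g) * e := by
    conv_lhs => rw [← MonoidAlgebra.sum_coeff_single x, Finsupp.sum]
    rw [Finset.mul_sum, Finset.sum_mul]
  rw [hrep, Finset.sum_congr rfl fun g hg => by
    rw [single_e e he C hC horth, if_pos (hx g hg)]]
  rw [← Finset.sum_mul]
  congr 1
  conv_rhs => rw [← MonoidAlgebra.sum_coeff_single x, Finsupp.sum]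

include he hC horth in
theorem supp_out (x : MonoidAlgebra R G) (hx : ∀ g ∈ x.coeff.support, g ∉ C) :
    e * x * e = 0 := by
  have hrep : e * x * e = ∑ g ∈ x.coeff.support, e * MonoidAlgebra.single g (x.coeff g) * e := by
    conv_lhs => rw [← MonoidAlgebra.sum_coeff_single x, Finsupp.sum]
    rw [Finset.mul_sum, Finset.sum_mul]
  rw [hrep, Finset.sum_congr rfl fun g hg => by
    rw [single_e e he C hC horth, if_neg (hx g hg)]]
  exact Finset.sum_const_zero

theorem supp_iota (y : MonoidAlgebra R C) :
    ∀ u ∈ (MonoidAlgebra.mapDomainRingHom R C.subtype y).coeff.support, u ∈ C := by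
  intro u hu
  have h1 : (MonoidAlgebra.mapDomainRingHom R C.subtype y).coeff = Finsupp.mapDomain C.subtype y.coeff := rfl
  rw [h1] at hu
  obtain ⟨c, _, rfl⟩ := Finset.mem_image.1 (Finsupp.mapDomain_support hu)
  exact c.2

include he hC horth in
theorem eiotae (y : MonoidAlgebra R C) :
    e * (MonoidAlgebra.mapDomainRingHom R C.subtype y * e)
      = MonoidAlgebra.mapDomainRingHom R C.subtype y * e := by
  rw [← mul_assoc, supp_in e he C hC horth _ (supp_iota C y)]

include he hC horth in
theorem eRGe (x : MonoidAlgebra R G) :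
    ∃ y : MonoidAlgebra R C,
      e * x * e = MonoidAlgebra.mapDomainRingHom R C.subtype y * e := by
  refine ⟨∑ g ∈ x.coeff.support, if h : g ∈ C then MonoidAlgebra.single (⟨g, h⟩ : C) (x.coeff g) else 0, ?_⟩
  have hrep : e * x * e = ∑ g ∈ x.coeff.support, e * MonoidAlgebra.single g (x.coeff g) * e := by
    conv_lhs => rw [← MonoidAlgebra.sum_coeff_single x, Finsupp.sum]
    rw [Finset.mul_sum, Finset.sum_mul]
  rw [hrep, map_sum, Finset.sum_mul]
  refine Finset.sum_congr rfl fun g hg => ?_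
  rw [single_e e he C hC horth]
  by_cases h : g ∈ C
  · rw [if_pos h, dif_pos h]
    congr 1
    show _ = MonoidAlgebra.mapDomain C.subtype _
    rw [MonoidAlgebra.mapDomain_single]
    rfl
  · rw [if_neg h, dif_neg h, map_zero, zero_mul]

include he hC horth in
theorem e_of_iota_e (y : MonoidAlgebra R C) (g₁ : G) (hg₁ : g₁ ∉ C) :
    e * (MonoidAlgebra.of R G g₁ * MonoidAlgebra.mapDomainRingHom R C.subtype y) * e = 0 := by
  refine supp_out e he C hC horth _ ?_
  intro u hu hup
  have hval : (MonoidAlgebra.of R G g₁ * MonoidAlgebra.mapDomainRingHom R C.subtype y).coeff u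
      = 1 * (MonoidAlgebra.mapDomainRingHom R C.subtype y).coeff (g₁⁻¹ * u) := by
    rw [MonoidAlgebra.of_apply]
    exact MonoidAlgebra.coeff_single_mul_apply _ 1 g₁ u
  have hu' : (MonoidAlgebra.mapDomainRingHom R C.subtype y).coeff (g₁⁻¹ * u) ≠ 0 := by
    have h2 := Finsupp.mem_support_iff.1 hu
    rw [hval, one_mul] at h2
    exact h2
  have hmem : g₁⁻¹ * u ∈ C := supp_iota C y _ (Finsupp.mem_support_iff.2 hu')
  exact hg₁ (by simpa using C.mul_mem hup (inv_mem hmem))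

end MRD



/-- let `e` be an idempotent of `RG`, `C` its conjugation
stabilizer, with distinct conjugates of `e` orthogonal to `e`, `T` a right
transversal of `C` in `G` containing `1`, and `k = [G : C]`.  Then
`f = ∑_{t ∈ T} t⁻¹ e t` is a central idempotent of `RG`, and the ring
`(RG)·f` is isomorphic to the ring of `k × k` matrices over `(RC)·e`:
there is a bijection between `(RG)·f` and `k × k` matrices with entries in
`(RC)·e` which is additive and sends products to matrix products. -/
theorem matrix_ring_decomposition_of_strong_idempotent (R : Type*) [CommRing R]
    (G : Type*) [Group G] [Fintype G]
    (e : MonoidAlgebra R G) (he : e * e = e)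
    (C : Subgroup G)
    (hC : ∀ g : G, g ∈ C ↔
      MonoidAlgebra.of R G g⁻¹ * e * MonoidAlgebra.of R G g = e)
    (horth : ∀ g : G, g ∉ C →
      (MonoidAlgebra.of R G g⁻¹ * e * MonoidAlgebra.of R G g) * e = 0)
    (T : Finset G) (hone : (1 : G) ∈ T)
    (hT : ∀ x : G, ∃! t, t ∈ T ∧ x * t⁻¹ ∈ C)
    (k : ℕ) (hk : k = C.index)
    (f : MonoidAlgebra R G)
    (hf : f = ∑ t ∈ T, MonoidAlgebra.of R G t⁻¹ * e * MonoidAlgebra.of R G t) :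
    (f * f = f ∧ ∀ x : MonoidAlgebra R G, f * x = x * f) ∧
    ∃ φ : {x : MonoidAlgebra R G // ∃ y, x = y * f} ≃
        Matrix (Fin k) (Fin k)
          {x : MonoidAlgebra R G // ∃ y : MonoidAlgebra R C,
            x = MonoidAlgebra.mapDomainRingHom R C.subtype y * e},
      (∀ (x₁ x₂ : MonoidAlgebra R G) (h₁ : ∃ y, x₁ = y * f) (h₂ : ∃ y, x₂ = y * f)
          (h₁₂ : ∃ y, x₁ + x₂ = y * f) (i j : Fin k),
        (φ ⟨x₁ + x₂, h₁₂⟩ i j).1 = (φ ⟨x₁, h₁⟩ i j).1 + (φ ⟨x₂, h₂⟩ i j).1) ∧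
      (∀ (x₁ x₂ : MonoidAlgebra R G) (h₁ : ∃ y, x₁ = y * f) (h₂ : ∃ y, x₂ = y * f)
          (h₁₂ : ∃ y, x₁ * x₂ = y * f) (i j : Fin k),
        (φ ⟨x₁ * x₂, h₁₂⟩ i j).1 = ∑ l : Fin k, (φ ⟨x₁, h₁⟩ i l).1 * (φ ⟨x₂, h₂⟩ l j).1) := by
  classical
  -- ## transversal basics
  have hrep' : ∀ x : G, ∃ t, t ∈ T ∧ x * t⁻¹ ∈ C ∧ ∀ s, s ∈ T → x * s⁻¹ ∈ C → s = t := by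
    intro x
    obtain ⟨t, ht, hu⟩ := hT x
    exact ⟨t, ht.1, ht.2, fun s hs hsc => hu s ⟨hs, hsc⟩⟩
  choose rep hrepT hrepC hrepU using hrep'
  have hTT : ∀ s ∈ T, ∀ t ∈ T, s * t⁻¹ ∈ C → s = t := by
    intro s hs t ht hst
    have h1 : s = rep s := hrepU s s hs (by simpa using C.one_mem)
    have h2 : t = rep s := hrepU s t ht hst
    exact h1.trans h2.symm
  have hT1 : ∀ t ∈ T, (t ∈ C ↔ t = 1) := by
    intro t ht
    constructor
    · intro h; exact hTT t ht 1 hone (by simpa using h)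
    · rintro rfl; exact C.one_mem
  -- ## cardinality
  have hcard : Fintype.card {x // x ∈ T} = k := by
    have eqv : {x // x ∈ T} ≃ G ⧸ C := by
      refine Equiv.ofBijective (fun t => ((((t : G)⁻¹ : G)) : G ⧸ C)) ⟨?_, ?_⟩
      · intro s t h
        rw [QuotientGroup.eq] at h
        exact Subtype.ext (hTT s s.2 t t.2 (by simpa using h))
      · intro q
        refine QuotientGroup.induction_on q fun x => ?_
        refine ⟨⟨rep x⁻¹, hrepT x⁻¹⟩, ?_⟩
        have h1 := hrepC x⁻¹
        rw [QuotientGroup.eq]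
        simpa [mul_inv_rev] using inv_mem h1
    calc Fintype.card {x // x ∈ T} = Nat.card {x // x ∈ T} := Nat.card_eq_fintype_card.symm
      _ = Nat.card (G ⧸ C) := Nat.card_congr eqv
      _ = C.index := (Subgroup.index_eq_card C).symm
      _ = k := hk.symm
  let eqv2 : Fin k ≃ {x // x ∈ T} := (Fintype.equivFinOfCardEq hcard).symm
  let τ : Fin k → G := fun i => ((eqv2 i : {x // x ∈ T}) : G)
  have hτT : ∀ i, τ i ∈ T := fun i => (eqv2 i).2
  have hτeq : ∀ i j, τ i * (τ j)⁻¹ ∈ C ↔ i = j := by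
    intro i j
    constructor
    · intro h
      exact eqv2.injective (Subtype.ext (hTT _ (hτT i) _ (hτT j) h))
    · rintro rfl; simpa using C.one_mem
  have hsumE : (∑ i : Fin k,
      MonoidAlgebra.of R G (τ i)⁻¹ * e * MonoidAlgebra.of R G (τ i)) = f := by
    have h1 : (∑ t ∈ T, MonoidAlgebra.of R G t⁻¹ * e * MonoidAlgebra.of R G t) = f := hf.symm
    rw [← Finset.sum_coe_sort T
      (fun t => MonoidAlgebra.of R G t⁻¹ * e * MonoidAlgebra.of R G t)] at h1
    rw [← Equiv.sum_comp eqv2 (fun t : {x // x ∈ T} =>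
      MonoidAlgebra.of R G (t : G)⁻¹ * e * MonoidAlgebra.of R G (t : G))] at h1
    exact h1
  -- ## f is an idempotent
  have hTT' : ∀ s ∈ T, ∀ t ∈ T, (s * t⁻¹ ∈ C ↔ s = t) := by
    intro s hs t ht
    constructor
    · exact hTT s hs t ht
    · rintro rfl; simpa using C.one_mem
  have hEE : ∀ s t : G,
      (MonoidAlgebra.of R G s⁻¹ * e * MonoidAlgebra.of R G s) *
        (MonoidAlgebra.of R G t⁻¹ * e * MonoidAlgebra.of R G t)
      = if s * t⁻¹ ∈ C then MonoidAlgebra.of R G t⁻¹ * e * MonoidAlgebra.of R G t else 0 := by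
    intro s t
    have h1 : (MonoidAlgebra.of R G s⁻¹ * e * MonoidAlgebra.of R G s) *
        (MonoidAlgebra.of R G t⁻¹ * e * MonoidAlgebra.of R G t)
        = MonoidAlgebra.of R G s⁻¹ *
          ((e * MonoidAlgebra.of R G (s * t⁻¹) * e) * MonoidAlgebra.of R G t) := by
      simp only [map_mul, mul_assoc]
    rw [h1, MRD.ege e he C hC horth]
    split_ifs with h
    · simp only [map_mul, mul_assoc, MRD.hcan2]
    · simp
  have hff : f * f = f := by
    conv_lhs => rw [hf, Finset.sum_mul_sum]
    calc (∑ s ∈ T, ∑ t ∈ T,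
          (MonoidAlgebra.of R G s⁻¹ * e * MonoidAlgebra.of R G s) *
            (MonoidAlgebra.of R G t⁻¹ * e * MonoidAlgebra.of R G t))
        = ∑ s ∈ T, ∑ t ∈ T, (if s = t then
            MonoidAlgebra.of R G t⁻¹ * e * MonoidAlgebra.of R G t else 0) := by
          refine Finset.sum_congr rfl fun s hs => Finset.sum_congr rfl fun t ht => ?_
          rw [hEE, if_congr (hTT' s hs t ht) rfl rfl]
      _ = ∑ s ∈ T, MonoidAlgebra.of R G s⁻¹ * e * MonoidAlgebra.of R G s := by
          refine Finset.sum_congr rfl fun s hs => ?_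
          rw [Finset.sum_ite_eq T s
            (fun t => MonoidAlgebra.of R G t⁻¹ * e * MonoidAlgebra.of R G t), if_pos hs]
      _ = f := hf.symm
  -- ## e * f = e
  have hef : e * f = e := by
    rw [hf, Finset.mul_sum]
    calc (∑ t ∈ T, e * (MonoidAlgebra.of R G t⁻¹ * e * MonoidAlgebra.of R G t))
        = ∑ t ∈ T, (if t = 1 then
            MonoidAlgebra.of R G t⁻¹ * e * MonoidAlgebra.of R G t else 0) := by
          refine Finset.sum_congr rfl fun t ht => ?_
          have h1 : e * (MonoidAlgebra.of R G t⁻¹ * e * MonoidAlgebra.of R G t)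
              = (e * MonoidAlgebra.of R G t⁻¹ * e) * MonoidAlgebra.of R G t := by
            simp only [mul_assoc]
          by_cases h : t = 1
          · subst h
            rw [if_pos rfl]
            simp only [inv_one, map_one, one_mul, mul_one]
            exact he
          · rw [if_neg h, h1, MRD.ege e he C hC horth, if_neg, zero_mul]
            exact fun hm => h ((hT1 t ht).1 (by simpa using inv_mem hm))
      _ = if (1 : G) ∈ T then MonoidAlgebra.of R G (1 : G)⁻¹ * e * MonoidAlgebra.of R G 1 else 0 :=
          Finset.sum_ite_eq' T 1 _
      _ = e := by rw [if_pos hone]; simp only [inv_one, map_one, one_mul, mul_one]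
  -- ## centrality
  have key2 : ∀ c ∈ C, ∀ s : G,
      MonoidAlgebra.of R G (c * s)⁻¹ * e * MonoidAlgebra.of R G (c * s)
        = MonoidAlgebra.of R G s⁻¹ * e * MonoidAlgebra.of R G s := by
    intro c hc s
    have h1 : MonoidAlgebra.of R G (c * s)⁻¹ * e * MonoidAlgebra.of R G (c * s)
        = MonoidAlgebra.of R G s⁻¹ *
          ((MonoidAlgebra.of R G c⁻¹ * e * MonoidAlgebra.of R G c) * MonoidAlgebra.of R G s) := by
      simp only [mul_inv_rev, map_mul, mul_assoc]
    rw [h1, (hC c).1 hc, ← mul_assoc]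
  have hconj : ∀ g : G, MonoidAlgebra.of R G g⁻¹ * f * MonoidAlgebra.of R G g = f := by
    intro g
    rw [hf, Finset.mul_sum, Finset.sum_mul]
    refine Finset.sum_nbij' (fun t => rep (t * g)) (fun t => rep (t * g⁻¹))
      (fun t _ => hrepT _) (fun t _ => hrepT _) ?_ ?_ ?_
    · intro t ht
      refine (hrepU (rep (t * g) * g⁻¹) t ht ?_).symm
      simpa [mul_inv_rev, mul_assoc] using inv_mem (hrepC (t * g))
    · intro t ht
      refine (hrepU (rep (t * g⁻¹) * g) t ht ?_).symm
      simpa [mul_inv_rev, mul_assoc] using inv_mem (hrepC (t * g⁻¹))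
    · intro t _
      have e1 : MonoidAlgebra.of R G g⁻¹ *
          (MonoidAlgebra.of R G t⁻¹ * e * MonoidAlgebra.of R G t) * MonoidAlgebra.of R G g
          = MonoidAlgebra.of R G (t * g)⁻¹ * e * MonoidAlgebra.of R G (t * g) := by
        simp only [mul_inv_rev, map_mul, mul_assoc]
      have e2 : t * g = (t * g * (rep (t * g))⁻¹) * rep (t * g) := by
        simp
      rw [e1]
      conv_lhs => rw [e2]
      exact key2 _ (hrepC (t * g)) _
  have hcg : ∀ g : G, f * MonoidAlgebra.of R G g = MonoidAlgebra.of R G g * f := by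
    intro g
    conv_lhs => rw [← MRD.hcan1 (f * MonoidAlgebra.of R G g) g,
      ← mul_assoc (MonoidAlgebra.of R G g⁻¹) f (MonoidAlgebra.of R G g), hconj g]
  have hcsingle : ∀ (g : G) (r : R),
      f * MonoidAlgebra.single g r = MonoidAlgebra.single g r * f := by
    intro g r
    have hs : (MonoidAlgebra.single g r : MonoidAlgebra R G)
        = r • MonoidAlgebra.of R G g := by
      rw [MonoidAlgebra.of_apply, MonoidAlgebra.smul_single', mul_one]
    rw [hs, mul_smul_comm, smul_mul_assoc, hcg]
  have hcentral : ∀ x : MonoidAlgebra R G, f * x = x * f := by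
    intro x
    conv_lhs => rw [← MonoidAlgebra.sum_coeff_single x, Finsupp.sum]
    conv_rhs => rw [← MonoidAlgebra.sum_coeff_single x, Finsupp.sum]
    rw [Finset.mul_sum, Finset.sum_mul]
    exact Finset.sum_congr rfl fun g _ => hcsingle g (x.coeff g)
  have hfx : ∀ x : MonoidAlgebra R G, (∃ y, x = y * f) → f * x = x ∧ x * f = x := by
    rintro x ⟨y, rfl⟩
    constructor
    · rw [hcentral (y * f), mul_assoc, hff]
    · rw [mul_assoc, hff]
  refine ⟨⟨hff, hcentral⟩, ?_⟩
  -- chain helpers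
  have heC : ∀ Z : MonoidAlgebra R G, e * (e * Z) = e * Z := fun Z => by
    rw [← mul_assoc, he]
  have hefC : ∀ Z : MonoidAlgebra R G, e * (f * Z) = e * Z := fun Z => by
    rw [← mul_assoc, hef]
  have hBX : ∀ (M : Matrix (Fin k) (Fin k) {x : MonoidAlgebra R G // ∃ y : MonoidAlgebra R C,
      x = MonoidAlgebra.mapDomainRingHom R C.subtype y * e}),
      (∑ i : Fin k, ∑ j : Fin k, MonoidAlgebra.of R G (τ i)⁻¹ *
        ((M i j).1 * MonoidAlgebra.of R G (τ j))) * f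
      = ∑ i : Fin k, ∑ j : Fin k, MonoidAlgebra.of R G (τ i)⁻¹ *
        ((M i j).1 * MonoidAlgebra.of R G (τ j)) := by
    intro M
    rw [Finset.sum_mul]
    refine Finset.sum_congr rfl fun i _ => ?_
    rw [Finset.sum_mul]
    refine Finset.sum_congr rfl fun j _ => ?_
    obtain ⟨y, hy⟩ := (M i j).2
    rw [hy]
    simp only [mul_assoc]
    rw [← hcg (τ j), hefC]
  refine ⟨⟨fun x => fun i j =>
      ⟨e * (MonoidAlgebra.of R G (τ i) * (x.1 * MonoidAlgebra.of R G (τ j)⁻¹)) * e,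
        MRD.eRGe e he C hC horth _⟩,
    fun M => ⟨∑ i : Fin k, ∑ j : Fin k, MonoidAlgebra.of R G (τ i)⁻¹ *
        ((M i j).1 * MonoidAlgebra.of R G (τ j)), ⟨_, (hBX M).symm⟩⟩,
    ?_, ?_⟩, ?_, ?_⟩
  · -- left inverse
    intro x
    apply Subtype.ext
    show (∑ i : Fin k, ∑ j : Fin k, MonoidAlgebra.of R G (τ i)⁻¹ *
        ((e * (MonoidAlgebra.of R G (τ i) * (x.1 * MonoidAlgebra.of R G (τ j)⁻¹)) * e) *
          MonoidAlgebra.of R G (τ j))) = x.1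
    calc (∑ i : Fin k, ∑ j : Fin k, MonoidAlgebra.of R G (τ i)⁻¹ *
        ((e * (MonoidAlgebra.of R G (τ i) * (x.1 * MonoidAlgebra.of R G (τ j)⁻¹)) * e) *
          MonoidAlgebra.of R G (τ j)))
        = ∑ i : Fin k, ∑ j : Fin k,
            (MonoidAlgebra.of R G (τ i)⁻¹ * e * MonoidAlgebra.of R G (τ i)) *
              (x.1 * (MonoidAlgebra.of R G (τ j)⁻¹ * e * MonoidAlgebra.of R G (τ j))) := by
          refine Finset.sum_congr rfl fun i _ => Finset.sum_congr rfl fun j _ => ?_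
          simp only [mul_assoc]
      _ = (∑ i : Fin k, MonoidAlgebra.of R G (τ i)⁻¹ * e * MonoidAlgebra.of R G (τ i)) *
            (x.1 * (∑ j : Fin k,
              MonoidAlgebra.of R G (τ j)⁻¹ * e * MonoidAlgebra.of R G (τ j))) := by
          simp only [← Finset.mul_sum, ← Finset.sum_mul]
      _ = f * (x.1 * f) := by rw [hsumE]
      _ = x.1 := by rw [(hfx x.1 x.2).2, (hfx x.1 x.2).1]
  · -- right inverse
    intro M
    funext a b
    apply Subtype.ext
    show e * (MonoidAlgebra.of R G (τ a) *
        ((∑ i : Fin k, ∑ j : Fin k, MonoidAlgebra.of R G (τ i)⁻¹ *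
          ((M i j).1 * MonoidAlgebra.of R G (τ j))) *
          MonoidAlgebra.of R G (τ b)⁻¹)) * e = ((M a b).1 : MonoidAlgebra R G)
    choose Y hY using fun i j => (M i j).2
    have hterm : ∀ i j : Fin k, e * (MonoidAlgebra.of R G (τ a) *
        ((MonoidAlgebra.of R G (τ i)⁻¹ * ((M i j).1 * MonoidAlgebra.of R G (τ j))) *
          MonoidAlgebra.of R G (τ b)⁻¹)) * e
        = if i = a then (if j = b then ((M a b).1 : MonoidAlgebra R G) else 0) else 0 := by
      intro i j
      rw [hY i j]
      by_cases hj : j = b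
      · subst hj
        by_cases hi : i = a
        · subst hi
          rw [if_pos rfl, if_pos rfl]
          simp only [mul_assoc, MRD.hcan1, he]
          rw [MRD.eiotae e he C hC horth]
          exact (hY i j).symm
        · rw [if_neg hi]
          have h0 := MRD.e_of_iota_e e he C hC horth (Y i j) (τ a * (τ i)⁻¹)
            (fun hm => hi ((hτeq a i).1 hm).symm)
          simp only [map_mul, mul_assoc] at h0
          simp only [mul_assoc, MRD.hcan1, he]
          exact h0
      · rw [if_neg hj, ite_self]
        have h2 := MRD.ege e he C hC horth (τ j * (τ b)⁻¹)
        rw [if_neg (fun hm => hj ((hτeq j b).1 hm))] at h2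
        simp only [map_mul, mul_assoc] at h2
        simp only [mul_assoc]
        rw [h2]
        simp only [mul_zero]
    simp only [Finset.sum_mul, Finset.mul_sum]
    rw [Finset.sum_congr rfl fun i (_ : i ∈ Finset.univ) =>
      Finset.sum_congr rfl fun j (_ : j ∈ Finset.univ) => hterm i j]
    rw [Finset.sum_eq_single a (fun i _ hi => by simp [hi])
      (fun h => absurd (Finset.mem_univ a) h)]
    simp
  · -- additivity
    intro x₁ x₂ h₁ h₂ h₁₂ i j
    show e * (MonoidAlgebra.of R G (τ i) * ((x₁ + x₂) * MonoidAlgebra.of R G (τ j)⁻¹)) * e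
        = e * (MonoidAlgebra.of R G (τ i) * (x₁ * MonoidAlgebra.of R G (τ j)⁻¹)) * e
          + e * (MonoidAlgebra.of R G (τ i) * (x₂ * MonoidAlgebra.of R G (τ j)⁻¹)) * e
    simp only [add_mul, mul_add]
  · -- multiplicativity
    intro x₁ x₂ h₁ h₂ h₁₂ i j
    show e * (MonoidAlgebra.of R G (τ i) * ((x₁ * x₂) * MonoidAlgebra.of R G (τ j)⁻¹)) * e
        = ∑ l : Fin k,
            (e * (MonoidAlgebra.of R G (τ i) * (x₁ * MonoidAlgebra.of R G (τ l)⁻¹)) * e) *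
              (e * (MonoidAlgebra.of R G (τ l) * (x₂ * MonoidAlgebra.of R G (τ j)⁻¹)) * e)
    have hmul_term : ∀ l : Fin k,
        (e * (MonoidAlgebra.of R G (τ i) * (x₁ * MonoidAlgebra.of R G (τ l)⁻¹)) * e) *
          (e * (MonoidAlgebra.of R G (τ l) * (x₂ * MonoidAlgebra.of R G (τ j)⁻¹)) * e)
        = e * (MonoidAlgebra.of R G (τ i) * (x₁ *
            ((MonoidAlgebra.of R G (τ l)⁻¹ * e * MonoidAlgebra.of R G (τ l)) *
              (x₂ * (MonoidAlgebra.of R G (τ j)⁻¹ * e))))) := by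
      intro l
      simp only [mul_assoc, heC]
    rw [Finset.sum_congr rfl fun l (_ : l ∈ Finset.univ) => hmul_term l]
    simp only [← Finset.mul_sum, ← Finset.sum_mul]
    rw [hsumE, ← mul_assoc f x₂, (hfx x₂ h₂).1]
    simp only [mul_assoc]
end

section
/- Let R be a commutative ring, G a finite group, and e an idempotent of the group algebra RG. Let C := {g ∈ G : g⁻¹ e g = e}, the stabilizer of e under conjugation by group elements, which is a subgroup of G, and suppose that (g⁻¹ e g) · e = 0 for every g ∈ G not in C. Let T be a right transversal of C in G. Then the element f := Σ_{t ∈ T} t⁻¹ e t is a central idempotent of RG, i.e., f² = f and f commutes with every element of RG. -/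
section Aux
variable {R : Type*} [CommRing R] {G : Type*} [Group G]

/-- conjugate of `e` by `g` -/
private noncomputable def cj (e : MonoidAlgebra R G) (g : G) : MonoidAlgebra R G :=
  MonoidAlgebra.of R G g⁻¹ * e * MonoidAlgebra.of R G g

private lemma of_mul_of_inv (g : G) :
    (MonoidAlgebra.of R G g) * MonoidAlgebra.of R G g⁻¹ = (1 : MonoidAlgebra R G) := by
  rw [← map_mul, mul_inv_cancel, map_one]

private lemma cj_mul (e : MonoidAlgebra R G) (g h : G) :
    cj e (g * h) = MonoidAlgebra.of R G h⁻¹ * cj e g * MonoidAlgebra.of R G h := by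
  unfold cj
  rw [mul_inv_rev, map_mul, map_mul]
  noncomm_ring

private lemma cj_idem {e : MonoidAlgebra R G} (he : e * e = e) (g : G) :
    cj e g * cj e g = cj e g := by
  unfold cj
  have : MonoidAlgebra.of R G g⁻¹ * e * MonoidAlgebra.of R G g *
        (MonoidAlgebra.of R G g⁻¹ * e * MonoidAlgebra.of R G g)
      = MonoidAlgebra.of R G g⁻¹ * (e *
          ((MonoidAlgebra.of R G g * MonoidAlgebra.of R G g⁻¹) * e)) *
          MonoidAlgebra.of R G g := by noncomm_ring
  rw [this, of_mul_of_inv, one_mul, he]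

end Aux

/-- let `e` be an idempotent of `RG`, `C` its conjugation
stabilizer in `G`, and suppose distinct conjugates of `e` are orthogonal to
`e`.  If `T` is a right transversal of `C` in `G`, then
`f = ∑_{t ∈ T} t⁻¹ e t` is a central idempotent of `RG`. -/
theorem sum_conjugates_central_idempotent (R : Type*) [CommRing R]
    (G : Type*) [Group G] [Fintype G]
    (e : MonoidAlgebra R G) (he : e * e = e)
    (C : Subgroup G)
    (hC : ∀ g : G, g ∈ C ↔
      MonoidAlgebra.of R G g⁻¹ * e * MonoidAlgebra.of R G g = e)
    (horth : ∀ g : G, g ∉ C →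
      (MonoidAlgebra.of R G g⁻¹ * e * MonoidAlgebra.of R G g) * e = 0)
    (T : Finset G)
    (hT : ∀ x : G, ∃! t, t ∈ T ∧ x * t⁻¹ ∈ C) :
    (∑ t ∈ T, MonoidAlgebra.of R G t⁻¹ * e * MonoidAlgebra.of R G t)
        * (∑ t ∈ T, MonoidAlgebra.of R G t⁻¹ * e * MonoidAlgebra.of R G t)
      = (∑ t ∈ T, MonoidAlgebra.of R G t⁻¹ * e * MonoidAlgebra.of R G t) ∧
    ∀ x : MonoidAlgebra R G,
      (∑ t ∈ T, MonoidAlgebra.of R G t⁻¹ * e * MonoidAlgebra.of R G t) * x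
        = x * (∑ t ∈ T, MonoidAlgebra.of R G t⁻¹ * e * MonoidAlgebra.of R G t) := by
  have hcj : ∀ t : G, MonoidAlgebra.of R G t⁻¹ * e * MonoidAlgebra.of R G t = cj e t :=
    fun _ => rfl
  have hCc : ∀ g : G, g ∈ C ↔ cj e g = e := hC
  have hcm : ∀ (c t : G), c ∈ C → cj e (c * t) = cj e t := by
    intro c t hc
    rw [cj_mul, (hCc c).1 hc]
    rfl
  have horth' : ∀ s t : G, s * t⁻¹ ∉ C → cj e s * cj e t = 0 := by
    intro s t hst
    have hs : (s * t⁻¹) * t = s := by group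
    have h0 : cj e (s * t⁻¹) * e = 0 := horth _ hst
    have h2 : cj e s = MonoidAlgebra.of R G t⁻¹ * cj e (s * t⁻¹) * MonoidAlgebra.of R G t := by
      rw [← cj_mul, hs]
    rw [h2]
    show (MonoidAlgebra.of R G t⁻¹ * cj e (s * t⁻¹) * MonoidAlgebra.of R G t) *
      (MonoidAlgebra.of R G t⁻¹ * e * MonoidAlgebra.of R G t) = 0
    simp only [mul_assoc]
    rw [← mul_assoc (MonoidAlgebra.of R G t) (MonoidAlgebra.of R G t⁻¹), of_mul_of_inv,
      one_mul, ← mul_assoc (cj e (s * t⁻¹)) e, h0, zero_mul, mul_zero]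
  have hrep : ∀ x : G, ∃ t, (t ∈ T ∧ x * t⁻¹ ∈ C) ∧ ∀ t', t' ∈ T → x * t'⁻¹ ∈ C → t' = t := by
    intro x
    obtain ⟨t, ht, hu⟩ := hT x
    exact ⟨t, ht, fun t' h1 h2 => hu t' ⟨h1, h2⟩⟩
  choose φ hφ hφu using hrep
  have hφT : ∀ x, φ x ∈ T := fun x => (hφ x).1
  have hφC : ∀ x, x * (φ x)⁻¹ ∈ C := fun x => (hφ x).2
  have hφeq : ∀ t, t ∈ T → φ t = t := fun t ht =>
    (hφu t t ht (by simp [Subgroup.one_mem])).symm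
  have hcjφ : ∀ x, cj e (φ x) = cj e x := by
    intro x
    have h := hcm (x * (φ x)⁻¹) (φ x) (hφC x)
    rw [show (x * (φ x)⁻¹) * φ x = x from by group] at h
    exact h.symm
  have hdist : ∀ s t, s ∈ T → t ∈ T → s ≠ t → cj e s * cj e t = 0 := by
    intro s t hs ht hne
    refine horth' s t fun h => hne ?_
    have h2 := hφu s t ht h
    rw [hφeq s hs] at h2
    exact h2.symm
  simp only [hcj]
  refine ⟨?_, ?_⟩
  · rw [Finset.sum_mul_sum]
    refine Finset.sum_congr rfl fun s hs => ?_
    rw [Finset.sum_eq_single s (fun t ht hne => hdist s t hs ht (Ne.symm hne))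
      (fun h => absurd hs h)]
    exact cj_idem he s
  · set f : MonoidAlgebra R G := ∑ t ∈ T, cj e t with hf
    have hg : ∀ g : G, f * MonoidAlgebra.of R G g = MonoidAlgebra.of R G g * f := by
      intro g
      have key : MonoidAlgebra.of R G g⁻¹ * f * MonoidAlgebra.of R G g = f := by
        rw [hf, Finset.mul_sum, Finset.sum_mul]
        have step : ∀ t ∈ T,
            MonoidAlgebra.of R G g⁻¹ * cj e t * MonoidAlgebra.of R G g
              = cj e (φ (t * g)) := by
          intro t _
          rw [hcjφ, cj_mul]
        rw [Finset.sum_congr rfl step]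
        refine Finset.sum_nbij' (fun t => φ (t * g)) (fun t => φ (t * g⁻¹))
          (fun t _ => hφT _) (fun t _ => hφT _) ?_ ?_ (fun t _ => rfl)
        · intro t ht
          refine (hφu (φ (t * g) * g⁻¹) t ht ?_).symm
          rw [show φ (t * g) * g⁻¹ * t⁻¹ = ((t * g) * (φ (t * g))⁻¹)⁻¹ from by group]
          exact C.inv_mem (hφC _)
        · intro t ht
          refine (hφu (φ (t * g⁻¹) * g) t ht ?_).symm
          rw [show φ (t * g⁻¹) * g * t⁻¹ = ((t * g⁻¹) * (φ (t * g⁻¹))⁻¹)⁻¹ from by group]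
          exact C.inv_mem (hφC _)
      have h3 : f * MonoidAlgebra.of R G g
          = MonoidAlgebra.of R G g *
              (MonoidAlgebra.of R G g⁻¹ * f * MonoidAlgebra.of R G g) := by
        rw [← mul_assoc, ← mul_assoc, of_mul_of_inv, one_mul]
      rw [h3, key]
    intro x
    induction x using MonoidAlgebra.induction_on with
    | of g => exact hg g
    | add a b ha hb => rw [mul_add, add_mul, ha, hb]
    | smul r a ha => rw [mul_smul_comm, smul_mul_assoc, ha]
end

section
/- Let p be a prime, r ≥ 1 and m ≥ 1 integers, and let h ∈ (Z_{p^r})[X] be a basic irreducible polynomial of degree m. Let R := (Z_{p^r})[X] / ⟨h⟩ be the corresponding Galois ring of characteristic p^r and cardinality p^{rm}. Then there exists an element β ∈ R such that the family (θ(β)), indexed by all ring automorphisms θ of R, is a basis of R as a module over Z_{p^r} (in particular, R has exactly m ring automorphisms). -/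
open Polynomial AdjoinRoot

theorem NB_ann_vector {F V : Type*} [Field F] [AddCommGroup V] [Module F V]
    [FiniteDimensional F V] [Nontrivial V] (φ : Module.End F V) :
    ∃ v : V, ∀ g : F[X], (aeval φ g) v = 0 ↔ minpoly F φ ∣ g := by
  have hint : IsIntegral F φ := Algebra.IsIntegral.isIntegral φ
  have hμ0 : minpoly F φ ≠ 0 := minpoly.ne_zero hint
  have ev2 : ∀ (a b : F[X]) (w : V), (aeval φ (a * b)) w = (aeval φ a) ((aeval φ b) w) := by
    intro a b w; rw [map_mul]; rfl
  have evμ : ∀ w : V, (aeval φ (minpoly F φ)) w = 0 := by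
    intro w; rw [minpoly.aeval]; rfl
  classical
  suffices key : ∀ f : F[X], f ∣ minpoly F φ → ∃ v : V, ∀ g, (aeval φ g) v = 0 ↔ f ∣ g from
    key _ dvd_rfl
  intro f
  induction f using UniqueFactorizationMonoid.induction_on_coprime with
  | h0 => exact fun hfμ => absurd (zero_dvd_iff.mp hfμ) hμ0
  | h1 hx =>
      exact fun _ => ⟨0, fun g => ⟨fun _ => hx.dvd, fun _ => map_zero _⟩⟩
  | hpr i hπ =>
      rename_i π
      rcases Nat.eq_zero_or_pos i with rfl | hi
      · exact fun _ => ⟨0, fun g => by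
          simp⟩
      intro hfμ
      obtain ⟨t, ht⟩ := hfμ
      have hs : π * (π ^ (i-1) * t) = minpoly F φ := by
        rw [← mul_assoc, ← pow_succ', Nat.sub_add_cancel hi, ht]
      have hππ : 0 < π.natDegree :=
        natDegree_pos_iff_degree_pos.mpr (degree_pos_of_irreducible hπ.irreducible)
      have hs0 : π ^ (i-1) * t ≠ 0 := fun h0 => hμ0 (by rw [← hs, h0, mul_zero])
      have hsne : aeval φ (π ^ (i-1) * t) ≠ 0 := by
        intro h0
        have hdvd : minpoly F φ ∣ π ^ (i-1) * t := minpoly.dvd F φ h0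
        have h1 := Polynomial.natDegree_le_of_dvd hdvd hs0
        have hπ0 : π ≠ 0 := fun hπ0 => hμ0 (by rw [← hs, hπ0, zero_mul])
        have h2 : (minpoly F φ).natDegree = π.natDegree + (π ^ (i-1) * t).natDegree := by
          rw [← hs, natDegree_mul hπ0 hs0]
        omega
      obtain ⟨u, hu⟩ : ∃ u, (aeval φ (π ^ (i-1) * t)) u ≠ 0 := by
        by_contra hall
        push_neg at hall
        exact hsne (LinearMap.ext hall)
      refine ⟨(aeval φ t) u, fun g => ?_⟩
      constructor
      · intro hg0
        rw [← ev2] at hg0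
        set A := EuclideanDomain.gcdA g (π^i) with hA
        set B := EuclideanDomain.gcdB g (π^i) with hB
        set d := EuclideanDomain.gcd g (π ^ i) with hd
        obtain ⟨j, hj, e, he⟩ : ∃ j ≤ i, ∃ e : F[X]ˣ, π ^ j = d * e := by
          obtain ⟨j, hj, hassoc⟩ := (dvd_prime_pow hπ i).mp (EuclideanDomain.gcd_dvd_right g (π ^ i))
          obtain ⟨e, he⟩ := hassoc
          exact ⟨j, hj, e, he.symm⟩
        have hdann : (aeval φ (d * t)) u = 0 := by
          have hrw : d * t = A * (g * t) + B * (minpoly F φ) := by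
            rw [hd, hA, hB, EuclideanDomain.gcd_eq_gcd_ab g (π ^ i), ht]; ring
          rw [hrw, map_add, LinearMap.add_apply, ev2, hg0, map_zero, ev2, evμ, map_zero, add_zero]
        have hπj : (aeval φ (π ^ j * t)) u = 0 := by
          have hrw : π ^ j * t = (e : F[X]) * (d * t) := by rw [he]; ring
          rw [hrw, ev2, hdann, map_zero]
        have hji : j = i := by
          by_contra hne
          apply hu
          have hrw : π ^ (i - 1) * t = π ^ (i - 1 - j) * (π ^ j * t) := by
            rw [← mul_assoc, ← pow_add]
            congr 2
            omega
          rw [hrw, ev2, hπj, map_zero]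
        have hπd : π ^ i ∣ d := ⟨(e⁻¹ : F[X]ˣ), by
          rw [← hji, he, mul_assoc, Units.mul_inv, mul_one]⟩
        exact hπd.trans (EuclideanDomain.gcd_dvd_left g (π ^ i))
      · rintro ⟨g', rfl⟩
        have hrw : π ^ i * g' * t = g' * minpoly F φ := by rw [ht]; ring
        rw [← ev2, hrw, ev2, evμ, map_zero]
  | hcp hrel ihx ihy =>
      rename_i x y
      intro hfμ
      obtain ⟨vx, hvx⟩ := ihx ((dvd_mul_right x y).trans hfμ)
      obtain ⟨vy, hvy⟩ := ihy ((dvd_mul_left y x).trans hfμ)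
      have hcop : IsCoprime x y := hrel.isCoprime
      refine ⟨vx + vy, fun g => ?_⟩
      constructor
      · intro hg0
        have hgx : x ∣ g := by
          apply hcop.dvd_of_dvd_mul_right (show x ∣ g * y from ?_)
          apply (hvx _).mp
          have : (aeval φ (g * y)) (vx + vy)
              = (aeval φ (g * y)) vx + (aeval φ (g * y)) vy := map_add _ _ _
          have hz : (aeval φ (g * y)) (vx + vy) = 0 := by
            rw [mul_comm g y, ev2, hg0, map_zero]
          have hy0 : (aeval φ (g * y)) vy = 0 := by
            rw [ev2, (hvy y).mpr dvd_rfl, map_zero]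
          rw [this, hy0, add_zero] at hz
          exact hz
        have hgy : y ∣ g := by
          apply hcop.symm.dvd_of_dvd_mul_right (show y ∣ g * x from ?_)
          apply (hvy _).mp
          have : (aeval φ (g * x)) (vx + vy)
              = (aeval φ (g * x)) vx + (aeval φ (g * x)) vy := map_add _ _ _
          have hz : (aeval φ (g * x)) (vx + vy) = 0 := by
            rw [mul_comm g x, ev2, hg0, map_zero]
          have hx0 : (aeval φ (g * x)) vx = 0 := by
            rw [ev2, (hvx x).mpr dvd_rfl, map_zero]
          rw [this, hx0, zero_add] at hz
          exact hz
        exact hcop.mul_dvd hgx hgy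
      · intro hdvd
        rw [map_add, (hvx _).mpr ((dvd_mul_right x y).trans hdvd),
          (hvy _).mpr ((dvd_mul_left y x).trans hdvd), add_zero]

theorem NB_cyclic {F V : Type*} [Field F] [AddCommGroup V] [Module F V]
    [FiniteDimensional F V] [Nontrivial V] (φ : Module.End F V)
    (hdeg : (minpoly F φ).natDegree = Module.finrank F V) :
    ∃ v : V, Submodule.span F
      (Set.range fun i : Fin (Module.finrank F V) => (φ ^ (i : ℕ)) v) = ⊤ := by
  classical
  obtain ⟨v, hv⟩ := NB_ann_vector φ
  set n := Module.finrank F V with hn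
  have hn0 : 0 < n := Module.finrank_pos
  haveI : Nonempty (Fin n) := ⟨⟨0, hn0⟩⟩
  refine ⟨v, ?_⟩
  have li : LinearIndependent F (fun i : Fin n => (φ ^ (i : ℕ)) v) := by
    rw [Fintype.linearIndependent_iff]
    intro c hc i
    set g : F[X] := ∑ j : Fin n, monomial (j : ℕ) (c j) with hg
    have hgv : (aeval φ g) v = ∑ j : Fin n, c j • (φ ^ (j : ℕ)) v := by
      rw [hg, map_sum, LinearMap.sum_apply]
      refine Finset.sum_congr rfl fun j _ => ?_
      rw [aeval_monomial, Module.End.mul_apply, Module.algebraMap_end_apply]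
    have hg0 : g = 0 := by
      by_contra hgne
      have hdvd : minpoly F φ ∣ g := (hv g).mp (by rw [hgv, hc])
      have h1 := Polynomial.natDegree_le_of_dvd hdvd hgne
      have h2 : g.natDegree ≤ n - 1 :=
        natDegree_sum_le_of_forall_le _ _ fun j _ =>
          (natDegree_monomial_le (c j)).trans (by omega)
      omega
    have : g.coeff (i : ℕ) = c i := by
      rw [hg, finset_sum_coeff]
      rw [Finset.sum_congr rfl (fun j _ => coeff_monomial)]
      rw [show (∑ j : Fin n, if (j : ℕ) = (i : ℕ) then c j else 0)
          = ∑ j : Fin n, if j = i then c j else 0 from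
        Finset.sum_congr rfl fun j _ => by simp [Fin.val_eq_val]]
      simp
    rw [hg0] at this
    simpa using this.symm
  have := li.span_eq_top_of_card_eq_finrank (by simp [hn])
  simpa using this

namespace GRNB

variable (p r : ℕ) [hp : Fact p.Prime] (hr : 1 ≤ r) (h : Polynomial (ZMod (p ^ r)))

noncomputable def cst : ZMod (p ^ r) →+* ZMod p :=
  ZMod.castHom (dvd_pow_self p (Nat.one_le_iff_ne_zero.mp hr)) (ZMod p)

theorem cst_surjective : Function.Surjective (cst p r hr) :=
  ZMod.ringHom_surjective _

theorem cst_ker (c : ZMod (p ^ r)) :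
    cst p r hr c = 0 ↔ ∃ d, c = (p : ZMod (p ^ r)) * d := by
  haveI : NeZero (p ^ r) := ⟨pow_ne_zero r hp.out.ne_zero⟩
  constructor
  · intro h0
    have hc : ((c.val : ℕ) : ZMod (p ^ r)) = c := ZMod.natCast_zmod_val c
    have : ((c.val : ℕ) : ZMod p) = 0 := by
      rw [← map_natCast (cst p r hr), hc, h0]
    obtain ⟨d, hd⟩ := (ZMod.natCast_eq_zero_iff _ _).mp this
    exact ⟨(d : ZMod (p ^ r)), by rw [← hc, hd]; push_cast; ring⟩
  · rintro ⟨d, rfl⟩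
    rw [map_mul, map_natCast, ZMod.natCast_self, zero_mul]

/-- reduction map on the quotients -/
noncomputable def pii : AdjoinRoot h →+* AdjoinRoot (h.map (cst p r hr)) :=
  Ideal.Quotient.lift _ ((AdjoinRoot.mk _).comp (Polynomial.mapRingHom (cst p r hr))) (by
    intro a ha
    obtain ⟨c, rfl⟩ := Ideal.mem_span_singleton.mp ha
    simp only [RingHom.comp_apply, Polynomial.coe_mapRingHom, Polynomial.map_mul]
    rw [map_mul, AdjoinRoot.mk_self, zero_mul])

theorem pii_mk (f : Polynomial (ZMod (p ^ r))) :
    pii p r hr h (AdjoinRoot.mk h f) = AdjoinRoot.mk _ (f.map (cst p r hr)) := rfl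

theorem pii_surjective : Function.Surjective (pii p r hr h) := by
  intro y
  obtain ⟨g, rfl⟩ := AdjoinRoot.mk_surjective y
  obtain ⟨f, rfl⟩ := Polynomial.map_surjective _ (cst_surjective p r hr) g
  exact ⟨AdjoinRoot.mk h f, rfl⟩

theorem pii_root : pii p r hr h (root h) = root (h.map (cst p r hr)) := by
  rw [show root h = AdjoinRoot.mk h X from rfl, pii_mk, Polynomial.map_X]; rfl

theorem pii_algebraMap :
    (pii p r hr h).comp (algebraMap (ZMod (p ^ r)) (AdjoinRoot h)) =
      (algebraMap (ZMod p) (AdjoinRoot (h.map (cst p r hr)))).comp (cst p r hr) :=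
  RingHom.ext_zmod _ _

theorem pii_aeval (x : AdjoinRoot h) (f : Polynomial (ZMod (p ^ r))) :
    pii p r hr h (aeval x f) = aeval (pii p r hr h x) (f.map (cst p r hr)) := by
  rw [aeval_def, aeval_def, Polynomial.hom_eval₂, Polynomial.eval₂_map, pii_algebraMap]

theorem p_pow_zero : ((p : AdjoinRoot h)) ^ r = 0 := by
  have h1 : (p : AdjoinRoot h) = algebraMap (ZMod (p ^ r)) _ ((p : ℕ) : ZMod (p ^ r)) :=
    (map_natCast _ p).symm
  rw [h1, ← map_pow, ← Nat.cast_pow, ZMod.natCast_self, map_zero]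

theorem ker_pii (z : AdjoinRoot h) :
    pii p r hr h z = 0 ↔ ∃ w, z = (p : AdjoinRoot h) * w := by
  constructor
  · obtain ⟨f, rfl⟩ := AdjoinRoot.mk_surjective z
    intro h0
    rw [pii_mk] at h0
    obtain ⟨gb, hgb⟩ : h.map (cst p r hr) ∣ f.map (cst p r hr) :=
      AdjoinRoot.mk_eq_zero.mp h0
    obtain ⟨g, rfl⟩ := Polynomial.map_surjective _ (cst_surjective p r hr) gb
    have hzero : (f - h * g).map (cst p r hr) = 0 := by
      rw [Polynomial.map_sub, Polynomial.map_mul, ← hgb, sub_self]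
    have hdvd : C ((p : ℕ) : ZMod (p ^ r)) ∣ (f - h * g) := by
      rw [Polynomial.C_dvd_iff_dvd_coeff]
      intro i
      obtain ⟨d, hd⟩ := (cst_ker p r hr ((f - h*g).coeff i)).mp
        (by rw [← Polynomial.coeff_map, hzero, Polynomial.coeff_zero])
      exact ⟨d, hd⟩
    obtain ⟨f1, hf1⟩ := hdvd
    refine ⟨AdjoinRoot.mk h f1, ?_⟩
    have : f = h * g + C ((p : ℕ) : ZMod (p ^ r)) * f1 := by
      rw [← hf1]; ring
    rw [this, map_add, map_mul, AdjoinRoot.mk_self, zero_mul, zero_add, map_mul,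
      Polynomial.C_eq_natCast, map_natCast]
  · rintro ⟨w, rfl⟩
    rw [map_mul, map_natCast]
    have : ((p : ℕ) : AdjoinRoot (h.map (cst p r hr))) =
        algebraMap (ZMod p) _ ((p : ℕ) : ZMod p) := (map_natCast _ p).symm
    rw [this, ZMod.natCast_self, map_zero, zero_mul]

theorem isUnit_of_pii_ne (hirr : Irreducible (h.map (cst p r hr)))
    (z : AdjoinRoot h) (hz : pii p r hr h z ≠ 0) : IsUnit z := by
  haveI : Fact (Irreducible (h.map (cst p r hr))) := ⟨hirr⟩
  have h1 : IsUnit (pii p r hr h z) := isUnit_iff_ne_zero.mpr hz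
  obtain ⟨v', hv'⟩ := h1.exists_right_inv
  obtain ⟨w, rfl⟩ := pii_surjective p r hr h v'
  have : pii p r hr h (z * w - 1) = 0 := by rw [map_sub, map_mul, hv', map_one, sub_self]
  obtain ⟨w2, hw2⟩ := (ker_pii p r hr h _).mp this
  have hzw : z * w = 1 + (p : AdjoinRoot h) * w2 := by
    rw [← hw2]; ring
  have hnil : IsNilpotent ((p : AdjoinRoot h) * w2) :=
    ⟨r, by rw [mul_pow, p_pow_zero, zero_mul]⟩
  exact isUnit_of_mul_isUnit_left (hzw ▸ hnil.isUnit_one_add)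


theorem deriv_unit (hirr : Irreducible (h.map (cst p r hr)))
    (x : AdjoinRoot h) (hx : aeval (pii p r hr h x) (h.map (cst p r hr)) = 0) :
    IsUnit (aeval x (derivative h)) := by
  apply isUnit_of_pii_ne p r hr h hirr
  rw [pii_aeval, ← Polynomial.derivative_map]
  haveI : Fact (Irreducible (h.map (cst p r hr))) := ⟨hirr⟩
  have hsep : (h.map (cst p r hr)).Separable := PerfectField.separable_of_irreducible hirr
  obtain ⟨a, b, hab⟩ := hsep
  intro h0
  have := congrArg (aeval (pii p r hr h x)) hab
  rw [map_add, map_mul, map_mul, hx, h0, mul_zero, mul_zero, add_zero, map_one] at this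
  exact zero_ne_one this

theorem root_lift_unique (hirr : Irreducible (h.map (cst p r hr)))
    (x y : AdjoinRoot h) (hx : aeval x h = 0) (hy : aeval y h = 0)
    (hxy : pii p r hr h x = pii p r hr h y) : x = y := by
  haveI : Fact (Irreducible (h.map (cst p r hr))) := ⟨hirr⟩
  set H := h.map (algebraMap (ZMod (p ^ r)) (AdjoinRoot h)) with hH
  have hev : ∀ z : AdjoinRoot h, H.eval z = aeval z h := by
    intro z; rw [hH, Polynomial.eval_map, aeval_def]
  have hev' : ∀ z : AdjoinRoot h, H.derivative.eval z = aeval z (derivative h) := by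
    intro z; rw [hH, Polynomial.derivative_map, Polynomial.eval_map, aeval_def]
  obtain ⟨k, hk⟩ := H.binomExpansion y (x - y)
  rw [add_sub_cancel, hev, hev, hev', hx, hy] at hk
  have hfac : (x - y) * (aeval y (derivative h) + k * (x - y)) = 0 := by
    linear_combination -hk
  have hyroot : aeval (pii p r hr h y) (h.map (cst p r hr)) = 0 := by
    rw [← pii_aeval, hy, map_zero]
  have hcunit : IsUnit (aeval y (derivative h) + k * (x - y)) := by
    apply isUnit_of_pii_ne p r hr h hirr
    rw [map_add, map_mul, map_sub, hxy, sub_self, mul_zero, add_zero]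
    have := (deriv_unit p r hr h hirr y hyroot).map (pii p r hr h)
    exact this.ne_zero
  have hxy0 : x - y = 0 := by
    calc x - y = (x - y) * ((hcunit.unit : AdjoinRoot h) * (hcunit.unit⁻¹ : _)) := by
          rw [Units.mul_inv, mul_one]
      _ = ((x - y) * (hcunit.unit : AdjoinRoot h)) * (hcunit.unit⁻¹ : _) := by ring
      _ = 0 := by rw [IsUnit.unit_spec, hfac, zero_mul]
  exact sub_eq_zero.mp hxy0

theorem root_lift_exists (hirr : Irreducible (h.map (cst p r hr)))
    (α : AdjoinRoot (h.map (cst p r hr))) (hα : aeval α (h.map (cst p r hr)) = 0) :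
    ∃ x : AdjoinRoot h, aeval x h = 0 ∧ pii p r hr h x = α := by
  haveI : Fact (Irreducible (h.map (cst p r hr))) := ⟨hirr⟩
  set H := h.map (algebraMap (ZMod (p ^ r)) (AdjoinRoot h)) with hH
  have hev : ∀ z : AdjoinRoot h, H.eval z = aeval z h := by
    intro z; rw [hH, Polynomial.eval_map, aeval_def]
  have hev' : ∀ z : AdjoinRoot h, H.derivative.eval z = aeval z (derivative h) := by
    intro z; rw [hH, Polynomial.derivative_map, Polynomial.eval_map, aeval_def]
  have key : ∀ k : ℕ, 1 ≤ k → ∃ x, pii p r hr h x = α ∧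
      ∃ w, aeval x h = (p : AdjoinRoot h) ^ k * w := by
    intro k hk
    induction k with
    | zero => omega
    | succ k ih =>
      rcases Nat.eq_zero_or_pos k with rfl | hk1
      · obtain ⟨x0, hx0⟩ := pii_surjective p r hr h α
        have : pii p r hr h (aeval x0 h) = 0 := by rw [pii_aeval, hx0, hα]
        obtain ⟨w, hw⟩ := (ker_pii p r hr h _).mp this
        exact ⟨x0, hx0, w, by rw [pow_one, ← hw]⟩
      obtain ⟨x, hx, w, hw⟩ := ih hk1
      have hxroot : aeval (pii p r hr h x) (h.map (cst p r hr)) = 0 := by rw [hx]; exact hα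
      have hc : IsUnit (aeval x (derivative h)) := deriv_unit p r hr h hirr x hxroot
      set t : AdjoinRoot h := -(aeval x h * (hc.unit⁻¹ : _)) with hT
      obtain ⟨k2, hk2⟩ := H.binomExpansion x t
      rw [hev, hev, hev'] at hk2
      have hct : aeval x (derivative h) * t = -(aeval x h) := by
        rw [hT]
        have : (aeval x (derivative h)) * (aeval x h * (hc.unit⁻¹ : _))
            = aeval x h * ((hc.unit : _) * (hc.unit⁻¹ : _)) := by
          rw [IsUnit.unit_spec]; ring
        rw [mul_neg, this, Units.mul_inv, mul_one]
      have hres : aeval (x + t) h = k2 * t ^ 2 := by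
        rw [hk2, hct]; ring
      refine ⟨x + t, ?_, ?_⟩
      · have hpt : pii p r hr h t = 0 := by
          rw [hT, map_neg, map_mul, hw, map_mul, map_pow, map_natCast]
          have hp0 : ((p : ℕ) : AdjoinRoot (h.map (cst p r hr))) = 0 := by
            have : ((p : ℕ) : AdjoinRoot (h.map (cst p r hr))) =
                algebraMap (ZMod p) _ ((p : ℕ) : ZMod p) := (map_natCast _ p).symm
            rw [this, ZMod.natCast_self, map_zero]
          rw [hp0, zero_pow (by omega), zero_mul, zero_mul, neg_zero]
        rw [map_add, hx, hpt, add_zero]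
      · obtain ⟨j, hj⟩ : ∃ j, 2 * k = (k + 1) + j := ⟨2 * k - (k + 1), by omega⟩
        refine ⟨k2 * (w * (hc.unit⁻¹ : _)) ^ 2 * (p : AdjoinRoot h) ^ j, ?_⟩
        rw [hres, hT, hw]
        have h2 : (-( (p : AdjoinRoot h) ^ k * w * (hc.unit⁻¹ : _))) ^ 2
            = (p : AdjoinRoot h) ^ (2 * k) * (w * (hc.unit⁻¹ : _)) ^ 2 := by
          rw [neg_pow, two_mul, pow_add]; ring
        rw [h2, hj, pow_add]
        ring
  obtain ⟨x, hx, w, hw⟩ := key r hr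
  refine ⟨x, ?_, hx⟩
  rw [hw, p_pow_zero, zero_mul]


theorem hom_aeval_zmod {n : ℕ} {A B : Type*} [CommRing A] [CommRing B]
    [Algebra (ZMod n) A] [Algebra (ZMod n) B] (τ : A →+* B) (x : A)
    (f : Polynomial (ZMod n)) : τ (aeval x f) = aeval (τ x) f := by
  rw [aeval_def, aeval_def, Polynomial.hom_eval₂]
  congr 1
  exact RingHom.ext_zmod _ _

theorem hom_ext_adjoinRoot {n : ℕ} {B : Type*} [CommRing B] (f : Polynomial (ZMod n))
    {τ1 τ2 : AdjoinRoot f →+* B} (hroot : τ1 (root f) = τ2 (root f)) : τ1 = τ2 := by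
  have key : τ1.comp (AdjoinRoot.mk f) = τ2.comp (AdjoinRoot.mk f) := by
    apply Polynomial.ringHom_ext'
    · apply RingHom.ext_zmod
    · simpa using hroot
  refine RingHom.ext fun x => ?_
  obtain ⟨y, rfl⟩ := AdjoinRoot.mk_surjective x
  exact RingHom.congr_fun key y

theorem aeval_root_self {n : ℕ} (f : Polynomial (ZMod n)) : aeval (root f) f = 0 := by
  rw [AdjoinRoot.aeval_eq, AdjoinRoot.mk_self]

theorem K_charP (hirr : Irreducible (h.map (cst p r hr))) :
    CharP (AdjoinRoot (h.map (cst p r hr))) p := by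
  haveI : Fact (Irreducible (h.map (cst p r hr))) := ⟨hirr⟩
  exact charP_of_injective_algebraMap (algebraMap (ZMod p) _).injective p

noncomputable def frobK (hirr : Irreducible (h.map (cst p r hr))) (i : ℕ) :
    AdjoinRoot (h.map (cst p r hr)) →+* AdjoinRoot (h.map (cst p r hr)) :=
  letI : Fact (Irreducible (h.map (cst p r hr))) := ⟨hirr⟩
  letI : CharP (AdjoinRoot (h.map (cst p r hr))) p := K_charP p r hr h hirr
  iterateFrobenius _ p i

theorem frobK_apply (hirr : Irreducible (h.map (cst p r hr))) (i : ℕ)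
    (x : AdjoinRoot (h.map (cst p r hr))) : frobK p r hr h hirr i x = x ^ p ^ i := by
  letI : Fact (Irreducible (h.map (cst p r hr))) := ⟨hirr⟩
  letI : CharP (AdjoinRoot (h.map (cst p r hr))) p := K_charP p r hr h hirr
  exact iterateFrobenius_def p i x

theorem finite_K (hmonic : h.Monic) (hirr : Irreducible (h.map (cst p r hr))) :
    Finite (AdjoinRoot (h.map (cst p r hr))) := by
  haveI : Fact (Irreducible (h.map (cst p r hr))) := ⟨hirr⟩
  exact Finite.of_equiv _ (AdjoinRoot.powerBasis' (hmonic.map (cst p r hr))).basis.equivFun.toEquiv.symm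

theorem card_K (hmonic : h.Monic) (hirr : Irreducible (h.map (cst p r hr))) :
    Nat.card (AdjoinRoot (h.map (cst p r hr))) = p ^ h.natDegree := by
  haveI : Fact (Irreducible (h.map (cst p r hr))) := ⟨hirr⟩
  rw [Nat.card_congr (AdjoinRoot.powerBasis' (hmonic.map (cst p r hr))).basis.equivFun.toEquiv,
    Nat.card_fun, Nat.card_zmod, Nat.card_eq_fintype_card, Fintype.card_fin,
    AdjoinRoot.powerBasis'_dim, hmonic.natDegree_map]

theorem finrank_K (hmonic : h.Monic) (hirr : Irreducible (h.map (cst p r hr))) :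
    Module.finrank (ZMod p) (AdjoinRoot (h.map (cst p r hr))) = h.natDegree := by
  haveI : Fact (Irreducible (h.map (cst p r hr))) := ⟨hirr⟩
  rw [(AdjoinRoot.powerBasis' (hmonic.map (cst p r hr))).finrank,
    AdjoinRoot.powerBasis'_dim, hmonic.natDegree_map]

theorem frob_inj (hmonic : h.Monic) (hirr : Irreducible (h.map (cst p r hr)))
    {i j : ℕ} (hi : i < h.natDegree) (hj : j < h.natDegree)
    (hij : ∀ x : AdjoinRoot (h.map (cst p r hr)), x ^ p ^ i = x ^ p ^ j) : i = j := by
  haveI : Fact (Irreducible (h.map (cst p r hr))) := ⟨hirr⟩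
  haveI : Finite (AdjoinRoot (h.map (cst p r hr))) := finite_K p r hr h hmonic hirr
  haveI : Fintype (AdjoinRoot (h.map (cst p r hr))) := Fintype.ofFinite _
  by_contra hne
  -- wlog i < j
  wlog hlt : i < j generalizing i j
  · exact this hj hi (fun x => (hij x).symm) (Ne.symm hne) (by omega)
  have hplt : p ^ i < p ^ j := Nat.pow_lt_pow_right hp.out.one_lt hlt
  set g : Polynomial (AdjoinRoot (h.map (cst p r hr))) := X ^ p ^ j - X ^ p ^ i with hg
  have hg0 : g = 0 := by
    apply Polynomial.eq_zero_of_natDegree_lt_card_of_eval_eq_zero g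
      (Function.injective_id (α := AdjoinRoot (h.map (cst p r hr))))
    · intro x
      simp only [id, hg, Polynomial.eval_sub, Polynomial.eval_pow, Polynomial.eval_X]
      rw [hij x, sub_self]
    · calc g.natDegree ≤ max (X ^ p ^ j : Polynomial _).natDegree (X ^ p ^ i : Polynomial _).natDegree :=
            Polynomial.natDegree_sub_le _ _
        _ ≤ p ^ j := by simp only [Polynomial.natDegree_X_pow, max_le_iff]; omega
        _ < p ^ h.natDegree := Nat.pow_lt_pow_right hp.out.one_lt hj
        _ = Fintype.card (AdjoinRoot (h.map (cst p r hr))) := by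
            rw [← card_K p r hr h hmonic hirr, Nat.card_eq_fintype_card]
  have hcoeff : g.coeff (p ^ j) = 1 := by
    rw [hg, Polynomial.coeff_sub, Polynomial.coeff_X_pow, Polynomial.coeff_X_pow,
      if_pos rfl, if_neg (by omega)]
    ring
  rw [hg0] at hcoeff
  simp at hcoeff


theorem finite_rootsK (hmonic : h.Monic) (hirr : Irreducible (h.map (cst p r hr))) :
    Finite {α : AdjoinRoot (h.map (cst p r hr)) // aeval α (h.map (cst p r hr)) = 0} := by
  haveI : Finite (AdjoinRoot (h.map (cst p r hr))) := finite_K p r hr h hmonic hirr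
  exact Subtype.finite

theorem card_rootsK (hmonic : h.Monic) (hirr : Irreducible (h.map (cst p r hr))) :
    Nat.card {α : AdjoinRoot (h.map (cst p r hr)) // aeval α (h.map (cst p r hr)) = 0}
      = h.natDegree := by
  classical
  haveI : Fact (Irreducible (h.map (cst p r hr))) := ⟨hirr⟩
  haveI : Finite (AdjoinRoot (h.map (cst p r hr))) := finite_K p r hr h hmonic hirr
  set K := AdjoinRoot (h.map (cst p r hr))
  set hbK : Polynomial K := (h.map (cst p r hr)).map (algebraMap (ZMod p) K) with hhbK
  have hbKne : hbK ≠ 0 := ((hmonic.map (cst p r hr)).map _).ne_zero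
  apply le_antisymm
  · have hinj : Function.Injective
        (fun α : {α : K // aeval α (h.map (cst p r hr)) = 0} =>
          (⟨α.1, by
            rw [Multiset.mem_toFinset]
            refine Polynomial.mem_roots'.mpr ⟨hbKne, ?_⟩
            have := α.2
            rwa [Polynomial.IsRoot.def, hhbK, Polynomial.eval_map, ← aeval_def]⟩ :
            ↥hbK.roots.toFinset)) := by
      intro a b hab
      exact Subtype.ext (congrArg (fun z : ↥hbK.roots.toFinset => z.1) hab)
    calc Nat.card {α : K // aeval α (h.map (cst p r hr)) = 0}
        ≤ Nat.card ↥hbK.roots.toFinset := Nat.card_le_card_of_injective _ hinj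
      _ = hbK.roots.toFinset.card := Nat.card_eq_finsetCard _
      _ ≤ Multiset.card hbK.roots := Multiset.toFinset_card_le _
      _ ≤ hbK.natDegree := Polynomial.card_roots' hbK
      _ = h.natDegree := by
          rw [hhbK, (hmonic.map (cst p r hr)).natDegree_map, hmonic.natDegree_map]
  · have hinj : Function.Injective (fun i : Fin h.natDegree =>
        (⟨frobK p r hr h hirr i (root (h.map (cst p r hr))), by
          rw [← hom_aeval_zmod, aeval_root_self, map_zero]⟩ :
          {α : K // aeval α (h.map (cst p r hr)) = 0})) := by
      intro i j hij
      have heq : frobK p r hr h hirr i (root (h.map (cst p r hr)))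
          = frobK p r hr h hirr j (root (h.map (cst p r hr))) :=
        congrArg Subtype.val hij
      have hhom : frobK p r hr h hirr i = frobK p r hr h hirr j :=
        hom_ext_adjoinRoot _ heq
      have : ∀ x : K, x ^ p ^ (i : ℕ) = x ^ p ^ (j : ℕ) := by
        intro x
        rw [← frobK_apply p r hr h hirr, ← frobK_apply p r hr h hirr, hhom]
      exact Fin.ext (frob_inj p r hr h hmonic hirr i.2 j.2 this)
    calc h.natDegree = Nat.card (Fin h.natDegree) := by simp
      _ ≤ _ := Nat.card_le_card_of_injective _ hinj

theorem endToRootK_bijective (hmonic : h.Monic) (hirr : Irreducible (h.map (cst p r hr))) :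
    Function.Bijective (fun τ : (AdjoinRoot (h.map (cst p r hr)) →+* AdjoinRoot (h.map (cst p r hr))) =>
      (⟨τ (root (h.map (cst p r hr))), by
        rw [← hom_aeval_zmod, aeval_root_self, map_zero]⟩ :
        {α : AdjoinRoot (h.map (cst p r hr)) // aeval α (h.map (cst p r hr)) = 0})) := by
  constructor
  · intro τ1 τ2 h12
    exact hom_ext_adjoinRoot _ (congrArg Subtype.val h12)
  · rintro ⟨α, hα⟩
    refine ⟨AdjoinRoot.lift (algebraMap _ _) α (by rw [← aeval_def]; exact hα), Subtype.ext ?_⟩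
    show (AdjoinRoot.lift (algebraMap _ _) α _) (root (h.map (cst p r hr))) = α
    rw [AdjoinRoot.lift_root]

theorem card_endK (hmonic : h.Monic) (hirr : Irreducible (h.map (cst p r hr))) :
    Nat.card (AdjoinRoot (h.map (cst p r hr)) →+* AdjoinRoot (h.map (cst p r hr)))
      = h.natDegree := by
  rw [Nat.card_eq_of_bijective _ (endToRootK_bijective p r hr h hmonic hirr),
    card_rootsK p r hr h hmonic hirr]

theorem rootRtoK_bijective (hirr : Irreducible (h.map (cst p r hr))) :
    Function.Bijective (fun x : {x : AdjoinRoot h // aeval x h = 0} =>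
      (⟨pii p r hr h x.1, by rw [← pii_aeval, x.2, map_zero]⟩ :
        {α : AdjoinRoot (h.map (cst p r hr)) // aeval α (h.map (cst p r hr)) = 0})) := by
  constructor
  · rintro ⟨x, hx⟩ ⟨y, hy⟩ hxy
    exact Subtype.ext (root_lift_unique p r hr h hirr x y hx hy (congrArg Subtype.val hxy))
  · rintro ⟨α, hα⟩
    obtain ⟨x, hx, hpx⟩ := root_lift_exists p r hr h hirr α hα
    exact ⟨⟨x, hx⟩, Subtype.ext hpx⟩

theorem card_rootsR (hmonic : h.Monic) (hirr : Irreducible (h.map (cst p r hr))) :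
    Nat.card {x : AdjoinRoot h // aeval x h = 0} = h.natDegree := by
  rw [Nat.card_eq_of_bijective _ (rootRtoK_bijective p r hr h hirr),
    card_rootsK p r hr h hmonic hirr]

theorem endToRootR_bijective :
    Function.Bijective (fun θ : (AdjoinRoot h →+* AdjoinRoot h) =>
      (⟨θ (root h), by rw [← hom_aeval_zmod, aeval_root_self, map_zero]⟩ :
        {x : AdjoinRoot h // aeval x h = 0})) := by
  constructor
  · intro θ1 θ2 h12
    exact hom_ext_adjoinRoot _ (congrArg Subtype.val h12)
  · rintro ⟨x, hx⟩
    refine ⟨AdjoinRoot.lift (algebraMap _ _) x (by rw [← aeval_def]; exact hx), Subtype.ext ?_⟩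
    show (AdjoinRoot.lift (algebraMap _ _) x _) (root h) = x
    rw [AdjoinRoot.lift_root]

theorem card_endR (hmonic : h.Monic) (hirr : Irreducible (h.map (cst p r hr))) :
    Nat.card (AdjoinRoot h →+* AdjoinRoot h) = h.natDegree := by
  rw [Nat.card_eq_of_bijective _ (endToRootR_bijective p r h),
    card_rootsR p r hr h hmonic hirr]

theorem finite_R (hmonic : h.Monic) : Finite (AdjoinRoot h) := by
  haveI : NeZero (p ^ r) := ⟨pow_ne_zero r hp.out.ne_zero⟩
  exact Finite.of_equiv _ (AdjoinRoot.powerBasis' hmonic).basis.equivFun.toEquiv.symm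

theorem exists_bar (θ : AdjoinRoot h →+* AdjoinRoot h) :
    ∃ τ : AdjoinRoot (h.map (cst p r hr)) →+* AdjoinRoot (h.map (cst p r hr)),
      (pii p r hr h).comp θ = τ.comp (pii p r hr h) := by
  have hroot : aeval (pii p r hr h (θ (root h))) (h.map (cst p r hr)) = 0 := by
    rw [← pii_aeval, ← hom_aeval_zmod, aeval_root_self, map_zero, map_zero]
  refine ⟨AdjoinRoot.lift (algebraMap _ _) _ (by rw [← aeval_def]; exact hroot), ?_⟩
  apply hom_ext_adjoinRoot
  simp only [RingHom.comp_apply]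
  rw [pii_root]
  show pii p r hr h (θ (root h))
    = (AdjoinRoot.lift (algebraMap _ _) _ _) (root (h.map (cst p r hr)))
  rw [AdjoinRoot.lift_root]

theorem endR_bijective (hmonic : h.Monic) (hirr : Irreducible (h.map (cst p r hr)))
    (θ : AdjoinRoot h →+* AdjoinRoot h) : Function.Bijective θ := by
  haveI : Fact (Irreducible (h.map (cst p r hr))) := ⟨hirr⟩
  haveI : Finite (AdjoinRoot (h.map (cst p r hr))) := finite_K p r hr h hmonic hirr
  haveI : Finite (AdjoinRoot h) := finite_R p r h hmonic
  obtain ⟨τ, hτ⟩ := exists_bar p r hr h θ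
  have hτsurj : Function.Surjective τ :=
    (Finite.injective_iff_surjective).mp τ.injective
  have hsurj : Function.Surjective θ := by
    intro z
    have key : ∀ k : ℕ, ∃ x w, z = θ x + (p : AdjoinRoot h) ^ k * w := by
      intro k
      induction k with
      | zero => exact ⟨0, z, by simp⟩
      | succ k ih =>
        obtain ⟨x, w, hw⟩ := ih
        obtain ⟨α, hα⟩ := hτsurj (pii p r hr h w)
        obtain ⟨w', hw'⟩ := pii_surjective p r hr h α
        have : pii p r hr h (w - θ w') = 0 := by
          rw [map_sub, ← RingHom.comp_apply, hτ, RingHom.comp_apply, hw', hα, sub_self]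
        obtain ⟨w2, hw2⟩ := (ker_pii p r hr h _).mp this
        refine ⟨x + (p : AdjoinRoot h) ^ k * w', w2, ?_⟩
        rw [map_add, map_mul, map_pow, map_natCast]
        have hwsplit : w = θ w' + (p : AdjoinRoot h) * w2 := by
          rw [← hw2]; ring
        rw [hw, hwsplit]
        ring
    obtain ⟨x, w, hw⟩ := key r
    rw [p_pow_zero, zero_mul, add_zero] at hw
    exact ⟨x, hw.symm⟩
  exact ⟨Finite.injective_iff_surjective.mpr hsurj, hsurj⟩

theorem autToEnd_bijective (hmonic : h.Monic) (hirr : Irreducible (h.map (cst p r hr))) :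
    Function.Bijective (fun θ : AdjoinRoot h ≃+* AdjoinRoot h => (θ : AdjoinRoot h →+* AdjoinRoot h)) := by
  constructor
  · intro a b hab
    exact RingEquiv.toRingHom_injective hab
  · intro f
    refine ⟨RingEquiv.ofBijective f (endR_bijective p r hr h hmonic hirr f), ?_⟩
    refine RingHom.ext fun x => ?_
    rfl

theorem card_autR (hmonic : h.Monic) (hirr : Irreducible (h.map (cst p r hr))) :
    Nat.card (AdjoinRoot h ≃+* AdjoinRoot h) = h.natDegree := by
  rw [Nat.card_eq_of_bijective _ (autToEnd_bijective p r hr h hmonic hirr),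
    card_endR p r hr h hmonic hirr]


noncomputable def frobLin (hirr : Irreducible (h.map (cst p r hr))) :
    Module.End (ZMod p) (AdjoinRoot (h.map (cst p r hr))) where
  toFun := fun x => x ^ p
  map_add' := by
    intro x y
    letI : CharP (AdjoinRoot (h.map (cst p r hr))) p := K_charP p r hr h hirr
    exact add_pow_char (p := p) (x := x) (y := y)
  map_smul' := by
    intro c x
    simp only [RingHom.id_apply]
    rw [Algebra.smul_def, Algebra.smul_def, mul_pow, ← map_pow, ZMod.pow_card]

theorem frobLin_pow (hirr : Irreducible (h.map (cst p r hr))) (i : ℕ)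
    (x : AdjoinRoot (h.map (cst p r hr))) :
    ((frobLin p r hr h hirr) ^ i) x = x ^ p ^ i := by
  induction i with
  | zero => simp
  | succ i ih =>
    rw [pow_succ', Module.End.mul_apply, ih]
    show (x ^ p ^ i) ^ p = x ^ p ^ (i + 1)
    rw [← pow_mul, pow_succ]

set_option maxHeartbeats 1000000 in
theorem minpoly_frob (hmonic : h.Monic) (hm : 1 ≤ h.natDegree)
    (hirr : Irreducible (h.map (cst p r hr))) :
    (minpoly (ZMod p) (frobLin p r hr h hirr)).natDegree = h.natDegree := by
  classical
  haveI : Fact (Irreducible (h.map (cst p r hr))) := ⟨hirr⟩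
  haveI : Finite (AdjoinRoot (h.map (cst p r hr))) := finite_K p r hr h hmonic hirr
  haveI : Fintype (AdjoinRoot (h.map (cst p r hr))) := Fintype.ofFinite _
  haveI : Module.Finite (ZMod p) (AdjoinRoot (h.map (cst p r hr))) :=
    Module.Finite.of_basis (AdjoinRoot.powerBasis' (hmonic.map (cst p r hr))).basis
  set K := AdjoinRoot (h.map (cst p r hr))
  set φ := frobLin p r hr h hirr with hφ
  set m := h.natDegree with hmdef
  have hint : IsIntegral (ZMod p) φ := Algebra.IsIntegral.isIntegral φ
  have hcard : Fintype.card K = p ^ m := by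
    rw [← Nat.card_eq_fintype_card, card_K p r hr h hmonic hirr]
  have hann : aeval φ ((X : Polynomial (ZMod p)) ^ m - 1) = 0 := by
    rw [map_sub, map_one, aeval_X_pow, sub_eq_zero]
    apply LinearMap.ext
    intro x
    rw [frobLin_pow, Module.End.one_apply, ← hcard, FiniteField.pow_card]
  have hdvd : minpoly (ZMod p) φ ∣ (X : Polynomial (ZMod p)) ^ m - 1 :=
    minpoly.dvd _ _ hann
  have hXm : ((X : Polynomial (ZMod p)) ^ m - 1).natDegree = m := by
    rw [show ((1 : Polynomial (ZMod p))) = C 1 from (Polynomial.C_1).symm,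
      Polynomial.natDegree_X_pow_sub_C]
  have hle : (minpoly (ZMod p) φ).natDegree ≤ m := by
    rw [← hXm]
    exact Polynomial.natDegree_le_of_dvd hdvd
      (Polynomial.X_pow_sub_C_ne_zero (by omega) 1)
  rcases lt_or_eq_of_le hle with hlt | heq
  · exfalso
    have key : ∀ x : K, ∑ i ∈ Finset.range m,
        algebraMap (ZMod p) K ((minpoly (ZMod p) φ).coeff i) * x ^ p ^ i = 0 := by
      intro x
      have h0 : aeval φ (minpoly (ZMod p) φ) = 0 := minpoly.aeval _ _
      rw [Polynomial.aeval_eq_sum_range' hlt] at h0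
      have := LinearMap.congr_fun h0 x
      rw [LinearMap.sum_apply, LinearMap.zero_apply] at this
      rw [← this]
      refine Finset.sum_congr rfl fun i _ => ?_
      rw [LinearMap.smul_apply, frobLin_pow, Algebra.smul_def]
    have hMinj : Function.Injective
        (fun i : Fin m => (powMonoidHom (p ^ (i : ℕ)) : K →* K)) := by
      intro i j hij
      apply Fin.ext
      apply frob_inj p r hr h hmonic hirr i.2 j.2
      intro x
      have := DFunLike.congr_fun hij x
      simpa [powMonoidHom_apply] using this
    have li := (linearIndependent_monoidHom K K).comp _ hMinj
    have hzero := Fintype.linearIndependent_iff.mp li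
      (fun i : Fin m => algebraMap (ZMod p) K ((minpoly (ZMod p) φ).coeff i)) ?_
    · have hd : ((minpoly (ZMod p) φ).natDegree : ℕ) < m := hlt
      have := hzero ⟨(minpoly (ZMod p) φ).natDegree, hd⟩
      rw [(minpoly.monic hint).coeff_natDegree, map_one] at this
      exact one_ne_zero this
    · funext x
      simp only [Finset.sum_apply, Pi.smul_apply, Function.comp_apply, smul_eq_mul,
        Pi.zero_apply, MonoidHom.coe_mk, OneHom.coe_mk]
      have hcv : ∀ i : Fin m, ((powMonoidHom (p ^ (i : ℕ)) : K →* K) : K → K) x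
          = x ^ p ^ (i : ℕ) := fun i => rfl
      calc ∑ i : Fin m, algebraMap (ZMod p) K ((minpoly (ZMod p) φ).coeff i) *
              ((powMonoidHom (p ^ (i : ℕ)) : K →* K) : K → K) x
          = ∑ i : Fin m, algebraMap (ZMod p) K ((minpoly (ZMod p) φ).coeff i) *
              x ^ p ^ (i : ℕ) := by
            exact Finset.sum_congr rfl fun i _ => by rw [hcv]
        _ = ∑ i ∈ Finset.range m,
              algebraMap (ZMod p) K ((minpoly (ZMod p) φ).coeff i) * x ^ p ^ i := by
            exact Fin.sum_univ_eq_sum_range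
              (fun i => algebraMap (ZMod p) K ((minpoly (ZMod p) φ).coeff i) * x ^ p ^ i) m
        _ = 0 := key x
  · exact heq


set_option maxHeartbeats 1000000 in
theorem main (hmonic : h.Monic) (hm : 1 ≤ h.natDegree)
    (hirr : Irreducible (h.map (cst p r hr))) :
    ∃ β : AdjoinRoot h,
      ∃ b : Module.Basis (AdjoinRoot h ≃+* AdjoinRoot h) (ZMod (p ^ r)) (AdjoinRoot h),
        ∀ θ : AdjoinRoot h ≃+* AdjoinRoot h, b θ = θ β := by
  classical
  haveI : Fact (Irreducible (h.map (cst p r hr))) := ⟨hirr⟩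
  haveI : Finite (AdjoinRoot (h.map (cst p r hr))) := finite_K p r hr h hmonic hirr
  haveI : Finite (AdjoinRoot h) := finite_R p r h hmonic
  haveI : Module.Finite (ZMod p) (AdjoinRoot (h.map (cst p r hr))) :=
    Module.Finite.of_basis (AdjoinRoot.powerBasis' (hmonic.map (cst p r hr))).basis
  haveI : Module.Finite (ZMod (p ^ r)) (AdjoinRoot h) :=
    Module.Finite.of_basis (AdjoinRoot.powerBasis' hmonic).basis
  haveI : Finite ((AdjoinRoot (h.map (cst p r hr))) →+* (AdjoinRoot (h.map (cst p r hr)))) :=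
    Finite.of_injective _ (DFunLike.coe_injective
      (F := (AdjoinRoot (h.map (cst p r hr))) →+* (AdjoinRoot (h.map (cst p r hr)))))
  haveI : Finite (AdjoinRoot h →+* AdjoinRoot h) :=
    Finite.of_injective _ (DFunLike.coe_injective
      (F := AdjoinRoot h →+* AdjoinRoot h))
  haveI : Finite (AdjoinRoot h ≃+* AdjoinRoot h) :=
    Finite.of_injective (fun θ : AdjoinRoot h ≃+* AdjoinRoot h =>
      (θ : AdjoinRoot h →+* AdjoinRoot h)) RingEquiv.toRingHom_injective
  haveI : Fintype (AdjoinRoot h ≃+* AdjoinRoot h) := Fintype.ofFinite _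
  have hdeg : (minpoly (ZMod p) (frobLin p r hr h hirr)).natDegree
      = Module.finrank (ZMod p) (AdjoinRoot (h.map (cst p r hr))) := by
    rw [minpoly_frob p r hr h hmonic hm hirr, finrank_K p r hr h hmonic hirr]
  obtain ⟨v, hspan⟩ := NB_cyclic (frobLin p r hr h hirr) hdeg
  obtain ⟨β, hβ⟩ := pii_surjective p r hr h v
  choose τof hτof using fun θ : AdjoinRoot h ≃+* AdjoinRoot h =>
    exists_bar p r hr h (θ : AdjoinRoot h →+* AdjoinRoot h)
  have hτap : ∀ (θ : AdjoinRoot h ≃+* AdjoinRoot h) (z : AdjoinRoot h),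
      pii p r hr h (θ z) = τof θ (pii p r hr h z) := by
    intro θ z
    exact RingHom.congr_fun (hτof θ) z
  have hτinj : Function.Injective τof := by
    intro θ1 θ2 heq
    have h1 : aeval ((θ1 : AdjoinRoot h →+* AdjoinRoot h) (root h)) h = 0 := by
      rw [← hom_aeval_zmod, aeval_root_self, map_zero]
    have h2 : aeval ((θ2 : AdjoinRoot h →+* AdjoinRoot h) (root h)) h = 0 := by
      rw [← hom_aeval_zmod, aeval_root_self, map_zero]
    have hroot : (θ1 : AdjoinRoot h →+* AdjoinRoot h) (root h)
        = (θ2 : AdjoinRoot h →+* AdjoinRoot h) (root h) := by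
      apply root_lift_unique p r hr h hirr _ _ h1 h2
      show pii p r hr h (θ1 (root h)) = pii p r hr h (θ2 (root h))
      rw [hτap θ1, hτap θ2, heq]
    exact RingEquiv.toRingHom_injective (hom_ext_adjoinRoot _ hroot)
  have hτbij : Function.Bijective τof :=
    (Nat.bijective_iff_injective_and_card τof).mpr ⟨hτinj, by
      rw [card_autR p r hr h hmonic hirr, card_endK p r hr h hmonic hirr]⟩
  have hsub : Submodule.span (ZMod p)
      (Set.range fun θ : AdjoinRoot h ≃+* AdjoinRoot h => pii p r hr h (θ β)) = ⊤ := by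
    rw [eq_top_iff, ← hspan]
    apply Submodule.span_mono
    rintro x ⟨i, rfl⟩
    obtain ⟨θ, hθ⟩ := hτbij.2 (frobK p r hr h hirr (i : ℕ))
    refine ⟨θ, ?_⟩
    show pii p r hr h (θ β) = _
    rw [hτap θ β, hβ, hθ, frobK_apply]
    exact (frobLin_pow p r hr h hirr i v).symm
  set ι := (AdjoinRoot h ≃+* AdjoinRoot h) with hι
  set w : ι → AdjoinRoot h := fun θ => θ β with hwdef
  set L : (ι → ZMod (p ^ r)) →ₗ[ZMod (p ^ r)] AdjoinRoot h :=
    Fintype.linearCombination (ZMod (p ^ r)) w with hLdef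
  have hLap : ∀ cc : ι → ZMod (p ^ r), L cc = ∑ θ : ι, cc θ • w θ := by
    intro cc
    rw [hLdef]
    exact Fintype.linearCombination_apply _ _ _
  have claimA : ∀ y : AdjoinRoot h,
      ∃ cc : ι → ZMod (p ^ r), ∃ w2, y = L cc + (p : AdjoinRoot h) * w2 := by
    intro y
    have hmem : pii p r hr h y ∈ Submodule.span (ZMod p)
        (Set.range fun θ : ι => pii p r hr h (θ β)) := by
      rw [hsub]; trivial
    rw [Submodule.mem_span_range_iff_exists_fun (R := ZMod p)] at hmem
    obtain ⟨c, hc⟩ := hmem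
    set cc : ι → ZMod (p ^ r) := fun θ => (cst_surjective p r hr (c θ)).choose with hcc
    have hccs : ∀ θ, cst p r hr (cc θ) = c θ :=
      fun θ => (cst_surjective p r hr (c θ)).choose_spec
    have hpiiL : pii p r hr h (L cc) = pii p r hr h y := by
      rw [hLap, map_sum, ← hc]
      refine Finset.sum_congr rfl fun θ _ => ?_
      rw [Algebra.smul_def, map_mul,
        show pii p r hr h (algebraMap (ZMod (p ^ r)) (AdjoinRoot h) (cc θ))
          = algebraMap (ZMod p) _ (cst p r hr (cc θ)) from
          RingHom.congr_fun (pii_algebraMap p r hr h) (cc θ),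
        hccs, ← Algebra.smul_def]
    have hker : pii p r hr h (y - L cc) = 0 := by rw [map_sub, hpiiL, sub_self]
    obtain ⟨w2, hw2⟩ := (ker_pii p r hr h _).mp hker
    exact ⟨cc, w2, by rw [← hw2]; ring⟩
  have claimB : ∀ k : ℕ, ∀ y : AdjoinRoot h,
      ∃ cc, ∃ w2, y = L cc + (p : AdjoinRoot h) ^ k * w2 := by
    intro k
    induction k with
    | zero => exact fun y => ⟨0, y, by rw [map_zero, pow_zero, one_mul, zero_add]⟩
    | succ k ih =>
      intro y
      obtain ⟨cc, w2, hw2⟩ := ih y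
      obtain ⟨cc', w3, hw3⟩ := claimA w2
      refine ⟨cc + (p : ZMod (p ^ r)) ^ k • cc', w3, ?_⟩
      rw [map_add, map_smul, hw2, hw3]
      have hps : ((p : ZMod (p ^ r)) ^ k • L cc' : AdjoinRoot h)
          = (p : AdjoinRoot h) ^ k * L cc' := by
        rw [Algebra.smul_def, map_pow, map_natCast]
      rw [hps]
      ring
  have hLsurj : Function.Surjective L := by
    intro y
    obtain ⟨cc, w2, hw2⟩ := claimB r y
    exact ⟨cc, by rw [hw2, p_pow_zero, zero_mul, add_zero]⟩
  have hcardι : Fintype.card ι = (AdjoinRoot.powerBasis' hmonic).dim := by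
    rw [← Nat.card_eq_fintype_card]
    rw [hι, card_autR p r hr h hmonic hirr, AdjoinRoot.powerBasis'_dim]
  let eF : ι ≃ Fin (AdjoinRoot.powerBasis' hmonic).dim := Fintype.equivFinOfCardEq hcardι
  let E : AdjoinRoot h ≃ₗ[ZMod (p ^ r)] (ι → ZMod (p ^ r)) :=
    (AdjoinRoot.powerBasis' hmonic).basis.equivFun.trans
      (LinearEquiv.funCongrLeft (ZMod (p ^ r)) (ZMod (p ^ r)) eF)
  have hLinj : Function.Injective L := by
    have hend : Function.Surjective (L ∘ₗ E.toLinearMap) := by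
      intro y
      obtain ⟨cc, hcc⟩ := hLsurj y
      exact ⟨E.symm cc, by simp [LinearMap.comp_apply, hcc]⟩
    have hinj := OrzechProperty.injective_of_surjective_endomorphism
      (L ∘ₗ E.toLinearMap) hend
    intro a b hab
    have h2 : (L ∘ₗ E.toLinearMap) (E.symm a) = (L ∘ₗ E.toLinearMap) (E.symm b) := by
      simp only [LinearMap.comp_apply, LinearEquiv.coe_coe, LinearEquiv.apply_symm_apply]
      exact hab
    exact E.symm.injective (hinj h2)
  let eL := LinearEquiv.ofBijective L ⟨hLinj, hLsurj⟩
  refine ⟨β, Module.Basis.ofEquivFun eL.symm, ?_⟩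
  intro θ
  have hbv := congrFun (Module.Basis.coe_ofEquivFun eL.symm) θ
  rw [hbv]
  show eL (Function.update (0 : ι → ZMod (p ^ r)) θ 1) = θ β
  show L (Function.update (0 : ι → ZMod (p ^ r)) θ 1) = θ β
  rw [hLap, Finset.sum_eq_single θ]
  · rw [Function.update_self, one_smul]
  · intro j _ hj
    rw [Function.update_of_ne hj, Pi.zero_apply, zero_smul]
  · intro hθ
    exact absurd (Finset.mem_univ θ) hθ

end GRNB

/-- the Galois ring `R = (Z_{p^r})[X]/⟨h⟩`, for `h` basic
irreducible of degree `m`, has a normal basis over `Z_{p^r}`: there is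
`β ∈ R` such that the family `(θ β)`, indexed by the ring automorphisms `θ`
of `R`, is a `Z_{p^r}`-basis of `R`. -/
theorem galoisRing_normal_basis (p r m : ℕ) [Fact p.Prime] (hr : 1 ≤ r) (hm : 1 ≤ m)
    (h : Polynomial (ZMod (p ^ r))) (hmonic : h.Monic) (hdeg : h.natDegree = m)
    (hirr : Irreducible (h.map
      (ZMod.castHom (dvd_pow_self p (Nat.one_le_iff_ne_zero.mp hr)) (ZMod p)))) :
    ∃ β : Polynomial (ZMod (p ^ r)) ⧸ Ideal.span {h},
      ∃ b : Module.Basis ((Polynomial (ZMod (p ^ r)) ⧸ Ideal.span {h}) ≃+*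
              (Polynomial (ZMod (p ^ r)) ⧸ Ideal.span {h}))
            (ZMod (p ^ r)) (Polynomial (ZMod (p ^ r)) ⧸ Ideal.span {h}),
        ∀ θ : (Polynomial (ZMod (p ^ r)) ⧸ Ideal.span {h}) ≃+*
              (Polynomial (ZMod (p ^ r)) ⧸ Ideal.span {h}),
          b θ = θ β := by
  show ∃ β : AdjoinRoot h,
      ∃ b : Module.Basis (AdjoinRoot h ≃+* AdjoinRoot h) (ZMod (p ^ r)) (AdjoinRoot h),
        ∀ θ : AdjoinRoot h ≃+* AdjoinRoot h, b θ = θ β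
  exact GRNB.main p r hr h hmonic (by omega) hirr
end
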